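/- arXiv:1706.08174 — 2 statements merged into one kernel-verified Lean document; each statement's English description precedes it below -/
import Mathlib

section
/- Let κ be a measurable cardinal and let U be a normal ultrafilter on κ. Then for every 1 ≤ d < ω and every cardinal σ with 0 < σ < κ: SDHL(d,σ,κ) holds if and only if the set {α < κ : α is an infinite cardinal, σ < α, and SDHL(d,σ,α) holds} belongs to U. -/
open Cardinal Set

/-- A node of `^{<κ}κ`: a function from an ordinal `len < κ` into the ordinals `< κ`,
normalized to take value `0` at or beyond its length (so that equality of nodes is
extensional). -/
structure SeqNode (κ : Cardinal.{0}) : Type 1 where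
  len : Ordinal.{0}
  len_lt : len < κ.ord
  val : Ordinal.{0} → Ordinal.{0}
  val_lt : ∀ β < len, val β < κ.ord
  val_eq_zero : ∀ β, len ≤ β → val β = 0

namespace SeqNode

variable {κ : Cardinal.{0}}

/-- `s.Init t` means `s ⊑ t`, i.e. `s` is an initial segment of `t`. -/
def Init (s t : SeqNode κ) : Prop :=
  s.len ≤ t.len ∧ ∀ β < s.len, s.val β = t.val β

/-- The restriction `t ↾ β` of `t` to length `min β t.len`. -/
noncomputable def restrict (t : SeqNode κ) (β : Ordinal.{0}) : SeqNode κ where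
  len := min β t.len
  len_lt := lt_of_le_of_lt (min_le_right _ _) t.len_lt
  val := fun γ => if γ < min β t.len then t.val γ else 0
  val_lt := fun γ hγ => by
    try dsimp only
    rw [if_pos hγ]
    exact t.val_lt γ (lt_of_lt_of_le hγ (min_le_right _ _))
  val_eq_zero := fun γ hγ => by
    try dsimp only
    rw [if_neg (not_lt.mpr hγ)]

end SeqNode

/-- The level `T(α)`: nodes of `T` of length `α`. -/
def SeqLevel {κ : Cardinal.{0}} (T : Set (SeqNode κ)) (α : Ordinal.{0}) : Set (SeqNode κ) :=
  {t ∈ T | t.len = α}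

/-- A tree: a set of nodes closed under initial segments. -/
def IsSeqTree {κ : Cardinal.{0}} (T : Set (SeqNode κ)) : Prop :=
  ∀ t ∈ T, ∀ s : SeqNode κ, s.Init t → s ∈ T

/-- A branch of `T`: a subset of `T` linearly ordered by the initial segment relation. -/
def IsBranch {κ : Cardinal.{0}} (T b : Set (SeqNode κ)) : Prop :=
  b ⊆ T ∧ ∀ s ∈ b, ∀ t ∈ b, s.Init t ∨ t.Init s

/-- A maximal branch of `T`. -/
def IsMaximalBranch {κ : Cardinal.{0}} (T b : Set (SeqNode κ)) : Prop :=
  IsBranch T b ∧ ∀ b' : Set (SeqNode κ), IsBranch T b' → b ⊆ b' → b' = b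

/-- `T` is perfect: every node has two incomparable extensions in `T`. -/
def IsPerfect {κ : Cardinal.{0}} (T : Set (SeqNode κ)) : Prop :=
  ∀ t ∈ T, ∃ s ∈ T, ∃ u ∈ T, t.Init s ∧ t.Init u ∧ ¬ s.Init u ∧ ¬ u.Init s

/-- `T ⊆ ^{<κ}κ` is a regular tree of height `η`: it is a tree all of whose nodes
have length `< η`, it has nonempty levels of cardinality `< η.card` at every `α < η`,
every maximal branch meets every level `< η`, and it is perfect. -/
def IsRegularTreeIn (κ : Cardinal.{0}) (η : Ordinal.{0}) (T : Set (SeqNode κ)) : Prop :=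
  IsSeqTree T ∧
  (∀ t ∈ T, t.len < η) ∧
  (∀ α < η, (SeqLevel T α).Nonempty) ∧
  (∀ α < η, Cardinal.mk ↥(SeqLevel T α) < Cardinal.lift.{1} η.card) ∧
  (∀ b : Set (SeqNode κ), IsMaximalBranch T b → ∀ α < η, ∃ t ∈ b, t.len = α) ∧
  IsPerfect T

/-- A regular `κ`-tree. -/
def IsRegularTree (κ : Cardinal.{0}) (T : Set (SeqNode κ)) : Prop :=
  IsRegularTreeIn κ κ.ord T

/-- The truncation `T ∩ ^{<α}κ` of `T` below level `α`. -/
def TreeTrunc {κ : Cardinal.{0}} (T : Set (SeqNode κ)) (α : Ordinal.{0}) : Set (SeqNode κ) :=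
  {t ∈ T | t.len < α}

/-- The level product `⊗_{i<d} X_i`: tuples all of whose entries lie on one common level. -/
def LevelProd {κ : Cardinal.{0}} {d : ℕ} (X : Fin d → Set (SeqNode κ)) :
    Set (Fin d → SeqNode κ) :=
  {x | ∃ α : Ordinal.{0}, ∀ i, x i ∈ X i ∧ (x i).len = α}

/-- `X` dominates `Y`: every element of `Y` has an extension in `X`. -/
def Dominates {κ : Cardinal.{0}} (X Y : Set (SeqNode κ)) : Prop :=
  ∀ y ∈ Y, ∃ x ∈ X, SeqNode.Init y x

/-- `Cone t`: all extensions of `t`. -/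
def Cone {κ : Cardinal.{0}} (t : SeqNode κ) : Set (SeqNode κ) :=
  {s : SeqNode κ | t.Init s}

/-- `X` is a somewhere dense level matrix for trees `T` of height `η`. -/
def IsSDMatrixIn {κ : Cardinal.{0}} (η : Ordinal.{0}) {d : ℕ}
    (T X : Fin d → Set (SeqNode κ)) : Prop :=
  ∃ α β : Ordinal.{0}, α < β ∧ β < η ∧
    ∃ t : Fin d → SeqNode κ,
      (∀ i, t i ∈ SeqLevel (T i) α) ∧
      ∀ i, X i ⊆ SeqLevel (T i) β ∧
        Dominates (X i) (SeqLevel (T i) (α + 1) ∩ Cone (t i))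

/-- `X` is a somewhere dense level matrix for the regular `κ`-trees `T`. -/
def IsSDMatrix (κ : Cardinal.{0}) {d : ℕ} (T X : Fin d → Set (SeqNode κ)) : Prop :=
  IsSDMatrixIn κ.ord T X

/-- The coloring `c` is constant (monochromatic) on the level product of `X`. -/
def MonoOn {κ : Cardinal.{0}} {d : ℕ} (c : (Fin d → SeqNode κ) → Ordinal.{0})
    (X : Fin d → Set (SeqNode κ)) : Prop :=
  ∀ x ∈ LevelProd X, ∀ y ∈ LevelProd X, c x = c y

/-- The somewhere dense Halpern–Läuchli theorem `SDHL(d,σ,κ)`. -/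
def SDHL (d : ℕ) (σ κ : Cardinal.{0}) : Prop :=
  ∀ T : Fin d → Set (SeqNode κ), (∀ i, IsRegularTree κ (T i)) →
    ∀ c : (Fin d → SeqNode κ) → Ordinal.{0},
      (∀ x ∈ LevelProd T, c x < σ.ord) →
      ∃ X : Fin d → Set (SeqNode κ), (∀ i, X i ⊆ T i) ∧
        IsSDMatrix κ T X ∧ MonoOn c X

/-- `s` is an immediate successor of `t`. -/
def IsImmediateSucc {κ : Cardinal.{0}} (t s : SeqNode κ) : Prop :=
  t.Init s ∧ s.len = t.len + 1

/-- `A` is a cofinal subset of (the ordinals below) `η`. -/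
def CofinalIn (A : Set Ordinal.{0}) (η : Ordinal.{0}) : Prop :=
  A ⊆ Set.Iio η ∧ ∀ β < η, ∃ α ∈ A, β ≤ α

/-- `T'` is a strong subtree of the regular `κ`-tree `T` witnessed by the cofinal set
`A ⊆ κ` of splitting levels. -/
def IsStrongSubtree (κ : Cardinal.{0}) (T' T : Set (SeqNode κ)) (A : Set Ordinal.{0}) : Prop :=
  T' ⊆ T ∧ IsRegularTree κ T' ∧ CofinalIn A κ.ord ∧
    ∀ t ∈ T',
      (t.len ∈ A → ∀ s ∈ T, IsImmediateSucc t s → s ∈ T') ∧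
      (t.len ∉ A → ∃! s : SeqNode κ, s ∈ T' ∧ IsImmediateSucc t s)

/-- The strong tree Halpern–Läuchli theorem `HL(d,σ,κ)`. -/
def HL (d : ℕ) (σ κ : Cardinal.{0}) : Prop :=
  ∀ T : Fin d → Set (SeqNode κ), (∀ i, IsRegularTree κ (T i)) →
    ∀ c : (Fin d → SeqNode κ) → Ordinal.{0},
      (∀ x ∈ LevelProd T, c x < σ.ord) →
      ∃ T' : Fin d → Set (SeqNode κ), ∃ A : Set Ordinal.{0},
        (∀ i, IsStrongSubtree κ (T' i) (T i) A) ∧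
        ∀ x : Fin d → SeqNode κ, (∃ α ∈ A, ∀ i, x i ∈ SeqLevel (T' i) α) →
          ∀ y : Fin d → SeqNode κ, (∃ α ∈ A, ∀ i, y i ∈ SeqLevel (T' i) α) →
            c x = c y

/-- `e` is the increasing enumeration (along the ordinals below `η`) of `A`. -/
def IsIncreasingEnum (e : Ordinal.{0} → Ordinal.{0}) (η : Ordinal.{0})
    (A : Set Ordinal.{0}) : Prop :=
  (∀ ζ < η, e ζ ∈ A) ∧
  (∀ ζ ξ : Ordinal.{0}, ζ < ξ → ξ < η → e ζ < e ξ) ∧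
  (∀ a ∈ A, ∃ ζ < η, e ζ = a)

/-- The tail cone Halpern–Läuchli theorem `HL^tc(d,<κ,κ)`. -/
def HLtc (d : ℕ) (κ : Cardinal.{0}) : Prop :=
  ∀ T : Fin d → Set (SeqNode κ), (∀ i, IsRegularTree κ (T i)) →
    ∀ σ : Ordinal.{0} → Cardinal.{0}, (∀ ζ < κ.ord, 0 < σ ζ ∧ σ ζ < κ) →
      ∀ c : Ordinal.{0} → (Fin d → SeqNode κ) → Ordinal.{0},
        (∀ ζ < κ.ord, ∀ x ∈ LevelProd T, c ζ x < (σ ζ).ord) →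
        ∃ T' : Fin d → Set (SeqNode κ), ∃ A : Set Ordinal.{0},
          ∃ e : Ordinal.{0} → Ordinal.{0},
            (∀ i, IsStrongSubtree κ (T' i) (T i) A) ∧
            IsIncreasingEnum e κ.ord A ∧
            ∀ ζ ξ : Ordinal.{0}, ζ ≤ ξ → ξ < κ.ord →
              ∀ t : Fin d → SeqNode κ, (∀ i, t i ∈ SeqLevel (T' i) (e ξ)) →
                c ζ t = c ζ (fun i => (t i).restrict (e ζ))

/-- The modified tail cone Halpern–Läuchli theorem. -/
def HLtcMod (d : ℕ) (κ : Cardinal.{0}) : Prop :=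
  ∀ T : Fin d → Set (SeqNode κ), (∀ i, IsRegularTree κ (T i)) →
    ∀ σ : Ordinal.{0} → Cardinal.{0}, (∀ ζ < κ.ord, 0 < σ ζ ∧ σ ζ < κ) →
      ∀ c : Ordinal.{0} → (Fin d → SeqNode κ) → Ordinal.{0},
        (∀ ζ < κ.ord, ∀ x ∈ LevelProd T, c ζ x < (σ ζ).ord) →
        ∃ T' : Fin d → Set (SeqNode κ), ∃ A : Set Ordinal.{0},
          ∃ e : Ordinal.{0} → Ordinal.{0},
            (∀ i, IsStrongSubtree κ (T' i) (T i) A) ∧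
            IsIncreasingEnum e κ.ord A ∧
            ∃ μ : Ordinal.{0} → Ordinal.{0},
              (∀ γ < κ.ord, γ ≤ μ γ ∧ μ γ < κ.ord) ∧
              ∀ ζ γ : Ordinal.{0}, ζ ≤ γ → γ < κ.ord →
                ∀ t : Fin d → SeqNode κ, (∀ i, t i ∈ SeqLevel (T' i) (e γ)) →
                  c (μ ζ) t = c (μ ζ) (fun i => (t i).restrict (e ζ))

/-- `κ` is strongly inaccessible: uncountable, regular, and a strong limit. -/
def StronglyInaccessible (κ : Cardinal.{0}) : Prop :=
  ℵ₀ < κ ∧ κ.IsRegular ∧ ∀ lam : Cardinal.{0}, lam < κ → (2 : Cardinal.{0}) ^ lam < κ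

/-- `C` is a club (closed unbounded) subset of the ordinals below `η`. -/
def IsClubIn (C : Set Ordinal.{0}) (η : Ordinal.{0}) : Prop :=
  C ⊆ Set.Iio η ∧ (∀ β < η, ∃ γ ∈ C, β ≤ γ) ∧
    ∀ s ⊆ C, s.Nonempty → sSup s < η → sSup s ∈ C

/-- `S` is a stationary subset of the ordinals below `η`. -/
def IsStationaryIn (S : Set Ordinal.{0}) (η : Ordinal.{0}) : Prop :=
  ∀ C : Set Ordinal.{0}, IsClubIn C η → (S ∩ C).Nonempty

/-- `U` is an ultrafilter on the ordinals below `η`. -/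
def IsUltrafilterOn (U : Set (Set Ordinal.{0})) (η : Ordinal.{0}) : Prop :=
  (∀ A ∈ U, A ⊆ Set.Iio η) ∧ Set.Iio η ∈ U ∧ (∅ : Set Ordinal.{0}) ∉ U ∧
  (∀ A ∈ U, ∀ B : Set Ordinal.{0}, A ⊆ B → B ⊆ Set.Iio η → B ∈ U) ∧
  (∀ A ∈ U, ∀ B ∈ U, A ∩ B ∈ U) ∧
  (∀ A : Set Ordinal.{0}, A ⊆ Set.Iio η → (A ∈ U ∨ Set.Iio η \ A ∈ U))

/-- `U` is `κ`-complete: closed under intersections of fewer than `κ` of its members. -/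
def IsKappaComplete (U : Set (Set Ordinal.{0})) (κ : Cardinal.{0}) : Prop :=
  ∀ s : Set (Set Ordinal.{0}), s ⊆ U → s.Nonempty →
    Cardinal.mk ↥s < Cardinal.lift.{1} κ → ⋂₀ s ∈ U

/-- `U` is nonprincipal. -/
def IsNonprincipal (U : Set (Set Ordinal.{0})) : Prop :=
  ∀ β : Ordinal.{0}, ({β} : Set Ordinal.{0}) ∉ U

/-- `U` is a normal ultrafilter on `κ`: a nonprincipal `κ`-complete ultrafilter closed
under diagonal intersections. -/
def IsNormalUltrafilterOn (U : Set (Set Ordinal.{0})) (κ : Cardinal.{0}) : Prop :=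
  IsUltrafilterOn U κ.ord ∧ IsKappaComplete U κ ∧ IsNonprincipal U ∧
    ∀ A : Ordinal.{0} → Set Ordinal.{0}, (∀ α < κ.ord, A α ∈ U) →
      {β : Ordinal.{0} | β < κ.ord ∧ ∀ α < β, β ∈ A α} ∈ U

/-- `κ` is a measurable cardinal. -/
def IsMeasurableCard (κ : Cardinal.{0}) : Prop :=
  ℵ₀ < κ ∧ ∃ U : Set (Set Ordinal.{0}),
    IsUltrafilterOn U κ.ord ∧ IsKappaComplete U κ ∧ IsNonprincipal U

/-- The set of (ordinals which are) infinite cardinals `α < κ` with `σ < α` at which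
`SDHL(d,σ,α)` holds, viewed as a set of ordinals below `κ`. -/
def SDHLset (d : ℕ) (σ κ : Cardinal.{0}) : Set Ordinal.{0} :=
  {β : Ordinal.{0} | β < κ.ord ∧ ℵ₀ ≤ β.card ∧ β.card.ord = β ∧ σ < β.card ∧
    SDHL d σ β.card}

section Aux10
namespace HL10
open Cardinal Set

variable {κ κ' : Cardinal.{0}}

theorem node_ext {s t : SeqNode κ} (hlen : s.len = t.len)
    (hval : ∀ ξ, ξ < s.len → s.val ξ = t.val ξ) : s = t := by
  cases s with
  | mk l hl v hv hz =>
    cases t with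
    | mk l' hl' v' hv' hz' =>
      dsimp at hlen hval
      subst hlen
      have : v = v' := by
        funext ξ
        rcases lt_or_ge ξ l with h | h
        · exact hval ξ h
        · rw [hz ξ h, hz' ξ h]
      subst this
      rfl

theorem init_refl (t : SeqNode κ) : t.Init t := ⟨le_rfl, fun _ _ => rfl⟩

theorem init_trans {s t u : SeqNode κ} (h1 : s.Init t) (h2 : t.Init u) : s.Init u :=
  ⟨h1.1.trans h2.1, fun ξ hξ => (h1.2 ξ hξ).trans (h2.2 ξ (lt_of_lt_of_le hξ h1.1))⟩

theorem init_eq_of_len_le {s t : SeqNode κ} (h : s.Init t) (hl : t.len ≤ s.len) : s = t :=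
  node_ext (le_antisymm h.1 hl) h.2

theorem init_comparable {s u t : SeqNode κ} (h1 : s.Init t) (h2 : u.Init t) :
    s.Init u ∨ u.Init s := by
  rcases le_total s.len u.len with h | h
  · exact Or.inl ⟨h, fun ξ hξ => (h1.2 ξ hξ).trans ((h2.2 ξ (lt_of_lt_of_le hξ h)).symm)⟩
  · exact Or.inr ⟨h, fun ξ hξ => (h2.2 ξ hξ).trans ((h1.2 ξ (lt_of_lt_of_le hξ h)).symm)⟩

/-- Cast a node upwards along `κ.ord ≤ κ'.ord`. -/
def upc (h : κ.ord ≤ κ'.ord) (t : SeqNode κ) : SeqNode κ' where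
  len := t.len
  len_lt := lt_of_lt_of_le t.len_lt h
  val := t.val
  val_lt := fun ξ hξ => lt_of_lt_of_le (t.val_lt ξ hξ) h
  val_eq_zero := t.val_eq_zero

@[simp] theorem upc_len (h : κ.ord ≤ κ'.ord) (t : SeqNode κ) : (upc h t).len = t.len := rfl
@[simp] theorem upc_val (h : κ.ord ≤ κ'.ord) (t : SeqNode κ) : (upc h t).val = t.val := rfl

theorem upc_inj (h : κ.ord ≤ κ'.ord) {s t : SeqNode κ} (e : upc h s = upc h t) : s = t := by
  have h1 : s.len = t.len := by
    have := congrArg SeqNode.len e; simpa using this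
  have h2 : s.val = t.val := by
    have := congrArg SeqNode.val e; simpa using this
  exact node_ext h1 (fun ξ _ => by rw [h2])

theorem upc_init_iff (h : κ.ord ≤ κ'.ord) {s t : SeqNode κ} :
    (upc h s).Init (upc h t) ↔ s.Init t := Iff.rfl

theorem upc_surj (h : κ.ord ≤ κ'.ord) (t : SeqNode κ') (h1 : t.len < κ.ord)
    (h2 : ∀ ξ, ξ < t.len → t.val ξ < κ.ord) : ∃ s : SeqNode κ, upc h s = t := by
  refine ⟨⟨t.len, h1, t.val, h2, t.val_eq_zero⟩, ?_⟩
  cases t; rfl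

theorem init_of_upc_init {h : κ.ord ≤ κ'.ord} {s : SeqNode κ} {t : SeqNode κ'}
    {u : SeqNode κ} (h1 : (upc h s).Init t) (h2 : t.Init (upc h u)) :
    ∃ w : SeqNode κ, upc h w = t := by
  refine upc_surj h t (lt_of_le_of_lt h2.1 (by simpa using u.len_lt)) (fun ξ hξ => ?_)
  rw [h2.2 ξ hξ]
  exact u.val_lt ξ (lt_of_lt_of_le hξ h2.1)

end HL10
end Aux10

section Aux10b
namespace HL10
open Cardinal Set

variable {κ : Cardinal.{0}} {U : Set (Set Ordinal.{0})}

theorem U_sub (hU : IsNormalUltrafilterOn U κ) {A : Set Ordinal.{0}} (hA : A ∈ U) :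
    A ⊆ Set.Iio κ.ord := hU.1.1 A hA

theorem U_Iio (hU : IsNormalUltrafilterOn U κ) : Set.Iio κ.ord ∈ U := hU.1.2.1

theorem U_up (hU : IsNormalUltrafilterOn U κ) {A : Set Ordinal.{0}} (hA : A ∈ U)
    {P : Ordinal.{0} → Prop} (h : ∀ β ∈ A, P β) : {β | β < κ.ord ∧ P β} ∈ U := by
  refine hU.1.2.2.2.1 A hA _ (fun β hβ => ⟨U_sub hU hA hβ, h β hβ⟩) (fun β hβ => hβ.1)

theorem U_inter (hU : IsNormalUltrafilterOn U κ) {A B : Set Ordinal.{0}} (hA : A ∈ U)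
    (hB : B ∈ U) : A ∩ B ∈ U := hU.1.2.2.2.2.1 A hA B hB

theorem U_nonempty (hU : IsNormalUltrafilterOn U κ) {A : Set Ordinal.{0}} (hA : A ∈ U) :
    A.Nonempty := by
  rcases A.eq_empty_or_nonempty with rfl | h
  · exact absurd hA hU.1.2.2.1
  · exact h

theorem U_dec (hU : IsNormalUltrafilterOn U κ) {A : Set Ordinal.{0}}
    (hsub : A ⊆ Set.Iio κ.ord) : A ∈ U ∨ (Set.Iio κ.ord \ A) ∈ U :=
  hU.1.2.2.2.2.2 A hsub

theorem U_iInter (hU : IsNormalUltrafilterOn U κ) {ι : Type 1} [Nonempty ι]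
    (A : ι → Set Ordinal.{0}) (h : ∀ i, A i ∈ U)
    (hc : Cardinal.mk ι < Cardinal.lift.{1} κ) : (⋂ i, A i) ∈ U := by
  have hr : Set.range A ⊆ U := by rintro _ ⟨i, rfl⟩; exact h i
  have hne : (Set.range A).Nonempty := Set.range_nonempty A
  have hcard : Cardinal.mk ↥(Set.range A) < Cardinal.lift.{1} κ :=
    lt_of_le_of_lt Cardinal.mk_range_le hc
  have := hU.2.1 _ hr hne hcard
  rwa [Set.sInter_range] at this

theorem U_biInter_lt (hU : IsNormalUltrafilterOn U κ) {γ : Ordinal.{0}} (hγ : γ < κ.ord)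
    (A : Ordinal.{0} → Set Ordinal.{0}) (h : ∀ ξ < γ, A ξ ∈ U) :
    {β : Ordinal.{0} | β < κ.ord ∧ ∀ ξ < γ, β ∈ A ξ} ∈ U := by
  rcases eq_or_ne γ 0 with rfl | hγ0
  · have := U_Iio hU
    refine U_up hU this (fun β _ => ?_)
    intro ξ hξ; exact absurd hξ (not_lt_of_ge (zero_le (a := ξ)))
  · have hne : Nonempty ↥(Set.Iio γ) :=
      ⟨⟨0, pos_iff_ne_zero.mpr hγ0⟩⟩
    have hcard : Cardinal.mk ↥(Set.Iio γ) < Cardinal.lift.{1} κ := by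
      rw [Ordinal.mk_Iio_ordinal]
      exact Cardinal.lift_lt.mpr (Cardinal.lt_ord.mp hγ)
    have hint : (⋂ i : ↥(Set.Iio γ), A i.1) ∈ U := U_iInter hU _ (fun i => h i.1 i.2) hcard
    refine U_up hU hint (fun β hβ => ?_)
    intro ξ hξ
    exact Set.mem_iInter.mp hβ ⟨ξ, hξ⟩

theorem U_iInter_fin (hU : IsNormalUltrafilterOn U κ) (hκ0 : ℵ₀ < κ) {d : ℕ} (hd : 0 < d)
    (A : Fin d → Set Ordinal.{0}) (h : ∀ i, A i ∈ U) : (⋂ i, A i) ∈ U := by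
  have hne : Nonempty (ULift.{1} (Fin d)) := ⟨⟨⟨0, hd⟩⟩⟩
  have hcard : Cardinal.mk (ULift.{1} (Fin d)) < Cardinal.lift.{1} κ := by
    refine lt_of_lt_of_le ?_ (Cardinal.lift_le.mpr hκ0.le)
    simp only [Cardinal.mk_uLift, Cardinal.mk_fin]
    rw [Cardinal.lift_natCast, Cardinal.lift_aleph0]
    exact Cardinal.nat_lt_aleph0 d
  have := U_iInter hU (fun i : ULift.{1} (Fin d) => A i.down) (fun i => h i.down) hcard
  have he : (⋂ i : ULift.{1} (Fin d), A i.down) = ⋂ i, A i := by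
    ext β; simp only [Set.mem_iInter]
    exact ⟨fun hb i => hb ⟨i⟩, fun hb i => hb i.down⟩
  rwa [he] at this

theorem U_compl_small (hU : IsNormalUltrafilterOn U κ) {A : Set Ordinal.{0}}
    (hsub : A ⊆ Set.Iio κ.ord) (hc : Cardinal.mk ↥A < Cardinal.lift.{1} κ) :
    Set.Iio κ.ord \ A ∈ U := by
  rcases A.eq_empty_or_nonempty with rfl | hne
  · simpa using U_Iio hU
  · have hne' : Nonempty ↥A := hne.to_subtype
    have hsing : ∀ γ : Ordinal.{0}, Set.Iio κ.ord \ {γ} ∈ U := by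
      intro γ
      rcases lt_or_ge γ κ.ord with h | h
      · rcases U_dec hU (show ({γ} : Set Ordinal.{0}) ⊆ Set.Iio κ.ord by
          simpa using h) with h' | h'
        · exact absurd h' (hU.2.2.1 γ)
        · exact h'
      · have : Set.Iio κ.ord \ {γ} = Set.Iio κ.ord := by
          ext β
          simp only [Set.mem_diff, Set.mem_Iio, Set.mem_singleton_iff]
          exact ⟨fun hb => hb.1, fun hb => ⟨hb, fun e => absurd (e ▸ hb) (not_lt.mpr h)⟩⟩
        rw [this]; exact U_Iio hU
    have hint : (⋂ γ : ↥A, (Set.Iio κ.ord \ {γ.1})) ∈ U :=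
      U_iInter hU _ (fun γ => hsing γ.1) hc
    have he : (⋂ γ : ↥A, (Set.Iio κ.ord \ {γ.1})) = Set.Iio κ.ord \ A := by
      ext β
      simp only [Set.mem_iInter, Set.mem_diff, Set.mem_singleton_iff]
      constructor
      · intro hb
        rcases hne with ⟨a, ha⟩
        refine ⟨(hb ⟨a, ha⟩).1, fun hbA => (hb ⟨β, hbA⟩).2 rfl⟩
      · rintro ⟨h1, h2⟩ γ
        exact ⟨h1, fun e => h2 (e ▸ γ.2)⟩
    rwa [he] at hint

theorem U_tail (hU : IsNormalUltrafilterOn U κ) (hκ0 : ℵ₀ ≤ κ) {γ : Ordinal.{0}}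
    (hγ : γ < κ.ord) : {β : Ordinal.{0} | β < κ.ord ∧ γ < β} ∈ U := by
  have hlim : Order.IsSuccLimit κ.ord := Cardinal.isSuccLimit_ord hκ0
  have hγ1 : γ + 1 < κ.ord := hlim.succ_lt hγ
  have h1 : (Set.Iic γ ∩ Set.Iio κ.ord) ⊆ Set.Iio (γ + 1) := by
    intro β hβ; exact lt_of_le_of_lt hβ.1 (Order.lt_succ γ)
  have hc : Cardinal.mk ↥(Set.Iic γ ∩ Set.Iio κ.ord) < Cardinal.lift.{1} κ := by
    refine lt_of_le_of_lt (Cardinal.mk_le_mk_of_subset h1) ?_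
    rw [Ordinal.mk_Iio_ordinal]
    exact Cardinal.lift_lt.mpr (Cardinal.lt_ord.mp hγ1)
  have hd := U_compl_small hU (Set.inter_subset_right) hc
  refine U_up hU hd (fun β hβ => ?_)
  rcases hβ with ⟨h2, h3⟩
  by_contra h4
  exact h3 ⟨not_lt.mp h4, h2⟩

end HL10
end Aux10b

section Aux10c
namespace HL10
open Cardinal Set

variable {κ : Cardinal.{0}} {U : Set (Set Ordinal.{0})}

theorem U_diag (hU : IsNormalUltrafilterOn U κ) (A : Ordinal.{0} → Set Ordinal.{0})
    (h : ∀ α < κ.ord, A α ∈ U) :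
    {β : Ordinal.{0} | β < κ.ord ∧ ∀ α < β, β ∈ A α} ∈ U := hU.2.2.2 A h

theorem U_fodor (hU : IsNormalUltrafilterOn U κ) {A : Set Ordinal.{0}} (hA : A ∈ U)
    (f : Ordinal.{0} → Ordinal.{0}) (hreg : ∀ β ∈ A, f β < β) :
    ∃ c : Ordinal.{0}, c < κ.ord ∧ {β : Ordinal.{0} | β ∈ A ∧ f β = c} ∈ U := by
  by_contra hcon
  push_neg at hcon
  have hD : ∀ c : Ordinal.{0}, c < κ.ord → Set.Iio κ.ord \ {β | β ∈ A ∧ f β = c} ∈ U := by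
    intro c hc
    rcases U_dec hU (show {β | β ∈ A ∧ f β = c} ⊆ Set.Iio κ.ord from
      fun β hβ => U_sub hU hA hβ.1) with h' | h'
    · exact absurd h' (hcon c hc)
    · exact h'
  have hdiag := U_diag hU (fun c => Set.Iio κ.ord \ {β | β ∈ A ∧ f β = c})
    (fun c hc => hD c hc)
  have hne := U_nonempty hU (U_inter hU hdiag hA)
  rcases hne with ⟨β, ⟨⟨hβκ, hβd⟩, hβA⟩⟩
  have hfβ : f β < β := hreg β hβA
  have := hβd (f β) hfβ
  exact this.2 ⟨hβA, rfl⟩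

/-- The infinite cardinals below `κ` form a `U`-large set. -/
theorem U_card (hU : IsNormalUltrafilterOn U κ) (hκ0 : ℵ₀ < κ) :
    {β : Ordinal.{0} | β < κ.ord ∧ β.card.ord = β} ∈ U := by
  rcases U_dec hU (show {β : Ordinal.{0} | β < κ.ord ∧ β.card.ord = β} ⊆ Set.Iio κ.ord from
    fun β hβ => hβ.1) with h | h
  · exact h
  · exfalso
    -- N : U-large set of non-cardinal ordinals
    have hN : {β : Ordinal.{0} | β < κ.ord ∧ β.card.ord ≠ β} ∈ U := by
      refine U_up hU h ?_
      rintro β ⟨hβκ, hβ2⟩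
      exact fun e => hβ2 ⟨hβκ, e⟩
    have hreg : ∀ β ∈ {β : Ordinal.{0} | β < κ.ord ∧ β.card.ord ≠ β}, β.card.ord < β :=
      fun β hβ => lt_of_le_of_ne (Cardinal.ord_card_le β) hβ.2
    obtain ⟨c, hcκ, hM⟩ := U_fodor hU hN _ hreg
    set M := {β : Ordinal.{0} | β ∈ {β : Ordinal.{0} | β < κ.ord ∧ β.card.ord ≠ β} ∧
      β.card.ord = c} with hMdef
    -- every β ∈ M has card μ where μ.ord = c
    have hcard : ∀ β ∈ M, Cardinal.mk ↥(Set.Iio β) = Cardinal.mk ↥(Set.Iio c) := by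
      intro β hβ
      rw [Ordinal.mk_Iio_ordinal, Ordinal.mk_Iio_ordinal]
      have hcb : β.card = c.card := by
        have h' := congrArg Ordinal.card hβ.2
        rwa [Cardinal.card_ord] at h'
      rw [hcb]
    -- choose bijections
    have hEquiv : ∀ β ∈ M, Nonempty (↥(Set.Iio c) ≃ ↥(Set.Iio β)) := by
      intro β hβ
      exact Cardinal.eq.mp (hcard β hβ).symm
    classical
    -- for each γ < κ.ord, get a U-constant value ν γ < c
    have key : ∀ γ : Ordinal.{0}, γ < κ.ord → ∃ ν : Ordinal.{0}, ν < c ∧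
        {β : Ordinal.{0} | ∃ hβ : β ∈ M, ∃ hγβ : γ < β,
          ((Classical.choice (hEquiv β hβ)).symm ⟨γ, hγβ⟩ : ↥(Set.Iio c)).1 = ν} ∈ U := by
      intro γ hγ
      have hMγ : (M ∩ {β : Ordinal.{0} | β < κ.ord ∧ γ < β}) ∈ U :=
        U_inter hU hM (U_tail hU hκ0.le hγ)
      classical
      set g : Ordinal.{0} → Ordinal.{0} := fun β =>
        if hh : β ∈ M ∧ γ < β then
          ((Classical.choice (hEquiv β hh.1)).symm ⟨γ, hh.2⟩ : ↥(Set.Iio c)).1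
        else 0 with hgdef
      have hgval : ∀ β (h1 : β ∈ M) (h2 : γ < β),
          g β = ((Classical.choice (hEquiv β h1)).symm ⟨γ, h2⟩ : ↥(Set.Iio c)).1 := by
        intro β h1 h2
        rw [hgdef]
        exact dif_pos ⟨h1, h2⟩
      have hgreg : ∀ β ∈ (M ∩ {β : Ordinal.{0} | β < κ.ord ∧ γ < β}), g β < β := by
        rintro β ⟨hβM, hβκ, hγβ⟩
        have hg := hgval β hβM hγβ
        rw [hg]
        have h1 : ((Classical.choice (hEquiv β hβM)).symm ⟨γ, hγβ⟩ : ↥(Set.Iio c)).1 < c :=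
          ((Classical.choice (hEquiv β hβM)).symm ⟨γ, hγβ⟩).2
        have h2 : c < β := by
          rw [← hβM.2]; exact hreg β hβM.1
        exact h1.trans h2
      obtain ⟨ν, hνκ, hν⟩ := U_fodor hU hMγ g hgreg
      obtain ⟨β0, ⟨⟨hβ0M, _, hγβ0⟩, hgβ0⟩⟩ := U_nonempty hU hν
      have hνc : ν < c := by
        rw [← hgβ0, hgval β0 hβ0M hγβ0]
        exact ((Classical.choice (hEquiv β0 hβ0M)).symm ⟨γ, hγβ0⟩).2
      refine ⟨ν, hνc, ?_⟩
      refine hU.1.2.2.2.1 _ hν _ ?_ ?_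
      · rintro β ⟨⟨hβM, hβκ, hγβ⟩, hgβ⟩
        refine ⟨hβM, hγβ, ?_⟩
        rw [← hgval β hβM hγβ]
        exact hgβ
      · rintro β ⟨hβM, hγβ, _⟩
        exact hβM.1.1
    classical
    choose ν hνc hνU using fun (γ : Ordinal.{0}) (hγ : γ < κ.ord) => key γ hγ
    -- ν is injective on Iio κ.ord
    have hinj : ∀ γ1 : Ordinal.{0}, ∀ h1 : γ1 < κ.ord, ∀ γ2 : Ordinal.{0},
        ∀ h2 : γ2 < κ.ord, ν γ1 h1 = ν γ2 h2 → γ1 = γ2 := by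
      intro γ1 h1 γ2 h2 hνeq
      obtain ⟨β, hβ1, hβ2⟩ := U_nonempty hU (U_inter hU (hνU γ1 h1) (hνU γ2 h2))
      obtain ⟨hβM, hγ1β, hval1⟩ := hβ1
      obtain ⟨hβM', hγ2β, hval2⟩ := hβ2
      have : ((Classical.choice (hEquiv β hβM)).symm ⟨γ1, hγ1β⟩ : ↥(Set.Iio c)) =
          ((Classical.choice (hEquiv β hβM')).symm ⟨γ2, hγ2β⟩ : ↥(Set.Iio c)) := by
        apply Subtype.ext
        rw [hval1, hval2, hνeq]
      have := congrArg (fun x => ((Classical.choice (hEquiv β hβM)) x).1) this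
      simpa using this
    -- injection from Iio κ.ord into Iio c : contradiction with c < κ.ord
    have hle : Cardinal.mk ↥(Set.Iio κ.ord) ≤ Cardinal.mk ↥(Set.Iio c) := by
      refine Cardinal.mk_le_of_injective (f := fun γ : ↥(Set.Iio κ.ord) =>
        (⟨ν γ.1 γ.2, hνc γ.1 γ.2⟩ : ↥(Set.Iio c))) ?_
      intro γ1 γ2 he'
      have := congrArg Subtype.val he'
      exact Subtype.ext (hinj γ1.1 γ1.2 γ2.1 γ2.2 this)
    rw [Ordinal.mk_Iio_ordinal, Ordinal.mk_Iio_ordinal, Cardinal.lift_le,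
      Cardinal.card_ord] at hle
    exact absurd hle (not_le.mpr (Cardinal.lt_ord.mp hcκ))

end HL10
end Aux10c

section Aux10d
namespace HL10
open Cardinal Set

variable {κ : Cardinal.{0}}

theorem exists_max_branch {T b : Set (SeqNode κ)} (hb : IsBranch T b) :
    ∃ b', IsMaximalBranch T b' ∧ b ⊆ b' := by
  have hz := zorn_subset_nonempty {b' : Set (SeqNode κ) | IsBranch T b' ∧ b ⊆ b'}
    (fun c hc hchain hne => by
      refine ⟨⋃₀ c, ⟨⟨?_, ?_⟩, ?_⟩, fun s hs => Set.subset_sUnion_of_mem hs⟩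
      · rintro t ⟨b1, hb1, ht⟩
        exact (hc hb1).1.1 ht
      · rintro s ⟨b1, hb1, hs⟩ t ⟨b2, hb2, ht⟩
        rcases hchain.total hb1 hb2 with h | h
        · exact (hc hb2).1.2 s (h hs) t ht
        · exact (hc hb1).1.2 s hs t (h ht)
      · rcases hne with ⟨b1, hb1⟩
        exact (hc hb1).2.trans (Set.subset_sUnion_of_mem hb1)) b ⟨hb, le_rfl⟩
  rcases hz with ⟨m, hbm, hmax⟩
  refine ⟨m, ⟨hmax.prop.1, fun b' hb' hsub => ?_⟩, hbm⟩
  exact hmax.eq_of_ge ⟨hb', hbm.trans hsub⟩ hsub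

/-- The set of initial segments of members of a set `C` of pairwise comparable nodes
is a branch. -/
theorem downcl_branch {T C : Set (SeqNode κ)} (hC : C ⊆ T) (hT : IsSeqTree T)
    (hcomp : ∀ s ∈ C, ∀ t ∈ C, s.Init t ∨ t.Init s) :
    IsBranch T {u : SeqNode κ | ∃ v ∈ C, u.Init v} := by
  constructor
  · rintro u ⟨v, hv, huv⟩
    exact hT v (hC hv) u huv
  · rintro s ⟨v1, hv1, hs⟩ t ⟨v2, hv2, ht⟩
    rcases hcomp v1 hv1 v2 hv2 with h | h
    · exact init_comparable (init_trans hs h) ht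
    · exact init_comparable hs (init_trans ht h)

/-- In a tree whose maximal branches meet every level `< η`, every set of pairwise
comparable nodes with lengths `≤ δ < η` has an upper bound at level `δ`. -/
theorem chain_bound {η : Ordinal.{0}} {T : Set (SeqNode κ)} (hT : IsSeqTree T)
    (hne : ∀ α < η, (SeqLevel T α).Nonempty)
    (hmb : ∀ b : Set (SeqNode κ), IsMaximalBranch T b → ∀ α < η, ∃ t ∈ b, t.len = α)
    {C : Set (SeqNode κ)} (hC : C ⊆ T)
    (hcomp : ∀ s ∈ C, ∀ t ∈ C, s.Init t ∨ t.Init s)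
    {δ : Ordinal.{0}} (hlen : ∀ u ∈ C, u.len ≤ δ) (hδ : δ < η) :
    ∃ s ∈ SeqLevel T δ, ∀ u ∈ C, u.Init s := by
  obtain ⟨b', hb', hsub⟩ := exists_max_branch (downcl_branch hC hT hcomp)
  obtain ⟨s, hsb, hslen⟩ := hmb b' hb' δ hδ
  refine ⟨s, ⟨hb'.1.1 hsb, hslen⟩, fun u hu => ?_⟩
  have hub' : u ∈ b' := hsub ⟨u, hu, init_refl u⟩
  rcases hb'.1.2 u hub' s hsb with h | h
  · exact h
  · have : u.len ≤ s.len := by rw [hslen]; exact hlen u hu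
    rw [init_eq_of_len_le h this]
    exact init_refl u

/-- Every node of a tree with the maximal branch property extends to any level `≤ δ < η`. -/
theorem node_ext_level {η : Ordinal.{0}} {T : Set (SeqNode κ)} (hT : IsSeqTree T)
    (hne : ∀ α < η, (SeqLevel T α).Nonempty)
    (hmb : ∀ b : Set (SeqNode κ), IsMaximalBranch T b → ∀ α < η, ∃ t ∈ b, t.len = α)
    {t : SeqNode κ} (ht : t ∈ T) {δ : Ordinal.{0}} (hlen : t.len ≤ δ) (hδ : δ < η) :
    ∃ s ∈ SeqLevel T δ, t.Init s := by
  obtain ⟨s, hs, h⟩ := chain_bound hT hne hmb (C := {t}) (by simpa using ht)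
    (by rintro s rfl t rfl; exact Or.inl (init_refl _)) (by rintro u rfl; exact hlen) hδ
  exact ⟨s, hs, h t rfl⟩

/-- Criterion for the maximal branch property. -/
theorem max_branch_crit {η : Ordinal.{0}} {T : Set (SeqNode κ)} (hT : IsSeqTree T)
    (hne : ∀ α < η, (SeqLevel T α).Nonempty)
    (hP2 : ∀ C : Set (SeqNode κ), C ⊆ T → (∀ s ∈ C, ∀ t ∈ C, s.Init t ∨ t.Init s) →
      ∀ δ < η, (∀ u ∈ C, u.len ≤ δ) → ∃ s ∈ SeqLevel T δ, ∀ u ∈ C, u.Init s) :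
    ∀ b : Set (SeqNode κ), IsMaximalBranch T b → ∀ γ < η, ∃ t ∈ b, t.len = γ := by
  intro b hb γ hγ
  by_contra hcon
  push_neg at hcon
  -- no member of b has length ≥ γ : otherwise its restriction witnesses level γ
  have hshort : ∀ t ∈ b, t.len < γ := by
    intro t htb
    by_contra hlong
    push_neg at hlong
    -- r := t restricted to γ
    have htT : t ∈ T := hb.1.1 htb
    set r : SeqNode κ := t.restrict γ with hrdef
    have hrlen : r.len = γ := by
      rw [hrdef]; show min γ t.len = γ; exact min_eq_left hlong
    have hrinit : r.Init t := by
      constructor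
      · rw [hrlen]; exact hlong
      · intro ξ hξ
        rw [hrlen] at hξ
        show (if ξ < min γ t.len then t.val ξ else 0) = t.val ξ
        rw [if_pos (by rw [min_eq_left hlong]; exact hξ)]
    have hrT : r ∈ T := hT t htT r hrinit
    -- b ∪ {r} is a branch
    have hbranch : IsBranch T (insert r b) := by
      constructor
      · rintro s (rfl | hs)
        · exact hrT
        · exact hb.1.1 hs
      · rintro s (rfl | hs) u (rfl | hu)
        · exact Or.inl (init_refl _)
        · rcases hb.1.2 u hu t htb with h | h
          · -- u ⊑ t ; compare with r ⊑ t
            exact init_comparable hrinit h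
          · -- t ⊑ u, so r ⊑ t ⊑ u
            exact Or.inl (init_trans hrinit h)
        · rcases hb.1.2 s hs t htb with h | h
          · rcases init_comparable hrinit h with h' | h'
            · exact Or.inr h'
            · exact Or.inl h'
          · exact Or.inr (init_trans hrinit h)
        · exact hb.1.2 s hs u hu
    have := hb.2 _ hbranch (Set.subset_insert r b)
    have hrb : r ∈ b := by rw [← this]; exact Set.mem_insert r b
    exact hcon r hrb hrlen
  -- all members of b are short; find an upper bound at level γ and extend b
  obtain ⟨s, hs, hext⟩ := hP2 b hb.1.1 hb.1.2 γ hγ (fun u hu => (hshort u hu).le)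
  have hbranch : IsBranch T (insert s b) := by
    constructor
    · rintro u (rfl | hu)
      · exact hs.1
      · exact hb.1.1 hu
    · rintro u (rfl | hu) v (rfl | hv)
      · exact Or.inl (init_refl _)
      · exact Or.inr (hext v hv)
      · exact Or.inl (hext u hu)
      · exact hb.1.2 u hu v hv
  have := hb.2 _ hbranch (Set.subset_insert s b)
  have hsb : s ∈ b := by rw [← this]; exact Set.mem_insert s b
  exact hcon s hsb hs.2

end HL10
end Aux10d

section Aux10e
namespace HL10
open Cardinal Set

variable {κ : Cardinal.{0}}

theorem diff_point {s u : SeqNode κ} (h1 : ¬ s.Init u) (h2 : ¬ u.Init s) :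
    ∃ ξ : Ordinal.{0}, ξ < s.len ∧ ξ < u.len ∧ s.val ξ ≠ u.val ξ := by
  rcases le_total s.len u.len with h | h
  · rw [SeqNode.Init] at h1; push_neg at h1
    obtain ⟨ξ, hξ, hne⟩ := h1 h
    exact ⟨ξ, hξ, lt_of_lt_of_le hξ h, hne⟩
  · rw [SeqNode.Init] at h2; push_neg at h2
    obtain ⟨ξ, hξ, hne⟩ := h2 h
    exact ⟨ξ, lt_of_lt_of_le hξ h, hξ, fun e => hne e.symm⟩

theorem restrict_init {t : SeqNode κ} {δ : Ordinal.{0}} (h : δ ≤ t.len) :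
    (t.restrict δ).Init t ∧ (t.restrict δ).len = δ := by
  have hlen : (t.restrict δ).len = δ := min_eq_left h
  refine ⟨⟨by rw [hlen]; exact h, fun ξ hξ => ?_⟩, hlen⟩
  rw [hlen] at hξ
  show (if ξ < min δ t.len then t.val ξ else 0) = t.val ξ
  rw [if_pos (by rw [min_eq_left h]; exact hξ)]

theorem restrict_val {t : SeqNode κ} {δ ξ : Ordinal.{0}} (h : δ ≤ t.len) (hξ : ξ < δ) :
    (t.restrict δ).val ξ = t.val ξ := by
  show (if ξ < min δ t.len then t.val ξ else 0) = t.val ξ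
  rw [if_pos (by rw [min_eq_left h]; exact hξ)]

/-- Two incomparable extensions at a common (successor) level. -/
theorem split_level {T : Set (SeqNode κ)} (hT : IsSeqTree T) (hperf : IsPerfect T)
    {t : SeqNode κ} (ht : t ∈ T) :
    ∃ δ : Ordinal.{0}, t.len < δ ∧ δ < κ.ord ∧ ∃ s u : SeqNode κ,
      s ∈ SeqLevel T δ ∧ u ∈ SeqLevel T δ ∧ t.Init s ∧ t.Init u ∧
      ¬ s.Init u ∧ ¬ u.Init s := by
  obtain ⟨s, hs, u, hu, hts, htu, hsu, hus⟩ := hperf t ht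
  obtain ⟨ξ, hξs, hξu, hne⟩ := diff_point hsu hus
  have htξ : t.len ≤ ξ := by
    by_contra hc
    push_neg at hc
    exact hne ((hts.2 ξ hc).symm.trans (htu.2 ξ hc))
  have hδs : ξ + 1 ≤ s.len := Order.succ_le_iff.mpr hξs
  have hδu : ξ + 1 ≤ u.len := Order.succ_le_iff.mpr hξu
  obtain ⟨hrs, hrslen⟩ := restrict_init (t := s) hδs
  obtain ⟨hru, hrulen⟩ := restrict_init (t := u) hδu
  have hξδ : ξ < ξ + 1 := Order.lt_succ ξ
  refine ⟨ξ + 1, lt_of_le_of_lt htξ hξδ, lt_of_le_of_lt hδs s.len_lt, s.restrict (ξ+1),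
    u.restrict (ξ+1), ⟨hT s hs _ hrs, hrslen⟩, ⟨hT u hu _ hru, hrulen⟩, ?_, ?_, ?_, ?_⟩
  · exact ⟨by rw [hrslen]; exact htξ.trans hξδ.le,
      fun ζ hζ => (hts.2 ζ hζ).trans (restrict_val hδs (lt_of_lt_of_le hζ (htξ.trans hξδ.le))).symm⟩
  · exact ⟨by rw [hrulen]; exact htξ.trans hξδ.le,
      fun ζ hζ => (htu.2 ζ hζ).trans (restrict_val hδu (lt_of_lt_of_le hζ (htξ.trans hξδ.le))).symm⟩
  · intro hinit
    have := hinit.2 ξ (by rw [hrslen]; exact hξδ)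
    rw [restrict_val hδs hξδ, restrict_val hδu hξδ] at this
    exact hne this
  · intro hinit
    have := hinit.2 ξ (by rw [hrulen]; exact hξδ)
    rw [restrict_val hδs hξδ, restrict_val hδu hξδ] at this
    exact hne (this.symm)

end HL10
end Aux10e

section Aux10f
namespace HL10
open Cardinal Set

variable {κ : Cardinal.{0}} {U : Set (Set Ordinal.{0})}

/-- `β` is a good reflection point for the trees `T`. -/
def GoodFor {d : ℕ} (T : Fin d → Set (SeqNode κ)) (β : Ordinal.{0}) : Prop :=
  ∀ i, ∀ δ < β,
    (∀ t ∈ SeqLevel (T i) δ, (∀ ξ < δ, t.val ξ < β) ∧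
      ∃ γ : Ordinal.{0}, γ < β ∧ δ < γ ∧ ∃ s u : SeqNode κ,
        s ∈ SeqLevel (T i) γ ∧ u ∈ SeqLevel (T i) γ ∧
        t.Init s ∧ t.Init u ∧ ¬ s.Init u ∧ ¬ u.Init s) ∧
    ∃ μ : Cardinal.{0}, Cardinal.lift.{1} μ = Cardinal.mk ↥(SeqLevel (T i) δ) ∧ μ.ord < β

theorem U_goodFor (hU : IsNormalUltrafilterOn U κ) (hκ0 : ℵ₀ < κ) {d : ℕ} (hd : 0 < d)
    (T : Fin d → Set (SeqNode κ)) (hT : ∀ i, IsRegularTree κ (T i)) :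
    {β : Ordinal.{0} | β < κ.ord ∧ GoodFor T β} ∈ U := by
  classical
  have hκord0 : (0 : Ordinal.{0}) < κ.ord := by
    rw [Cardinal.lt_ord]
    simpa using (Cardinal.aleph0_pos.trans hκ0)
  -- choose split levels (total functions)
  have hsp : ∀ (i : Fin d) (t : SeqNode κ), ∃ γ : Ordinal.{0}, γ < κ.ord ∧
      (t ∈ T i → t.len < γ ∧ ∃ s u : SeqNode κ, s ∈ SeqLevel (T i) γ ∧
        u ∈ SeqLevel (T i) γ ∧ t.Init s ∧ t.Init u ∧ ¬ s.Init u ∧ ¬ u.Init s) := by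
    intro i t
    by_cases ht : t ∈ T i
    · obtain ⟨γ, h1, h2, h3⟩ := split_level (hT i).1 (hT i).2.2.2.2.2 ht
      exact ⟨γ, h2, fun _ => ⟨h1, h3⟩⟩
    · exact ⟨0, hκord0, fun h => absurd h ht⟩
  choose γf hγf1 hγf2 using hsp
  -- choose level cardinalities (total functions)
  have hcard : ∀ (i : Fin d) (δ : Ordinal.{0}), ∃ μ : Cardinal.{0}, μ < κ ∧
      (δ < κ.ord → Cardinal.lift.{1} μ = Cardinal.mk ↥(SeqLevel (T i) δ)) := by
    intro i δ
    by_cases hδ : δ < κ.ord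
    · have h := (hT i).2.2.2.1 δ hδ
      rw [Cardinal.card_ord] at h
      obtain ⟨μ, hμκ, hμ⟩ := Cardinal.lt_lift_iff.mp h
      exact ⟨μ, hμκ, fun _ => hμ⟩
    · exact ⟨0, Cardinal.aleph0_pos.trans hκ0, fun h => absurd h hδ⟩
  choose μf hμf1 hμf2 using hcard
  -- the per-level U-set
  have hA : ∀ δ : Ordinal.{0}, δ < κ.ord →
      {β : Ordinal.{0} | β < κ.ord ∧ ∀ i,
        (∀ t ∈ SeqLevel (T i) δ, (∀ ξ < δ, t.val ξ < β) ∧ γf i t < β) ∧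
          (μf i δ).ord < β} ∈ U := by
    intro δ hδ
    have hlev : ∀ i, (SeqLevel (T i) δ).Nonempty := fun i => (hT i).2.2.1 δ hδ
    -- per (i, t) set
    have hB : ∀ (i : Fin d) (t : SeqNode κ), t ∈ SeqLevel (T i) δ →
        {β : Ordinal.{0} | β < κ.ord ∧ ((∀ ξ < δ, t.val ξ < β) ∧ γf i t < β)} ∈ U := by
      intro i t ht
      have h1 : {β : Ordinal.{0} | β < κ.ord ∧ ∀ ξ < δ,
          β ∈ {β' : Ordinal.{0} | β' < κ.ord ∧ t.val ξ < β'}} ∈ U := by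
        refine U_biInter_lt hU hδ _ (fun ξ hξ => ?_)
        refine U_tail hU hκ0.le ?_
        exact t.val_lt ξ (by rw [ht.2]; exact hξ)
      have h2 := U_tail hU hκ0.le (hγf1 i t)
      refine U_up hU (U_inter hU h1 h2) ?_
      rintro β ⟨⟨hβκ, hvals⟩, _, hγ⟩
      exact ⟨fun ξ hξ => (hvals ξ hξ).2, hγ⟩
    -- intersect over the level
    have hC : ∀ i : Fin d,
        {β : Ordinal.{0} | β < κ.ord ∧ ((∀ t ∈ SeqLevel (T i) δ,
          (∀ ξ < δ, t.val ξ < β) ∧ γf i t < β) ∧ (μf i δ).ord < β)} ∈ U := by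
      intro i
      have hne : Nonempty ↥(SeqLevel (T i) δ) := (hlev i).to_subtype
      have hcardlev : Cardinal.mk ↥(SeqLevel (T i) δ) < Cardinal.lift.{1} κ := by
        have h := (hT i).2.2.2.1 δ hδ
        rwa [Cardinal.card_ord] at h
      have hint := U_iInter hU
        (fun t : ↥(SeqLevel (T i) δ) =>
          {β : Ordinal.{0} | β < κ.ord ∧ ((∀ ξ < δ, t.1.val ξ < β) ∧ γf i t.1 < β)})
        (fun t => hB i t.1 t.2) hcardlev
      have htail := U_tail hU hκ0.le (Cardinal.ord_lt_ord.mpr (hμf1 i δ) |>.trans_le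
        (le_of_eq rfl))
      refine U_up hU (U_inter hU hint htail) ?_
      rintro β ⟨hβ1, hβ2, hβ3⟩
      refine ⟨fun t ht => (Set.mem_iInter.mp hβ1 ⟨t, ht⟩).2, hβ3⟩
    -- intersect over i
    have hint := U_iInter_fin hU hκ0 hd
      (fun i => {β : Ordinal.{0} | β < κ.ord ∧ ((∀ t ∈ SeqLevel (T i) δ,
        (∀ ξ < δ, t.val ξ < β) ∧ γf i t < β) ∧ (μf i δ).ord < β)}) hC
    refine U_up hU hint ?_
    intro β hβ i
    have := Set.mem_iInter.mp hβ i
    exact ⟨this.2.1, this.2.2⟩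
  -- diagonal intersection
  have hdiag := U_diag hU
    (fun δ => {β : Ordinal.{0} | β < κ.ord ∧ ∀ i,
      (∀ t ∈ SeqLevel (T i) δ, (∀ ξ < δ, t.val ξ < β) ∧ γf i t < β) ∧
        (μf i δ).ord < β}) hA
  refine U_up hU hdiag ?_
  rintro β ⟨hβκ, hβ⟩
  intro i δ hδβ
  have h := (hβ δ hδβ).2 i
  constructor
  · intro t ht
    obtain ⟨hval, hγ⟩ := h.1 t ht
    refine ⟨hval, γf i t, hγ, ?_⟩
    obtain ⟨hlen, hdata⟩ := hγf2 i t ht.1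
    rw [← ht.2]
    exact ⟨hlen, hdata⟩
  · refine ⟨μf i δ, hμf2 i δ (hδβ.trans hβκ), h.2⟩

end HL10
end Aux10f

section Aux10g
namespace HL10
open Cardinal Set

variable {κ : Cardinal.{0}} {U : Set (Set Ordinal.{0})}

theorem sdhl_of_mem (hU : IsNormalUltrafilterOn U κ) (hκ0 : ℵ₀ < κ) {d : ℕ} (hd : 0 < d)
    {σ : Cardinal.{0}} (hmem : SDHLset d σ κ ∈ U) : SDHL d σ κ := by
  classical
  intro T hT c hc
  obtain ⟨β, hβSDm, hβκ, hβgood⟩ :=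
    U_nonempty hU (U_inter hU hmem (U_goodFor hU hκ0 hd T hT))
  obtain ⟨hβκ', hβinf, hβcard, hβσ, hβSD⟩ := hβSDm
  set lam : Cardinal.{0} := β.card with hlam
  have hord : lam.ord = β := hβcard
  have hle : lam.ord ≤ κ.ord := by rw [hord]; exact hβκ.le
  -- the collapsed trees
  set TD : Fin d → Set (SeqNode lam) := fun i => upc hle ⁻¹' (T i) with hTD
  have hsurj : ∀ (i : Fin d) (δ : Ordinal.{0}), δ < β → ∀ t ∈ SeqLevel (T i) δ,
      ∃ s : SeqNode lam, upc hle s = t := by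
    intro i δ hδ t ht
    refine upc_surj hle t ?_ ?_
    · rw [hord, ht.2]; exact hδ
    · intro ξ hξ
      rw [hord]
      exact ((hβgood i δ hδ).1 t ht).1 ξ (by rw [← ht.2]; exact hξ)
  have hlevmem : ∀ (i : Fin d) (δ : Ordinal.{0}) (s : SeqNode lam),
      s ∈ SeqLevel (TD i) δ ↔ upc hle s ∈ SeqLevel (T i) δ := by
    intro i δ s
    exact ⟨fun h => ⟨h.1, h.2⟩, fun h => ⟨h.1, h.2⟩⟩
  -- nonempty levels
  have hTDne : ∀ (i : Fin d) (δ : Ordinal.{0}), δ < lam.ord → (SeqLevel (TD i) δ).Nonempty := by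
    intro i δ hδ
    rw [hord] at hδ
    obtain ⟨t, ht⟩ := (hT i).2.2.1 δ (hδ.trans hβκ)
    obtain ⟨s, hs⟩ := hsurj i δ hδ t ht
    exact ⟨s, (hlevmem i δ s).mpr (hs ▸ ht)⟩
  -- regularity of the collapsed trees
  have hTDreg : ∀ i, IsRegularTree lam (TD i) := by
    intro i
    refine ⟨?_, fun t _ => t.len_lt, hTDne i, ?_, ?_, ?_⟩
    · -- tree
      intro t ht s hs
      exact (hT i).1 (upc hle t) ht (upc hle s) hs
    · -- level cardinality
      intro δ hδ
      rw [Cardinal.card_ord]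
      have hδβ : δ < β := by rwa [hord] at hδ
      obtain ⟨μ, hμ1, hμ2⟩ := (hβgood i δ hδβ).2
      have hinj : Cardinal.mk ↥(SeqLevel (TD i) δ) ≤ Cardinal.mk ↥(SeqLevel (T i) δ) := by
        refine Cardinal.mk_le_of_injective (f := fun s : ↥(SeqLevel (TD i) δ) =>
          (⟨upc hle s.1, (hlevmem i δ s.1).mp s.2⟩ : ↥(SeqLevel (T i) δ))) ?_
        intro s1 s2 he
        exact Subtype.ext (upc_inj hle (congrArg Subtype.val he))
      rw [← hμ1] at hinj
      refine lt_of_le_of_lt hinj (Cardinal.lift_lt.mpr ?_)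
      rw [← Cardinal.ord_lt_ord, hord]
      exact hμ2
    · -- maximal branches
      refine max_branch_crit ?_ (hTDne i) ?_
      · intro t ht s hs
        exact (hT i).1 (upc hle t) ht (upc hle s) hs
      · intro C hC hcomp δ hδ hlens
        have hδβ : δ < β := by rwa [hord] at hδ
        obtain ⟨s, hs, hext⟩ := chain_bound (κ := κ) (η := κ.ord) (hT i).1
          ((hT i).2.2.1) ((hT i).2.2.2.2.1)
          (C := upc hle '' C)
          (by rintro _ ⟨u, hu, rfl⟩; exact hC hu)
          (by rintro _ ⟨u1, hu1, rfl⟩ _ ⟨u2, hu2, rfl⟩; exact hcomp u1 hu1 u2 hu2)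
          (δ := δ) (by rintro _ ⟨u, hu, rfl⟩; exact hlens u hu) (hδβ.trans hβκ)
        obtain ⟨s0, hs0⟩ := hsurj i δ hδβ s hs
        refine ⟨s0, (hlevmem i δ s0).mpr (hs0 ▸ hs), fun u hu => ?_⟩
        have := hext (upc hle u) ⟨u, hu, rfl⟩
        rw [← hs0] at this
        exact this
    · -- perfect
      intro t ht
      have hδ0 : t.len < β := by rw [← hord]; exact t.len_lt
      obtain ⟨γ, hγβ, hlenγ, s, u, hsl, hul, hts, htu, hsu, hus⟩ :=
        ((hβgood i t.len hδ0).1 (upc hle t) ⟨ht, rfl⟩).2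
      obtain ⟨s0, hs0⟩ := hsurj i γ hγβ s hsl
      obtain ⟨u0, hu0⟩ := hsurj i γ hγβ u hul
      rw [← hs0] at hsl hts hsu hus
      rw [← hu0] at hul htu hsu hus
      exact ⟨s0, hsl.1, u0, hul.1, hts, htu, hsu, hus⟩
  -- the collapsed coloring
  set cD : (Fin d → SeqNode lam) → Ordinal.{0} := fun x => c (fun i => upc hle (x i)) with hcD
  have hcDbound : ∀ x ∈ LevelProd TD, cD x < σ.ord := by
    rintro x ⟨γ, hx⟩
    exact hc _ ⟨γ, fun i => ⟨(hx i).1, (hx i).2⟩⟩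
  obtain ⟨X', hX'sub, hX'mat, hX'mono⟩ := hβSD TD hTDreg cD hcDbound
  obtain ⟨α, β', hαβ', hβ'lt, t', ht', hcond⟩ := hX'mat
  have hβ'β : β' < β := by rwa [hord] at hβ'lt
  refine ⟨fun i => upc hle '' X' i, ?_, ?_, ?_⟩
  · rintro i _ ⟨x', hx', rfl⟩
    exact hX'sub i hx'
  · -- SD matrix
    refine ⟨α, β', hαβ', hβ'β.trans hβκ, fun i => upc hle (t' i),
      fun i => ⟨(ht' i).1, (ht' i).2⟩, fun i => ⟨?_, ?_⟩⟩
    · rintro _ ⟨x', hx', rfl⟩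
      exact (hlevmem i β' x').mp ((hcond i).1 hx')
    · rintro y ⟨hylev, hycone⟩
      have hα1 : α + 1 ≤ β' := Order.add_one_le_of_lt hαβ'
      obtain ⟨y0, hy0⟩ := hsurj i (α+1) (lt_of_le_of_lt hα1 hβ'β) y hylev
      rw [← hy0] at hylev hycone ⊢
      obtain ⟨x0, hx0X, hx0init⟩ := (hcond i).2 y0 ⟨(hlevmem i (α+1) y0).mpr hylev, hycone⟩
      exact ⟨upc hle x0, Set.mem_image_of_mem _ hx0X, hx0init⟩
  · -- monochromatic
    rintro x ⟨γx, hx⟩ y ⟨γy, hy⟩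
    have hx0 : ∀ i, ∃ x0 : SeqNode lam, x0 ∈ X' i ∧ upc hle x0 = x i := by
      intro i
      obtain ⟨x0, h1, h2⟩ := (hx i).1
      exact ⟨x0, h1, h2⟩
    have hy0 : ∀ i, ∃ y0 : SeqNode lam, y0 ∈ X' i ∧ upc hle y0 = y i := by
      intro i
      obtain ⟨y0, h1, h2⟩ := (hy i).1
      exact ⟨y0, h1, h2⟩
    choose x0 hx0X hx0e using hx0
    choose y0 hy0X hy0e using hy0
    have hxe : x = fun i => upc hle (x0 i) := by funext i; rw [hx0e]
    have hye : y = fun i => upc hle (y0 i) := by funext i; rw [hy0e]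
    have hx0LP : x0 ∈ LevelProd X' := by
      refine ⟨γx, fun i => ⟨hx0X i, ?_⟩⟩
      have : (upc hle (x0 i)).len = γx := by rw [hx0e]; exact (hx i).2
      exact this
    have hy0LP : y0 ∈ LevelProd X' := by
      refine ⟨γy, fun i => ⟨hy0X i, ?_⟩⟩
      have : (upc hle (y0 i)).len = γy := by rw [hy0e]; exact (hy i).2
      exact this
    have := hX'mono x0 hx0LP y0 hy0LP
    rw [hxe, hye]
    exact this

end HL10
end Aux10g

section Aux10h
namespace HL10
open Cardinal Set

variable {κ : Cardinal.{0}} {U : Set (Set Ordinal.{0})}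

theorem U_super (hU : IsNormalUltrafilterOn U κ) {A B : Set Ordinal.{0}} (hA : A ∈ U)
    (h1 : A ⊆ B) (h2 : B ⊆ Set.Iio κ.ord) : B ∈ U := hU.1.2.2.2.1 A hA B h1 h2

theorem mk_pi_fin_lt (hκ0 : ℵ₀ < κ) : ∀ {d : ℕ} (γ : Fin d → Type 1),
    (∀ i, Cardinal.mk (γ i) < Cardinal.lift.{1} κ) →
    Cardinal.mk (∀ i, γ i) < Cardinal.lift.{1} κ := by
  have hℵ : ℵ₀ ≤ Cardinal.lift.{1} κ := by
    rw [← Cardinal.lift_aleph0.{1,0}]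
    exact Cardinal.lift_le.mpr hκ0.le
  intro d
  induction d with
  | zero =>
    intro γ _
    have : Cardinal.mk (∀ i, γ i) = 1 := Cardinal.mk_eq_one _
    rw [this]
    exact lt_of_lt_of_le Cardinal.one_lt_aleph0 hℵ
  | succ n ih =>
    intro γ hγ
    have he := (Fin.insertNthEquiv γ 0).symm.cardinal_eq
    rw [he, Cardinal.mk_prod, Cardinal.lift_id, Cardinal.lift_id]
    exact Cardinal.mul_lt_of_lt hℵ (hγ 0) (ih _ (fun i => hγ _))

theorem U_pigeon (hU : IsNormalUltrafilterOn U κ) {σ : Cardinal.{0}} (hσκ : σ < κ)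
    {A : Set Ordinal.{0}} (hA : A ∈ U) (g : Ordinal.{0} → Ordinal.{0})
    (hg : ∀ β ∈ A, g β < σ.ord) :
    ∃ δ : Ordinal.{0}, δ < σ.ord ∧ {β : Ordinal.{0} | β ∈ A ∧ g β = δ} ∈ U := by
  by_contra hcon
  push_neg at hcon
  have hD : ∀ δ : Ordinal.{0}, δ < σ.ord → Set.Iio κ.ord \ {β | β ∈ A ∧ g β = δ} ∈ U := by
    intro δ hδ
    rcases U_dec hU (show {β | β ∈ A ∧ g β = δ} ⊆ Set.Iio κ.ord from
      fun β hβ => U_sub hU hA hβ.1) with h | h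
    · exact absurd h (hcon δ hδ)
    · exact h
  have hσord : σ.ord < κ.ord := Cardinal.ord_lt_ord.mpr hσκ
  have hint := U_biInter_lt hU hσord _ hD
  obtain ⟨β, hβ1, hβ2⟩ := U_nonempty hU (U_inter hU hint hA)
  exact ((hβ1.2 (g β) (hg β hβ2)).2) ⟨hβ2, rfl⟩

/-- The `U`-limit of a family of nodes of fixed length `γ` with values bounded by the index. -/
theorem U_limit_node (hU : IsNormalUltrafilterOn U κ) {A : Set Ordinal.{0}} (hA : A ∈ U)
    {γ : Ordinal.{0}} (hγ : γ < κ.ord) (F : Ordinal.{0} → SeqNode κ)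
    (hF : ∀ β ∈ A, (F β).len = γ ∧ ∀ ξ < γ, (F β).val ξ < β) :
    ∃ t : SeqNode κ, t.len = γ ∧ {β : Ordinal.{0} | β ∈ A ∧ F β = t} ∈ U := by
  classical
  have hc : ∀ ξ : Ordinal.{0}, ∃ cξ : Ordinal.{0}, cξ < κ.ord ∧
      (ξ < γ → {β : Ordinal.{0} | β ∈ A ∧ (F β).val ξ = cξ} ∈ U) := by
    intro ξ
    by_cases hξ : ξ < γ
    · obtain ⟨cξ, h1, h2⟩ := U_fodor hU hA (fun β => (F β).val ξ)
        (fun β hβ => (hF β hβ).2 ξ hξ)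
      exact ⟨cξ, h1, fun _ => h2⟩
    · refine ⟨0, ?_, fun h => absurd h hξ⟩
      rw [Cardinal.lt_ord, Ordinal.card_zero]
      have h0 : (0 : Ordinal.{0}) < κ.ord := lt_of_le_of_lt (zero_le (a := γ)) hγ
      have h1 := Cardinal.lt_ord.mp h0
      rwa [Ordinal.card_zero] at h1
  choose cf hcf1 hcf2 using hc
  refine ⟨⟨γ, hγ, fun ξ => if ξ < γ then cf ξ else 0, fun ξ hξ => ?_, fun ξ hξ => ?_⟩, rfl, ?_⟩
  · show (if ξ < γ then cf ξ else 0) < κ.ord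
    rw [if_pos hξ]; exact hcf1 ξ
  · show (if ξ < γ then cf ξ else 0) = 0
    rw [if_neg (not_lt.mpr hξ)]
  · have hS : (A ∩ {β : Ordinal.{0} | β < κ.ord ∧ ∀ ξ < γ,
        β ∈ {b : Ordinal.{0} | b ∈ A ∧ (F b).val ξ = cf ξ}}) ∈ U :=
      U_inter hU hA (U_biInter_lt hU hγ _ (fun ξ hξ => hcf2 ξ hξ))
    refine U_super hU hS ?_ (fun β hβ => U_sub hU hA hβ.1)
    rintro β ⟨hβA, hβκ, hβ⟩
    refine ⟨hβA, ?_⟩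
    refine node_ext (by rw [(hF β hβA).1]) ?_
    intro ξ hξ
    rw [(hF β hβA).1] at hξ
    show (F β).val ξ = if ξ < γ then cf ξ else 0
    rw [if_pos hξ]
    exact (hβ ξ hξ).2

end HL10
end Aux10h

section Aux10i
namespace HL10
open Cardinal Set

variable {κ : Cardinal.{0}} {U : Set (Set Ordinal.{0})}

theorem mem_of_sdhl (hU : IsNormalUltrafilterOn U κ) (hκ0 : ℵ₀ < κ) {d : ℕ} (hd : 0 < d)
    {σ : Cardinal.{0}} (hσ0 : 0 < σ) (hσκ : σ < κ) (hsdhl : SDHL d σ κ) :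
    SDHLset d σ κ ∈ U := by
  classical
  have hσord : σ.ord < κ.ord := Cardinal.ord_lt_ord.mpr hσκ
  have hωord : (Ordinal.omega0 : Ordinal.{0}) < κ.ord := by
    rw [← Cardinal.ord_aleph0]
    exact Cardinal.ord_lt_ord.mpr hκ0
  have hG : {β : Ordinal.{0} | β < κ.ord ∧ (ℵ₀ ≤ β.card ∧ β.card.ord = β ∧ σ < β.card)} ∈ U := by
    have h1 := U_card hU hκ0
    have h2 := U_tail hU hκ0.le hσord
    have h3 := U_tail hU hκ0.le hωord
    refine U_up hU (U_inter hU h1 (U_inter hU h2 h3)) ?_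
    rintro β ⟨⟨hβκ, hβcard⟩, ⟨_, hσβ⟩, ⟨_, hωβ⟩⟩
    refine ⟨Ordinal.aleph0_le_card.mpr hωβ.le, hβcard, ?_⟩
    rw [← hβcard] at hσβ
    exact Cardinal.ord_lt_ord.mp hσβ
  rcases U_dec hU (show SDHLset d σ κ ⊆ Set.Iio κ.ord from fun β hβ => hβ.1) with hin | hout
  · exact hin
  exfalso
  set B : Set Ordinal.{0} := (Set.Iio κ.ord \ SDHLset d σ κ) ∩
    {β : Ordinal.{0} | β < κ.ord ∧ (ℵ₀ ≤ β.card ∧ β.card.ord = β ∧ σ < β.card)} with hBdef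
  have hB : B ∈ U := U_inter hU hout hG
  have hBsub : B ⊆ Set.Iio κ.ord := fun β hβ => hβ.1.1
  have hBprop : ∀ β ∈ B, ℵ₀ ≤ β.card ∧ β.card.ord = β ∧ σ < β.card ∧ ¬ SDHL d σ β.card := by
    rintro β ⟨⟨hβκ, hβnot⟩, ⟨_, hinf, hcard, hσβ⟩⟩
    exact ⟨hinf, hcard, hσβ, fun hsd => hβnot ⟨hβκ, hinf, hcard, hσβ, hsd⟩⟩
  have hup : ∀ β, β ∈ B → β.card.ord ≤ κ.ord := by
    intro β hβ
    rw [(hBprop β hβ).2.1]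
    exact le_of_lt hβ.1.1
  -- counterexample trees and colorings
  have hcex0 : ∀ β : Ordinal.{0}, ∃ (Tcβ : Fin d → Set (SeqNode β.card))
      (ccβ : (Fin d → SeqNode β.card) → Ordinal.{0}),
      β ∈ B → (∀ i, IsRegularTree β.card (Tcβ i)) ∧
        (∀ x ∈ LevelProd Tcβ, ccβ x < σ.ord) ∧
        ∀ X : Fin d → Set (SeqNode β.card), ¬ ((∀ i, X i ⊆ Tcβ i) ∧
          IsSDMatrix β.card Tcβ X ∧ MonoOn ccβ X) := by
    intro β
    by_cases hβ : β ∈ B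
    · have hnot := (hBprop β hβ).2.2.2
      rw [SDHL] at hnot
      push_neg at hnot
      obtain ⟨Tcβ, hTcβ, ccβ, hccβ, hX⟩ := hnot
      exact ⟨Tcβ, ccβ, fun _ => ⟨hTcβ, hccβ, fun X hcontr => by
        obtain ⟨h1, h2, h3⟩ := hcontr
        exact (hX X h1 h2) h3⟩⟩
    · exact ⟨fun _ => ∅, fun _ => 0, fun h => absurd h hβ⟩
  choose Tc cc hcex using hcex0
  -- the limit trees
  set InT : Fin d → Ordinal.{0} → SeqNode κ → Prop := fun i β t =>
    ∃ (hβ : β ∈ B) (s : SeqNode β.card), s ∈ Tc β i ∧ upc (hup β hβ) s = t with hInTdef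
  set TS : Fin d → Set (SeqNode κ) := fun i => {t | {β : Ordinal.{0} | InT i β t} ∈ U}
    with hTSdef
  have hInTB : ∀ i β t, InT i β t → β ∈ B := by rintro i β t ⟨hβ, _⟩; exact hβ
  have hInTsub : ∀ (i : Fin d) (t : SeqNode κ), {β : Ordinal.{0} | InT i β t} ⊆ Set.Iio κ.ord :=
    fun i t β hβ => hBsub (hInTB i β t hβ)
  have hbound : ∀ i β t, InT i β t → t.len < β ∧ ∀ ξ < t.len, t.val ξ < β := by
    rintro i β t ⟨hβ, s, hs, rfl⟩
    constructor
    · have := s.len_lt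
      rwa [(hBprop β hβ).2.1] at this
    · intro ξ hξ
      have := s.val_lt ξ hξ
      rwa [(hBprop β hβ).2.1] at this
  have hdown : ∀ i β t, InT i β t → ∀ (hβ : β ∈ B) (s : SeqNode β.card),
      upc (hup β hβ) s = t → s ∈ Tc β i := by
    rintro i β t ⟨hβ', s', hs', he'⟩ hβ s he
    have : upc (hup β hβ') s = t := he
    rw [← he'] at this
    rw [upc_inj _ this]
    exact hs'
  -- zero node
  have hκpos : (0 : Ordinal.{0}) < κ.ord := by
    rw [Cardinal.lt_ord, Ordinal.card_zero]
    exact Cardinal.aleph0_pos.trans hκ0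
  set Z : SeqNode κ := ⟨0, hκpos, fun _ => 0,
    fun ξ hξ => absurd hξ (not_lt_of_ge (zero_le (a := ξ))), fun _ _ => rfl⟩ with hZdef
  -- generic U-limit into TS
  have hLim : ∀ (i : Fin d) (A : Set Ordinal.{0}), A ∈ U → A ⊆ B →
      ∀ γ : Ordinal.{0}, γ < κ.ord → ∀ F : Ordinal.{0} → SeqNode κ,
      (∀ β ∈ A, (F β).len = γ ∧ InT i β (F β)) →
      ∃ t : SeqNode κ, t ∈ SeqLevel (TS i) γ ∧ {β : Ordinal.{0} | β ∈ A ∧ F β = t} ∈ U := by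
    intro i A hA hAB γ hγ F hF
    have hFb : ∀ β ∈ A, (F β).len = γ ∧ ∀ ξ < γ, (F β).val ξ < β := by
      intro β hβ
      refine ⟨(hF β hβ).1, fun ξ hξ => ?_⟩
      exact (hbound i β (F β) (hF β hβ).2).2 ξ (by rw [(hF β hβ).1]; exact hξ)
    obtain ⟨t, htlen, hW⟩ := U_limit_node hU hA hγ F hFb
    refine ⟨t, ⟨?_, htlen⟩, hW⟩
    refine U_super hU hW ?_ (hInTsub i t)
    rintro β ⟨hβA, hβF⟩
    rw [← hβF]
    exact (hF β hβA).2
  -- nonempty levels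
  have hTSlev : ∀ (i : Fin d) (γ : Ordinal.{0}), γ < κ.ord → (SeqLevel (TS i) γ).Nonempty := by
    intro i γ hγ
    have hA : (B ∩ {β : Ordinal.{0} | β < κ.ord ∧ γ < β}) ∈ U :=
      U_inter hU hB (U_tail hU hκ0.le hγ)
    have hF0 : ∀ β : Ordinal.{0}, ∃ F : SeqNode κ,
        β ∈ B ∩ {β : Ordinal.{0} | β < κ.ord ∧ γ < β} → F.len = γ ∧ InT i β F := by
      intro β
      by_cases hβ : β ∈ B ∩ {β : Ordinal.{0} | β < κ.ord ∧ γ < β}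
      · have hβB : β ∈ B := hβ.1
        have hγβ : γ < β.card.ord := by rw [(hBprop β hβB).2.1]; exact hβ.2.2
        obtain ⟨s, hs⟩ := ((hcex β hβB).1 i).2.2.1 γ hγβ
        exact ⟨upc (hup β hβB) s, fun _ => ⟨hs.2, ⟨hβB, s, hs.1, rfl⟩⟩⟩
      · exact ⟨Z, fun h => absurd h hβ⟩
    choose F hF using hF0
    obtain ⟨t, ht, _⟩ := hLim i _ hA (fun β hβ => hβ.1) γ hγ F hF
    exact ⟨t, ht⟩
  -- extension property
  have hTSP1 : ∀ (i : Fin d) (t : SeqNode κ), t ∈ TS i → ∀ δ : Ordinal.{0}, t.len ≤ δ →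
      δ < κ.ord → ∃ s, s ∈ SeqLevel (TS i) δ ∧ t.Init s := by
    intro i t ht δ hlδ hδ
    set A : Set Ordinal.{0} := {β : Ordinal.{0} | InT i β t} ∩
      {β : Ordinal.{0} | β < κ.ord ∧ δ < β} with hAdef
    have hA : A ∈ U := U_inter hU ht (U_tail hU hκ0.le hδ)
    have hAB : A ⊆ B := fun β hβ => hInTB i β t hβ.1
    have hF0 : ∀ β : Ordinal.{0}, ∃ F : SeqNode κ, β ∈ A →
        F.len = δ ∧ InT i β F ∧ t.Init F := by
      intro β
      by_cases hβ : β ∈ A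
      · obtain ⟨hβB, s0, hs0, he⟩ := hβ.1
        have hδβ : δ < β.card.ord := by rw [(hBprop β hβB).2.1]; exact hβ.2.2
        have hs0len : s0.len ≤ δ := by
          have : (upc (hup β hβB) s0).len = t.len := by rw [he]
          rw [upc_len] at this
          rw [this]; exact hlδ
        obtain ⟨s1, hs1, hinit⟩ := node_ext_level ((hcex β hβB).1 i).1
          ((hcex β hβB).1 i).2.2.1 ((hcex β hβB).1 i).2.2.2.2.1 hs0 hs0len hδβ
        refine ⟨upc (hup β hβB) s1, fun _ => ⟨hs1.2, ⟨hβB, s1, hs1.1, rfl⟩, ?_⟩⟩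
        rw [← he]
        exact hinit
      · exact ⟨Z, fun h => absurd h hβ⟩
    choose F hF using hF0
    obtain ⟨s, hs, hW⟩ := hLim i A hA hAB δ hδ F (fun β hβ => ⟨(hF β hβ).1, (hF β hβ).2.1⟩)
    obtain ⟨β, hβA, hβF⟩ := U_nonempty hU hW
    refine ⟨s, hs, ?_⟩
    rw [← hβF]
    exact (hF β hβA).2.2
  -- chain bound property
  have hTSP2 : ∀ (i : Fin d) (C : Set (SeqNode κ)), C ⊆ TS i →
      (∀ s ∈ C, ∀ u ∈ C, s.Init u ∨ u.Init s) → ∀ δ : Ordinal.{0}, δ < κ.ord →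
      (∀ u ∈ C, u.len ≤ δ) → ∃ s, s ∈ SeqLevel (TS i) δ ∧ ∀ u ∈ C, u.Init s := by
    intro i C hC hcomp δ hδ hlens
    rcases C.eq_empty_or_nonempty with rfl | hCne
    · obtain ⟨s, hs⟩ := hTSlev i δ hδ
      exact ⟨s, hs, fun u hu => absurd hu (Set.notMem_empty u)⟩
    · have hCsub : Nonempty ↥C := hCne.to_subtype
      have hδ1 : δ + 1 < κ.ord := (Cardinal.isSuccLimit_ord hκ0.le).succ_lt hδ
      have hCcard : Cardinal.mk ↥C < Cardinal.lift.{1} κ := by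
        have hinj : Cardinal.mk ↥C ≤ Cardinal.mk ↥(Set.Iio (δ+1)) := by
          refine Cardinal.mk_le_of_injective (f := fun u : ↥C =>
            (⟨u.1.len, lt_of_le_of_lt (hlens u.1 u.2) (Order.lt_succ δ)⟩ :
              ↥(Set.Iio (δ+1)))) ?_
          intro u v he
          have hlen : u.1.len = v.1.len := congrArg Subtype.val he
          rcases hcomp u.1 u.2 v.1 v.2 with h | h
          · exact Subtype.ext (init_eq_of_len_le h (le_of_eq hlen.symm))
          · exact Subtype.ext (init_eq_of_len_le h (le_of_eq hlen)).symm
        refine lt_of_le_of_lt hinj ?_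
        rw [Ordinal.mk_Iio_ordinal]
        exact Cardinal.lift_lt.mpr (Cardinal.lt_ord.mp hδ1)
      set A : Set Ordinal.{0} := (⋂ u : ↥C, {β : Ordinal.{0} | InT i β u.1}) ∩
        {β : Ordinal.{0} | β < κ.ord ∧ δ < β} with hAdef
      have hA : A ∈ U := by
        refine U_inter hU (U_iInter hU _ (fun u => hC u.2) hCcard) (U_tail hU hκ0.le hδ)
      have hAB : A ⊆ B := by
        intro β hβ
        obtain ⟨u0, hu0⟩ := hCne
        exact hInTB i β u0 (Set.mem_iInter.mp hβ.1 ⟨u0, hu0⟩)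
      have hF0 : ∀ β : Ordinal.{0}, ∃ F : SeqNode κ, β ∈ A →
          F.len = δ ∧ InT i β F ∧ ∀ u ∈ C, u.Init F := by
        intro β
        by_cases hβ : β ∈ A
        · have hβB : β ∈ B := hAB hβ
          have hδβ : δ < β.card.ord := by rw [(hBprop β hβB).2.1]; exact hβ.2.2
          set Cβ : Set (SeqNode β.card) := {s | upc (hup β hβB) s ∈ C} with hCβdef
          have hCβsub : Cβ ⊆ Tc β i := by
            intro s hs
            exact hdown i β _ (Set.mem_iInter.mp hβ.1 ⟨_, hs⟩) hβB s rfl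
          have hCβcomp : ∀ s ∈ Cβ, ∀ u ∈ Cβ, s.Init u ∨ u.Init s := by
            intro s hs u hu
            exact hcomp _ hs _ hu
          have hCβlen : ∀ u ∈ Cβ, u.len ≤ δ := by
            intro u hu
            exact hlens _ hu
          obtain ⟨sβ, hsβ, hext⟩ := chain_bound ((hcex β hβB).1 i).1
            ((hcex β hβB).1 i).2.2.1 ((hcex β hβB).1 i).2.2.2.2.1 hCβsub hCβcomp hCβlen hδβ
          refine ⟨upc (hup β hβB) sβ, fun _ => ⟨hsβ.2, ⟨hβB, sβ, hsβ.1, rfl⟩, ?_⟩⟩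
          intro u hu
          obtain ⟨hβ', u0, hu0, he⟩ := Set.mem_iInter.mp hβ.1 ⟨u, hu⟩
          have hu0Cβ : u0 ∈ Cβ := by
            show upc (hup β hβB) u0 ∈ C
            have : upc (hup β hβB) u0 = u := he
            rw [this]; exact hu
          have := hext u0 hu0Cβ
          have he2 : upc (hup β hβB) u0 = u := he
          rw [← he2]
          exact this
        · exact ⟨Z, fun h => absurd h hβ⟩
      choose F hF using hF0
      obtain ⟨s, hs, hW⟩ := hLim i A hA hAB δ hδ F (fun β hβ => ⟨(hF β hβ).1, (hF β hβ).2.1⟩)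
      obtain ⟨β, hβA, hβF⟩ := U_nonempty hU hW
      refine ⟨s, hs, fun u hu => ?_⟩
      rw [← hβF]
      exact (hF β hβA).2.2 u hu
  -- tree closure
  have hTStree : ∀ i : Fin d, IsSeqTree (TS i) := by
    intro i t ht s hs
    refine U_super hU ht ?_ (hInTsub i s)
    rintro β ⟨hβ, t0, ht0, he⟩
    have hblen : t.len < β ∧ ∀ ξ < t.len, t.val ξ < β := hbound i β t ⟨hβ, t0, ht0, he⟩
    have hslen : s.len < β.card.ord := by
      rw [(hBprop β hβ).2.1]
      exact lt_of_le_of_lt hs.1 hblen.1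
    have hsval : ∀ ξ, ξ < s.len → s.val ξ < β.card.ord := by
      intro ξ hξ
      rw [(hBprop β hβ).2.1, hs.2 ξ hξ]
      exact hblen.2 ξ (lt_of_lt_of_le hξ hs.1)
    obtain ⟨s0, hs0⟩ := upc_surj (hup β hβ) s hslen hsval
    have hs0init : s0.Init t0 := by
      have : (upc (hup β hβ) s0).Init (upc (hup β hβ) t0) := by
        rw [hs0, he]
        exact hs
      exact this
    exact ⟨hβ, s0, ((hcex β hβ).1 i).1 t0 ht0 s0 hs0init, hs0⟩
  -- level cardinality
  have hTScard : ∀ (i : Fin d) (γ : Ordinal.{0}), γ < κ.ord →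
      Cardinal.mk ↥(SeqLevel (TS i) γ) < Cardinal.lift.{1} κ := by
    intro i γ hγ
    by_contra hge
    push_neg at hge
    have hle' : Cardinal.mk ↥(Set.Iio κ.ord) ≤ Cardinal.mk ↥(SeqLevel (TS i) γ) := by
      rw [Ordinal.mk_Iio_ordinal, Cardinal.card_ord]
      exact hge
    obtain ⟨g⟩ := (Cardinal.le_def _ _).mp hle'
    have hAU : ∀ η : Ordinal.{0}, η < κ.ord →
        (if hη : η < κ.ord then {β : Ordinal.{0} | InT i β (g ⟨η, hη⟩).1} else
          Set.Iio κ.ord) ∈ U := by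
      intro η hη
      rw [dif_pos hη]
      exact (g ⟨η, hη⟩).2.1
    have hD := U_diag hU _ hAU
    obtain ⟨β, ⟨hβκ, hβdiag⟩, hβB, _, hγβ⟩ := U_nonempty hU (U_inter hU hD
      (U_inter hU hB (U_tail hU hκ0.le hγ)))
    have hmemg : ∀ η : Ordinal.{0}, ∀ hη : η < β, InT i β (g ⟨η, hη.trans hβκ⟩).1 := by
      intro η hη
      have := hβdiag η hη
      rwa [dif_pos (hη.trans hβκ)] at this
    have hdn : ∀ η : ↥(Set.Iio β), ∃ s : SeqNode β.card, s ∈ Tc β i ∧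
        upc (hup β hβB) s = (g ⟨η.1, η.2.trans hβκ⟩).1 := by
      intro η
      obtain ⟨hβ', s, hs, he⟩ := hmemg η.1 η.2
      exact ⟨s, hs, he⟩
    choose dn hdn1 hdn2 using hdn
    have hγβord : γ < β.card.ord := by rw [(hBprop β hβB).2.1]; exact hγβ
    have hinj : Cardinal.mk ↥(Set.Iio β) ≤ Cardinal.mk ↥(SeqLevel (Tc β i) γ) := by
      refine Cardinal.mk_le_of_injective (f := fun η : ↥(Set.Iio β) =>
        (⟨dn η, hdn1 η, ?_⟩ : ↥(SeqLevel (Tc β i) γ))) ?_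
      · have h1 : (upc (hup β hβB) (dn η)).len = (dn η).len := upc_len _ _
        rw [← h1, hdn2 η]
        exact (g ⟨η.1, η.2.trans hβκ⟩).1 |>.len_lt |> fun _ => (g ⟨η.1, η.2.trans hβκ⟩).2.2
      · intro η1 η2 he
        have he1 : dn η1 = dn η2 := congrArg Subtype.val he
        have he2 : (g ⟨η1.1, η1.2.trans hβκ⟩).1 = (g ⟨η2.1, η2.2.trans hβκ⟩).1 := by
          rw [← hdn2 η1, ← hdn2 η2, he1]
        have he3 := g.injective (Subtype.ext he2)
        have he4 : (⟨η1.1, η1.2.trans hβκ⟩ : ↥(Set.Iio κ.ord)).1 =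
            (⟨η2.1, η2.2.trans hβκ⟩ : ↥(Set.Iio κ.ord)).1 := congrArg Subtype.val he3
        exact Subtype.ext he4
    have hTclev := ((hcex β hβB).1 i).2.2.2.1 γ hγβord
    rw [Cardinal.card_ord] at hTclev
    rw [Ordinal.mk_Iio_ordinal] at hinj
    exact absurd (lt_of_le_of_lt hinj hTclev) (lt_irrefl _)
  -- perfectness
  have hTSperf : ∀ i : Fin d, IsPerfect (TS i) := by
    intro i t ht
    set A : Set Ordinal.{0} := {β : Ordinal.{0} | InT i β t} with hAdef
    have hA : A ∈ U := ht
    have hAB : A ⊆ B := fun β hβ => hInTB i β t hβ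
    have hsp0 : ∀ β : Ordinal.{0}, ∃ q : Ordinal.{0} × SeqNode κ × SeqNode κ, β ∈ A →
        q.1 < β ∧ t.len < q.1 ∧
          (q.2.1.len = q.1 ∧ InT i β q.2.1 ∧ t.Init q.2.1) ∧
          (q.2.2.len = q.1 ∧ InT i β q.2.2 ∧ t.Init q.2.2) ∧
          ¬ q.2.1.Init q.2.2 ∧ ¬ q.2.2.Init q.2.1 := by
      intro β
      by_cases hβ : β ∈ A
      · have hβB : β ∈ B := hAB hβ
        obtain ⟨hβ', t0, ht0, he⟩ := hβ
        obtain ⟨δ0, hδ0len, hδ0ord, s0, u0, hs0, hu0, hts0, htu0, hsu0, hus0⟩ :=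
          split_level ((hcex β hβB).1 i).1 ((hcex β hβB).1 i).2.2.2.2.2 ht0
        refine ⟨(δ0, upc (hup β hβB) s0, upc (hup β hβB) u0), fun _ => ?_⟩
        refine ⟨lt_of_lt_of_le hδ0ord (le_of_eq (hBprop β hβB).2.1), ?_, ?_, ?_, ?_, ?_⟩
        · have : t.len = t0.len := by rw [← he]; rfl
          rw [this]; exact hδ0len
        · refine ⟨hs0.2, ⟨hβB, s0, hs0.1, rfl⟩, ?_⟩
          have he2 : upc (hup β hβB) t0 = t := he
          rw [← he2]; exact hts0
        · refine ⟨hu0.2, ⟨hβB, u0, hu0.1, rfl⟩, ?_⟩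
          have he2 : upc (hup β hβB) t0 = t := he
          rw [← he2]; exact htu0
        · exact hsu0
        · exact hus0
      · exact ⟨(0, Z, Z), fun h => absurd h hβ⟩
    choose q hq using hsp0
    obtain ⟨δc, hδcκ, hA1⟩ := U_fodor hU hA (fun β => (q β).1)
      (fun β hβ => (hq β hβ).1)
    set A1 : Set Ordinal.{0} := {β : Ordinal.{0} | β ∈ A ∧ (q β).1 = δc} with hA1def
    have hA1B : A1 ⊆ B := fun β hβ => hAB hβ.1
    obtain ⟨s, hsTS, hA2⟩ := hLim i A1 hA1 hA1B δc hδcκ (fun β => (q β).2.1)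
      (fun β hβ => ⟨by rw [(hq β hβ.1).2.2.1.1, hβ.2], (hq β hβ.1).2.2.1.2.1⟩)
    set A2 : Set Ordinal.{0} := {β : Ordinal.{0} | β ∈ A1 ∧ (q β).2.1 = s} with hA2def
    have hA2B : A2 ⊆ B := fun β hβ => hA1B hβ.1
    obtain ⟨u, huTS, hA3⟩ := hLim i A2 hA2 hA2B δc hδcκ (fun β => (q β).2.2)
      (fun β hβ => ⟨by rw [(hq β hβ.1.1).2.2.2.1.1, hβ.1.2], (hq β hβ.1.1).2.2.2.1.2.1⟩)
    obtain ⟨β, hβA2, hβu⟩ := U_nonempty hU hA3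
    have hβA1 : β ∈ A1 := hβA2.1
    have hβA : β ∈ A := hβA1.1
    have hβs : (q β).2.1 = s := hβA2.2
    refine ⟨s, hsTS.1, u, huTS.1, ?_, ?_, ?_, ?_⟩
    · rw [← hβs]; exact (hq β hβA).2.2.1.2.2
    · rw [← hβu]; exact (hq β hβA).2.2.2.1.2.2
    · rw [← hβs, ← hβu]; exact (hq β hβA).2.2.2.2.1
    · rw [← hβs, ← hβu]; exact (hq β hβA).2.2.2.2.2
  -- regularity of the limit trees
  have hTSreg : ∀ i, IsRegularTree κ (TS i) := by
    intro i
    refine ⟨hTStree i, fun t _ => t.len_lt, hTSlev i, ?_, ?_, hTSperf i⟩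
    · intro γ hγ
      rw [Cardinal.card_ord]
      exact hTScard i γ hγ
    · exact max_branch_crit (hTStree i) (hTSlev i) (fun C hC hcomp δ hδ hlens =>
        hTSP2 i C hC hcomp δ hδ hlens)
  -- the limit coloring
  set CC : (Fin d → SeqNode κ) → Ordinal.{0} → Ordinal.{0} → Prop := fun x β δ =>
    ∃ (hβ : β ∈ B) (x0 : Fin d → SeqNode β.card),
      (∀ i, upc (hup β hβ) (x0 i) = x i) ∧ cc β x0 = δ with hCCdef
  have hCCuniq : ∀ x β δ δ', CC x β δ → CC x β δ' → δ = δ' := by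
    rintro x β δ δ' ⟨hβ, x0, hx0, rfl⟩ ⟨hβ', x0', hx0', rfl⟩
    have : x0 = x0' := by
      funext i
      have h1 : upc (hup β hβ) (x0' i) = x i := hx0' i
      rw [← hx0 i] at h1
      exact (upc_inj _ h1).symm
    rw [this]
  set cstar : (Fin d → SeqNode κ) → Ordinal.{0} := fun x =>
    if h : ∃ δ : Ordinal.{0}, δ < σ.ord ∧ {β : Ordinal.{0} | CC x β δ} ∈ U then
      h.choose else 0 with hcstardef
  have hCstar : ∀ x ∈ LevelProd TS, cstar x < σ.ord ∧
      {β : Ordinal.{0} | CC x β (cstar x)} ∈ U := by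
    rintro x ⟨γ, hx⟩
    have hex : ∃ δ : Ordinal.{0}, δ < σ.ord ∧ {β : Ordinal.{0} | CC x β δ} ∈ U := by
      have hA : (⋂ i, {β : Ordinal.{0} | InT i β (x i)}) ∈ U :=
        U_iInter_fin hU hκ0 hd _ (fun i => (hx i).1)
      have hAB : (⋂ i, {β : Ordinal.{0} | InT i β (x i)}) ⊆ B := by
        intro β hβ
        exact hInTB ⟨0, hd⟩ β _ (Set.mem_iInter.mp hβ ⟨0, hd⟩)
      have hx0 : ∀ β (hβ : β ∈ (⋂ i, {β : Ordinal.{0} | InT i β (x i)})),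
          ∃ x0 : Fin d → SeqNode β.card, ∀ i, x0 i ∈ Tc β i ∧
            upc (hup β (hAB hβ)) (x0 i) = x i := by
        intro β hβ
        have h1 : ∀ i, ∃ s : SeqNode β.card, s ∈ Tc β i ∧
            upc (hup β (hAB hβ)) s = x i := by
          intro i
          obtain ⟨hβ', s, hs, he⟩ := Set.mem_iInter.mp hβ i
          exact ⟨s, hs, he⟩
        choose x0 h2 h3 using h1
        exact ⟨x0, fun i => ⟨h2 i, h3 i⟩⟩
      choose x0 hx0' using hx0
      classical
      set g : Ordinal.{0} → Ordinal.{0} := fun β =>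
        if hβ : β ∈ (⋂ i, {β : Ordinal.{0} | InT i β (x i)}) then cc β (x0 β hβ) else 0
        with hgdef
      have hgb : ∀ β ∈ (⋂ i, {β : Ordinal.{0} | InT i β (x i)}), g β < σ.ord := by
        intro β hβ
        have hgval : g β = cc β (x0 β hβ) := by rw [hgdef]; exact dif_pos hβ
        rw [hgval]
        refine (hcex β (hAB hβ)).2.1 _ ⟨γ, fun i => ⟨(hx0' β hβ i).1, ?_⟩⟩
        have h1 : (upc (hup β (hAB hβ)) (x0 β hβ i)).len = (x0 β hβ i).len := upc_len _ _
        rw [← h1, (hx0' β hβ i).2]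
        exact (hx i).2
      obtain ⟨δ, hδσ, hδU⟩ := U_pigeon hU hσκ hA g hgb
      refine ⟨δ, hδσ, ?_⟩
      refine U_super hU hδU ?_ (fun β hβ => hBsub (by
        obtain ⟨hβB, _⟩ := hβ
        exact hβB))
      rintro β ⟨hβA, hgβ⟩
      have hgval : g β = cc β (x0 β hβA) := by rw [hgdef]; exact dif_pos hβA
      rw [hgval] at hgβ
      exact ⟨hAB hβA, x0 β hβA, fun i => (hx0' β hβA i).2, hgβ⟩
    have hcs : cstar x = hex.choose := by rw [hcstardef]; exact dif_pos hex
    rw [hcs]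
    exact hex.choose_spec
  -- apply SDHL at κ
  have hcbound : ∀ x ∈ LevelProd TS, cstar x < σ.ord := fun x hx => (hCstar x hx).1
  obtain ⟨X, hXsub, hXmat, hXmono⟩ := hsdhl TS hTSreg cstar hcbound
  obtain ⟨α, β', hαβ', hβ'κ, t', ht'lev, hXcond⟩ := hXmat
  -- the matrix is nonempty in each coordinate
  have hα1κ : α + 1 < κ.ord := lt_of_le_of_lt (Order.add_one_le_of_lt hαβ') hβ'κ
  have hXne : ∀ i, (X i).Nonempty := by
    intro i
    obtain ⟨y, hy, hty⟩ := hTSP1 i (t' i) (ht'lev i).1 (α+1)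
      (by rw [(ht'lev i).2]; exact (Order.lt_succ α).le) hα1κ
    obtain ⟨x, hx, _⟩ := (hXcond i).2 y ⟨hy, hty⟩
    exact ⟨x, hx⟩
  have hXcard : ∀ i, Cardinal.mk ↥(X i) < Cardinal.lift.{1} κ := by
    intro i
    exact lt_of_le_of_lt (Cardinal.mk_le_mk_of_subset (hXcond i).1) (hTScard i β' hβ'κ)
  -- U-sets
  have hWX : ∀ i, (⋂ x : ↥(X i), {β : Ordinal.{0} | InT i β x.1}) ∈ U := by
    intro i
    have : Nonempty ↥(X i) := (hXne i).to_subtype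
    exact U_iInter hU _ (fun x => ((hXcond i).1 x.2).1) (hXcard i)
  have hWt : ∀ i, {β : Ordinal.{0} | InT i β (t' i)} ∈ U := fun i => (ht'lev i).1
  -- X-level products are small
  have hXLPsub : LevelProd X ⊆ LevelProd TS := by
    rintro x ⟨γ, hx⟩
    exact ⟨γ, fun i => ⟨((hXcond i).1 (hx i).1).1, (hx i).2⟩⟩
  have hLPcard : Cardinal.mk ↥(LevelProd X) < Cardinal.lift.{1} κ := by
    have hinj : Cardinal.mk ↥(LevelProd X) ≤ Cardinal.mk (∀ i, ↥(X i)) := by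
      refine Cardinal.mk_le_of_injective (f := fun x : ↥(LevelProd X) =>
        fun i => (⟨x.1 i, (x.2.choose_spec i).1⟩ : ↥(X i))) ?_
      intro x y he
      refine Subtype.ext (funext (fun i => ?_))
      exact congrArg Subtype.val (congrFun he i)
    exact lt_of_le_of_lt hinj (mk_pi_fin_lt hκ0 _ hXcard)
  have hLPne : Nonempty ↥(LevelProd X) := by
    have h1 : ∀ i, ∃ x, x ∈ X i := hXne
    choose xf hxf using h1
    exact ⟨⟨xf, β', fun i => ⟨hxf i, ((hXcond i).1 (hxf i)).2⟩⟩⟩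
  have hWLP : (⋂ x : ↥(LevelProd X), {β : Ordinal.{0} | CC x.1 β (cstar x.1)}) ∈ U :=
    U_iInter hU _ (fun x => (hCstar x.1 (hXLPsub x.2)).2) hLPcard
  -- successor capture
  set Succ : Fin d → Set (SeqNode κ) := fun i => SeqLevel (TS i) (α+1) ∩ Cone (t' i)
    with hSuccdef
  set Q : Fin d → Set Ordinal.{0} := fun i => {β : Ordinal.{0} | β < κ.ord ∧
    ∀ (hβ : β ∈ B) (t0 y0 : SeqNode β.card), upc (hup β hβ) t0 = t' i →
      y0 ∈ SeqLevel (Tc β i) (α+1) → t0.Init y0 → upc (hup β hβ) y0 ∈ Succ i} with hQdef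
  have hQU : ∀ i, Q i ∈ U := by
    intro i
    rcases U_dec hU (show Q i ⊆ Set.Iio κ.ord from fun β hβ => hβ.1) with h | h
    · exact h
    · exfalso
      set E : Set Ordinal.{0} := (Set.Iio κ.ord \ Q i) ∩ B with hEdef
      have hE : E ∈ U := U_inter hU h hB
      have hEB : E ⊆ B := fun β hβ => hβ.2
      have hbad : ∀ β : Ordinal.{0}, ∃ F : SeqNode κ, β ∈ E →
          F.len = α + 1 ∧ InT i β F ∧ (t' i).Init F ∧ F ∉ Succ i := by
        intro β
        by_cases hβ : β ∈ E
        · have hβκ' : β < κ.ord := hβ.1.1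
          have hnq : ¬ (β < κ.ord ∧ ∀ (hβ' : β ∈ B) (t0 y0 : SeqNode β.card),
              upc (hup β hβ') t0 = t' i → y0 ∈ SeqLevel (Tc β i) (α+1) → t0.Init y0 →
                upc (hup β hβ') y0 ∈ Succ i) := hβ.1.2
          push_neg at hnq
          obtain ⟨hβB, t0, y0, he, hy0, hinit, hnot⟩ := hnq hβκ'
          refine ⟨upc (hup β hβB) y0, fun _ => ⟨hy0.2, ⟨hβB, y0, hy0.1, rfl⟩, ?_, hnot⟩⟩
          rw [← he]
          exact hinit
        · exact ⟨Z, fun h' => absurd h' hβ⟩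
      choose F hF using hbad
      obtain ⟨y, hylev, hW'⟩ := hLim i E hE hEB (α+1) hα1κ F
        (fun β hβ => ⟨(hF β hβ).1, (hF β hβ).2.1⟩)
      obtain ⟨β, hβE, hβF⟩ := U_nonempty hU hW'
      have hyS : y ∈ Succ i := by
        refine ⟨hylev, ?_⟩
        rw [← hβF]
        exact (hF β hβE).2.2.1
      have hynS : y ∉ Succ i := by
        rw [← hβF]
        exact (hF β hβE).2.2.2
      exact hynS hyS
  -- pick a single good index
  have hbig : (B ∩ {β : Ordinal.{0} | β < κ.ord ∧ β' < β} ∩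
      (⋂ i, (⋂ x : ↥(X i), {β : Ordinal.{0} | InT i β x.1})) ∩
      (⋂ i, {β : Ordinal.{0} | InT i β (t' i)}) ∩ (⋂ i, Q i) ∩
      (⋂ x : ↥(LevelProd X), {β : Ordinal.{0} | CC x.1 β (cstar x.1)})) ∈ U := by
    refine U_inter hU (U_inter hU (U_inter hU (U_inter hU (U_inter hU hB
      (U_tail hU hκ0.le hβ'κ)) (U_iInter_fin hU hκ0 hd _ hWX))
      (U_iInter_fin hU hκ0 hd _ hWt)) (U_iInter_fin hU hκ0 hd _ hQU)) hWLP
  obtain ⟨β, ⟨⟨⟨⟨⟨hβB, _, hβ'β⟩, hβWX⟩, hβWt⟩, hβQ⟩, hβWLP⟩⟩ := U_nonempty hU hbig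
  -- transfer the matrix down to the counterexample at β
  set Xd : Fin d → Set (SeqNode β.card) := fun i => {s | upc (hup β hβB) s ∈ X i} with hXddef
  have hXdsub : ∀ i, Xd i ⊆ Tc β i := by
    intro i s hs
    have hInTs : InT i β (upc (hup β hβB) s) :=
      Set.mem_iInter.mp (Set.mem_iInter.mp hβWX i) ⟨_, hs⟩
    exact hdown i β _ hInTs hβB s rfl
  -- downward images of the t' i
  have ht0 : ∀ i, ∃ t0 : SeqNode β.card, t0 ∈ Tc β i ∧ upc (hup β hβB) t0 = t' i := by
    intro i
    obtain ⟨hβ', t0, h1, h2⟩ := Set.mem_iInter.mp hβWt i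
    exact ⟨t0, h1, h2⟩
  choose t0 ht01 ht02 using ht0
  have hβ'ord : β' < β.card.ord := by rw [(hBprop β hβB).2.1]; exact hβ'β
  have hmat : IsSDMatrix β.card (Tc β) Xd := by
    refine ⟨α, β', hαβ', hβ'ord, t0, ?_, ?_⟩
    · intro i
      refine ⟨ht01 i, ?_⟩
      have h1 : (upc (hup β hβB) (t0 i)).len = (t0 i).len := upc_len _ _
      rw [← h1, ht02 i]
      exact (ht'lev i).2
    · intro i
      constructor
      · intro s hs
        refine ⟨hXdsub i hs, ?_⟩
        have h2 : (upc (hup β hβB) s).len = s.len := upc_len _ _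
        rw [← h2]
        exact ((hXcond i).1 hs).2
      · rintro y0 ⟨hy0lev, hy0cone⟩
        have hySucc : upc (hup β hβB) y0 ∈ Succ i :=
          (Set.mem_iInter.mp hβQ i).2 hβB (t0 i) y0 (ht02 i) hy0lev hy0cone
        obtain ⟨x, hxX, hxinit⟩ := (hXcond i).2 _ hySucc
        obtain ⟨hβ', x0, hx0, hex⟩ :=
          Set.mem_iInter.mp (Set.mem_iInter.mp hβWX i) ⟨x, hxX⟩
        have hx0Xd : x0 ∈ Xd i := by
          show upc (hup β hβB) x0 ∈ X i
          have : upc (hup β hβB) x0 = x := hex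
          rw [this]; exact hxX
        refine ⟨x0, hx0Xd, ?_⟩
        have he2 : upc (hup β hβB) x0 = x := hex
        rw [← he2] at hxinit
        exact hxinit
  have hmono : MonoOn (cc β) Xd := by
    rintro x0 ⟨γx, hx0⟩ y0 ⟨γy, hy0⟩
    set x : Fin d → SeqNode κ := fun i => upc (hup β hβB) (x0 i) with hxdef
    set y : Fin d → SeqNode κ := fun i => upc (hup β hβB) (y0 i) with hydef
    have hxLP : x ∈ LevelProd X := ⟨γx, fun i => ⟨(hx0 i).1, (hx0 i).2⟩⟩
    have hyLP : y ∈ LevelProd X := ⟨γy, fun i => ⟨(hy0 i).1, (hy0 i).2⟩⟩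
    have hxCC : CC x β (cstar x) := Set.mem_iInter.mp hβWLP ⟨x, hxLP⟩
    have hyCC : CC y β (cstar y) := Set.mem_iInter.mp hβWLP ⟨y, hyLP⟩
    have hccx : cc β x0 = cstar x := by
      obtain ⟨hβ', x0', hx0', he'⟩ := hxCC
      have : x0' = x0 := by
        funext i
        have h1 : upc (hup β hβB) (x0' i) = x i := hx0' i
        exact upc_inj _ h1
      rw [← this, he']
    have hccy : cc β y0 = cstar y := by
      obtain ⟨hβ', y0', hy0', he'⟩ := hyCC
      have : y0' = y0 := by
        funext i
        have h1 : upc (hup β hβB) (y0' i) = y i := hy0' i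
        exact upc_inj _ h1
      rw [← this, he']
    rw [hccx, hccy]
    exact hXmono x hxLP y hyLP
  exact (hcex β hβB).2.2 Xd ⟨hXdsub, hmat, hmono⟩

end HL10
end Aux10i

/-- For measurable κ with normal ultrafilter U, SDHL(d,σ,κ) holds iff the
set of infinite cardinals α < κ with σ < α at which SDHL(d,σ,α) holds belongs to U. -/
theorem sdhl_iff_mem_normal_ultrafilter (κ : Cardinal.{0}) (hκ : IsMeasurableCard κ)
    (U : Set (Set Ordinal.{0})) (hU : IsNormalUltrafilterOn U κ) :
    ∀ d : ℕ, 1 ≤ d → ∀ σ : Cardinal.{0}, 0 < σ → σ < κ →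
      (SDHL d σ κ ↔ SDHLset d σ κ ∈ U) := by
  intro d hd σ hσ0 hσκ
  constructor
  · intro h
    exact HL10.mem_of_sdhl hU hκ.1 hd hσ0 hσκ h
  · intro h
    exact HL10.sdhl_of_mem hU hκ.1 hd h
end

section
/- Let κ be a measurable cardinal, let 1 ≤ d < ω and 1 ≤ σ < κ, and assume SDHL(d,σ,κ) holds. Then the set {α < κ : α is an infinite cardinal, σ < α, and SDHL(d,σ,α) holds} is a stationary subset of κ. -/
open Cardinal Set

noncomputable section
open scoped Classical
section Sec1
open SeqNode

namespace SeqNode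

variable {κ μ : Cardinal.{0}}

theorem ext' {s t : SeqNode κ} (h1 : s.len = t.len) (h2 : ∀ β, s.val β = t.val β) :
    s = t := by
  obtain ⟨l, hl, v, hv, hz⟩ := s
  obtain ⟨l', hl', v', hv', hz'⟩ := t
  dsimp at h1 h2
  subst h1
  have : v = v' := funext h2
  subst this
  rfl

theorem Init.rfl' (t : SeqNode κ) : t.Init t := ⟨le_rfl, fun _ _ => rfl⟩

theorem Init.trans' {s t u : SeqNode κ} (h1 : s.Init t) (h2 : t.Init u) : s.Init u :=
  ⟨h1.1.trans h2.1, fun β hβ => (h1.2 β hβ).trans (h2.2 β (hβ.trans_le h1.1))⟩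

theorem Init.eq_of_len_le {s t : SeqNode κ} (h : s.Init t) (hl : t.len ≤ s.len) : s = t := by
  have hlen : s.len = t.len := le_antisymm h.1 hl
  refine ext' hlen fun β => ?_
  by_cases hβ : β < s.len
  · exact h.2 β hβ
  · rw [s.val_eq_zero β (not_lt.1 hβ), t.val_eq_zero β (hlen ▸ not_lt.1 hβ)]

theorem init_of_init_of_le {s t u : SeqNode κ} (hs : s.Init u) (ht : t.Init u)
    (hl : s.len ≤ t.len) : s.Init t :=
  ⟨hl, fun β hβ => (hs.2 β hβ).trans ((ht.2 β (hβ.trans_le hl)).symm)⟩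

theorem init_comparable {s t u : SeqNode κ} (hs : s.Init u) (ht : t.Init u) :
    s.Init t ∨ t.Init s := by
  rcases le_total s.len t.len with h | h
  · exact Or.inl (init_of_init_of_le hs ht h)
  · exact Or.inr (init_of_init_of_le ht hs h)

theorem restrict_init (t : SeqNode κ) (β : Ordinal.{0}) : (t.restrict β).Init t := by
  refine ⟨min_le_right _ _, fun γ hγ => ?_⟩
  simp only [restrict] at hγ ⊢
  rw [if_pos hγ]

theorem restrict_len_of_le {t : SeqNode κ} {β : Ordinal.{0}} (h : β ≤ t.len) :
    (t.restrict β).len = β := min_eq_left h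

/-- push a node into a bigger `SeqNode` type -/
def up (h : μ.ord ≤ κ.ord) (t : SeqNode μ) : SeqNode κ where
  len := t.len
  len_lt := lt_of_lt_of_le t.len_lt h
  val := t.val
  val_lt := fun β hβ => lt_of_lt_of_le (t.val_lt β hβ) h
  val_eq_zero := t.val_eq_zero

/-- pull a node down into a smaller `SeqNode` type -/
def down (s : SeqNode κ) (h1 : s.len < μ.ord) (h2 : ∀ δ, s.val δ < μ.ord) : SeqNode μ where
  len := s.len
  len_lt := h1
  val := s.val
  val_lt := fun β _ => h2 β
  val_eq_zero := s.val_eq_zero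

@[simp] theorem up_len (h : μ.ord ≤ κ.ord) (t : SeqNode μ) : (up h t).len = t.len := rfl
@[simp] theorem up_val (h : μ.ord ≤ κ.ord) (t : SeqNode μ) : (up h t).val = t.val := rfl
@[simp] theorem down_len (s : SeqNode κ) (h1 : s.len < μ.ord) (h2) :
    (down s h1 h2 : SeqNode μ).len = s.len := rfl

theorem up_down (h : μ.ord ≤ κ.ord) (s : SeqNode κ) (h1 : s.len < μ.ord) (h2) :
    up h (down s h1 h2) = s := rfl

theorem down_up (h : μ.ord ≤ κ.ord) (t : SeqNode μ) (h1) (h2) :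
    down (up h t) h1 h2 = t := rfl

theorem up_injective (h : μ.ord ≤ κ.ord) : Function.Injective (up h) := by
  intro s t hst
  have h1 : (up h s).len = (up h t).len := by rw [hst]
  have h2 : ∀ β, (up h s).val β = (up h t).val β := fun β => by rw [hst]
  exact ext' h1 h2

theorem up_init_iff (h : μ.ord ≤ κ.ord) {s t : SeqNode μ} :
    (up h s).Init (up h t) ↔ s.Init t := Iff.rfl

/-- a junk node -/
def nil (κ : Cardinal.{0}) (hκ : 0 < κ.ord) : SeqNode κ where
  len := 0
  len_lt := hκ
  val := fun _ => 0
  val_lt := fun β hβ => absurd hβ (not_lt_of_ge (zero_le (a := β)))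
  val_eq_zero := fun _ _ => rfl

end SeqNode

theorem mem_of_init_mem {κ : Cardinal.{0}} {T : Set (SeqNode κ)} (hT : IsSeqTree T)
    {s t : SeqNode κ} (h : s.Init t) (ht : t ∈ T) : s ∈ T := hT t ht s h

end Sec1
section Sec2

variable {κ : Cardinal.{0}} {U : Set (Set Ordinal.{0})}

theorem uf_nonempty (hUf : IsUltrafilterOn U κ.ord) {B : Set Ordinal.{0}} (hB : B ∈ U) :
    B.Nonempty := by
  rcases B.eq_empty_or_nonempty with rfl | h
  · exact absurd hB hUf.2.2.1
  · exact h

theorem uf_mono (hUf : IsUltrafilterOn U κ.ord) {B C : Set Ordinal.{0}} (hB : B ∈ U)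
    (hBC : B ⊆ C) (hC : C ⊆ Set.Iio κ.ord) : C ∈ U := hUf.2.2.2.1 B hB C hBC hC

theorem uf_inter (hUf : IsUltrafilterOn U κ.ord) {B C : Set Ordinal.{0}} (hB : B ∈ U)
    (hC : C ∈ U) : B ∩ C ∈ U := hUf.2.2.2.2.1 B hB C hC

theorem uf_compl (hUf : IsUltrafilterOn U κ.ord) {B : Set Ordinal.{0}} (hB : B ⊆ Set.Iio κ.ord)
    (hBU : B ∉ U) : Set.Iio κ.ord \ B ∈ U := (hUf.2.2.2.2.2 B hB).resolve_left hBU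

/-- intersection of a small family, relative to a base set. -/
theorem uf_iInter (hUf : IsUltrafilterOn U κ.ord) (hUc : IsKappaComplete U κ)
    (haleph : ℵ₀ < κ) {ι : Type 1} (f : ι → Set Ordinal.{0}) (hf : ∀ i, f i ∈ U)
    (hcard : Cardinal.mk ι < Cardinal.lift.{1} κ) {A0 : Set Ordinal.{0}} (hA0 : A0 ∈ U) :
    A0 ∩ ⋂ i, f i ∈ U := by
  have haleph' : ℵ₀ ≤ Cardinal.lift.{1} κ := by
    rw [← Cardinal.lift_aleph0.{1,0}]
    exact Cardinal.lift_le.2 haleph.le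
  have h1 : Cardinal.mk ↥(insert A0 (Set.range f)) < Cardinal.lift.{1} κ := by
    refine lt_of_le_of_lt (Cardinal.mk_insert_le) ?_
    exact Cardinal.add_lt_of_lt haleph'
      (lt_of_le_of_lt Cardinal.mk_range_le hcard)
      (lt_of_lt_of_le Cardinal.one_lt_aleph0 haleph')
  have h2 : ⋂₀ (insert A0 (Set.range f)) ∈ U := by
    refine hUc _ ?_ ⟨A0, Set.mem_insert _ _⟩ h1
    intro B hB
    rcases hB with rfl | hB
    · exact hA0
    · obtain ⟨i, rfl⟩ := hB
      exact hf i
  have h3 : ⋂₀ (insert A0 (Set.range f)) = A0 ∩ ⋂ i, f i := by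
    rw [Set.sInter_insert, Set.sInter_range]
  rwa [h3] at h2

theorem uf_partition (hUf : IsUltrafilterOn U κ.ord) (hUc : IsKappaComplete U κ)
    (haleph : ℵ₀ < κ) {A : Set Ordinal.{0}} (hA : A ∈ U) (θ : Ordinal.{0})
    (hθ : θ.card < κ) (v : Ordinal.{0} → Ordinal.{0}) (hv : ∀ β ∈ A, v β < θ) :
    ∃ γ < θ, {β ∈ A | v β = γ} ∈ U := by
  by_contra hcon
  push_neg at hcon
  have hAsub : A ⊆ Set.Iio κ.ord := hUf.1 A hA
  have hfib : ∀ γ : ↥(Set.Iio θ), Set.Iio κ.ord \ {β ∈ A | v β = ↑γ} ∈ U := by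
    intro ⟨γ, hγ⟩
    exact uf_compl hUf (fun β hβ => hAsub hβ.1) (hcon γ hγ)
  have hcard : Cardinal.mk ↥(Set.Iio θ) < Cardinal.lift.{1} κ := by
    rw [Ordinal.mk_Iio_ordinal]
    exact Cardinal.lift_lt.2 hθ
  have := uf_iInter hUf hUc haleph _ hfib hcard hA
  obtain ⟨β, hβA, hβI⟩ := uf_nonempty hUf this
  rw [Set.mem_iInter] at hβI
  have hvβ := hv β hβA
  have := hβI ⟨v β, hvβ⟩
  exact this.2 ⟨hβA, rfl⟩

theorem uf_unbounded (hUf : IsUltrafilterOn U κ.ord) (hUc : IsKappaComplete U κ)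
    (haleph : ℵ₀ < κ) (hUn : IsNonprincipal U) {A : Set Ordinal.{0}} (hA : A ∈ U)
    {γ : Ordinal.{0}} (hγ : γ < κ.ord) : ∃ β ∈ A, γ ≤ β := by
  by_contra hcon
  push_neg at hcon
  obtain ⟨γ₀, hγ₀lt, hγ₀⟩ := uf_partition hUf hUc haleph hA γ (Cardinal.lt_ord.1 hγ)
    (fun β => β) hcon
  have hsub : {β ∈ A | β = γ₀} ⊆ {γ₀} := fun β hβ => hβ.2
  have hγ₀κ : γ₀ < κ.ord := by
    obtain ⟨β₀, hβ₀⟩ := uf_nonempty hUf hγ₀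
    have := hUf.1 _ hA hβ₀.1
    rwa [hβ₀.2] at this
  refine hUn γ₀ (uf_mono hUf hγ₀ hsub ?_)
  intro β hβ
  rw [Set.mem_singleton_iff] at hβ
  subst hβ
  exact hγ₀κ

theorem uf_cobounded (hUf : IsUltrafilterOn U κ.ord) (hUc : IsKappaComplete U κ)
    (haleph : ℵ₀ < κ) (hUn : IsNonprincipal U) {γ : Ordinal.{0}} (hγ : γ < κ.ord) :
    Set.Iio κ.ord \ Set.Iio γ ∈ U := by
  refine uf_compl hUf (fun β hβ => lt_trans hβ hγ) ?_
  intro hmem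
  obtain ⟨β, hβ, hγβ⟩ := uf_unbounded hUf hUc haleph hUn hmem hγ
  exact absurd hβ (not_lt.2 hγβ)

end Sec2
section Sec3

variable {κ : Cardinal.{0}}

/-- a measurable cardinal is a limit cardinal -/
theorem succ_lt_of_meas {U : Set (Set Ordinal.{0})} (hUf : IsUltrafilterOn U κ.ord)
    (hUc : IsKappaComplete U κ) (hUn : IsNonprincipal U) (haleph : ℵ₀ < κ)
    {μ : Cardinal.{0}} (hμ : μ < κ) : Order.succ μ < κ := by
  by_contra hcon
  have hκ2 : κ ≤ 2 ^ μ := by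
    have h1 : κ ≤ Order.succ μ := not_lt.1 hcon
    exact h1.trans (Order.succ_le_of_lt (Cardinal.cantor μ))
  -- injection from Iio κ.ord into sets of Iio μ.ord
  have h2 : Cardinal.mk ↥(Set.Iio κ.ord) ≤ Cardinal.mk (Set ↥(Set.Iio μ.ord)) := by
    rw [Ordinal.mk_Iio_ordinal, Cardinal.mk_set, Ordinal.mk_Iio_ordinal,
      Cardinal.card_ord, Cardinal.card_ord, ← Cardinal.lift_two.{1,0}, ← Cardinal.lift_power]
    exact Cardinal.lift_le.2 hκ2
  obtain ⟨g⟩ := Cardinal.le_def _ _ |>.1 h2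
  set E : ↥(Set.Iio μ.ord) → Set Ordinal.{0} :=
    fun ξ => {β | ∃ h : β < κ.ord, ξ ∈ g ⟨β, h⟩} with hE
  have hEsub : ∀ ξ, E ξ ⊆ Set.Iio κ.ord := fun ξ β hβ => hβ.1
  set side : ↥(Set.Iio μ.ord) → Set Ordinal.{0} :=
    fun ξ => if E ξ ∈ U then E ξ else Set.Iio κ.ord \ E ξ with hside
  have hsideU : ∀ ξ, side ξ ∈ U := by
    intro ξ
    rw [hside]
    dsimp only
    split
    · assumption
    · exact uf_compl hUf (hEsub ξ) (by assumption)
  have hcard : Cardinal.mk ↥(Set.Iio μ.ord) < Cardinal.lift.{1} κ := by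
    rw [Ordinal.mk_Iio_ordinal, Cardinal.card_ord]
    exact Cardinal.lift_lt.2 hμ
  have hW : Set.Iio κ.ord ∩ ⋂ ξ, side ξ ∈ U := uf_iInter hUf hUc haleph _ hsideU hcard hUf.2.1
  obtain ⟨β₁, hβ₁⟩ := uf_nonempty hUf hW
  have hkey : ∀ β₂ ∈ Set.Iio κ.ord ∩ ⋂ ξ, side ξ, β₂ = β₁ := by
    intro β₂ hβ₂
    have hg : g ⟨β₂, hβ₂.1⟩ = g ⟨β₁, hβ₁.1⟩ := by
      ext ξ
      have hmem : ∀ β (hβ : β ∈ Set.Iio κ.ord ∩ ⋂ ξ', side ξ'),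
          (ξ ∈ g ⟨β, hβ.1⟩ ↔ E ξ ∈ U) := by
        intro β hβ
        have hβs : β ∈ side ξ := Set.mem_iInter.1 hβ.2 ξ
        rw [hside] at hβs
        dsimp only at hβs
        constructor
        · intro hξ
          by_contra hEU
          rw [if_neg hEU] at hβs
          exact hβs.2 ⟨hβ.1, hξ⟩
        · intro hEU
          rw [if_pos hEU] at hβs
          obtain ⟨h', hξ⟩ := hβs
          exact hξ
      rw [hmem β₂ hβ₂, hmem β₁ hβ₁]
    have := g.injective hg
    exact congrArg Subtype.val this
  have hsing : ({β₁} : Set Ordinal.{0}) ∈ U := by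
    refine uf_mono hUf hW (fun β hβ => hkey β hβ) ?_
    intro β hβ
    rw [Set.mem_singleton_iff] at hβ
    subst hβ
    exact hβ₁.1
  exact hUn β₁ hsing

end Sec3
section Sec4

variable {κ : Cardinal.{0}}

theorem exists_normal_ultrafilter (hκ : IsMeasurableCard κ) :
    ∃ D : Set (Set Ordinal.{0}), IsNormalUltrafilterOn D κ := by
  obtain ⟨haleph, U, hUf, hUc, hUn⟩ := hκ
  have hκ0 : (0 : Ordinal.{0}) < κ.ord := by
    rw [Cardinal.lt_ord, Ordinal.card_zero]
    exact (Cardinal.aleph0_pos).trans haleph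
  -- the family of "nonconstant mod U" functions bounded by κ.ord
  set F : Set (Ordinal.{0} → Ordinal.{0}) :=
    {f | (∀ β, f β < κ.ord) ∧ ∀ γ, {β | β < κ.ord ∧ f β = γ} ∉ U} with hF
  set prec : (Ordinal.{0} → Ordinal.{0}) → (Ordinal.{0} → Ordinal.{0}) → Prop :=
    fun g f => {β | β < κ.ord ∧ g β < f β} ∈ U with hprec
  have hidF : (fun β => if β < κ.ord then β else 0) ∈ F := by
    constructor
    · intro β
      dsimp only
      split
      · assumption
      · exact hκ0
    · intro γ hγ
      have hsub : {β | β < κ.ord ∧ (if β < κ.ord then β else 0) = γ} ⊆ {γ} := by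
        intro β hβ
        obtain ⟨h1, h2⟩ := hβ
        rw [if_pos h1] at h2
        exact h2
      obtain ⟨β₀, hβ₀⟩ := uf_nonempty hUf hγ
      have hγκ : γ < κ.ord := by
        have := hβ₀.1
        rw [hsub hβ₀] at this
        exact this
      refine hUn γ (uf_mono hUf hγ hsub ?_)
      intro β hβ
      rw [Set.mem_singleton_iff] at hβ
      subst hβ
      exact hγκ
  -- there is a `prec`-minimal element of F
  have hmin : ∃ f₀ ∈ F, ∀ g ∈ F, ¬ prec g f₀ := by
    by_contra hcon
    push_neg at hcon
    have hstep : ∀ f : ↥F, ∃ g : ↥F, prec ↑g ↑f := by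
      intro ⟨f, hf⟩
      obtain ⟨g, hg, hgf⟩ := hcon f hf
      exact ⟨⟨g, hg⟩, hgf⟩
    choose φ hφ using hstep
    set seq : ℕ → ↥F := fun n => Nat.rec ⟨_, hidF⟩ (fun _ f => φ f) n with hseq
    have hseqS : ∀ n : ℕ, {β | β < κ.ord ∧ (↑(seq (n+1)) : Ordinal.{0} → Ordinal.{0}) β < (↑(seq n) : Ordinal.{0} → Ordinal.{0}) β} ∈ U := fun n => hφ (seq n)
    have hcard : Cardinal.mk (ULift.{1} ℕ) < Cardinal.lift.{1} κ := by
      rw [Cardinal.mk_uLift, Cardinal.mk_nat]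
      exact Cardinal.lift_lt.2 haleph
    have hW := uf_iInter hUf hUc haleph
      (fun n : ULift.{1} ℕ => {β | β < κ.ord ∧ (↑(seq (n.down+1)) : Ordinal.{0} → Ordinal.{0}) β < (↑(seq n.down) : Ordinal.{0} → Ordinal.{0}) β})
      (fun n => hseqS n.down) hcard hUf.2.1
    obtain ⟨β, hβ⟩ := uf_nonempty hUf hW
    have hdesc : ∀ n : ℕ, (↑(seq (n+1)) : Ordinal.{0} → Ordinal.{0}) β < (↑(seq n) : Ordinal.{0} → Ordinal.{0}) β := by
      intro n
      have := Set.mem_iInter.1 hβ.2 ⟨n⟩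
      exact this.2
    set vals : Set Ordinal.{0} := Set.range (fun n : ℕ => (↑(seq n) : Ordinal.{0} → Ordinal.{0}) β) with hvals
    have hne : vals.Nonempty := ⟨_, Set.mem_range_self 0⟩
    obtain ⟨N, hN⟩ := Ordinal.lt_wf.min_mem vals hne
    exact Ordinal.lt_wf.not_lt_min vals (Set.mem_range_self (N+1)) (hN ▸ hdesc N)
  obtain ⟨f₀, hf₀F, hf₀min⟩ := hmin
  have hf₀lt : ∀ β, f₀ β < κ.ord := hf₀F.1
  -- the derived normal filter
  set D : Set (Set Ordinal.{0}) :=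
    {A | A ⊆ Set.Iio κ.ord ∧ {β | β < κ.ord ∧ f₀ β ∈ A} ∈ U} with hD
  have hpre_sub : ∀ A : Set Ordinal.{0}, {β | β < κ.ord ∧ f₀ β ∈ A} ⊆ Set.Iio κ.ord :=
    fun A β hβ => hβ.1
  refine ⟨D, ⟨?_, ?_, ?_, ?_, ?_, ?_⟩, ?_, ?_, ?_⟩
  · -- subsets of Iio
    exact fun A hA => hA.1
  · -- Iio κ.ord ∈ D
    refine ⟨subset_rfl, ?_⟩
    have : {β | β < κ.ord ∧ f₀ β ∈ Set.Iio κ.ord} = Set.Iio κ.ord := by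
      ext β
      exact ⟨fun h => h.1, fun h => ⟨h, hf₀lt β⟩⟩
    rw [this]
    exact hUf.2.1
  · -- empty not in D
    intro hmem
    have : {β | β < κ.ord ∧ f₀ β ∈ (∅ : Set Ordinal.{0})} = ∅ := by
      ext β
      simp
    have h2 := hmem.2
    rw [this] at h2
    exact hUf.2.2.1 h2
  · -- upward closed
    intro A hA B hAB hB
    refine ⟨hB, ?_⟩
    refine uf_mono hUf hA.2 ?_ (hpre_sub B)
    intro β hβ
    exact ⟨hβ.1, hAB hβ.2⟩
  · -- intersections
    intro A hA B hB
    refine ⟨fun β hβ => hA.1 hβ.1, ?_⟩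
    have : {β | β < κ.ord ∧ f₀ β ∈ A ∩ B} =
        {β | β < κ.ord ∧ f₀ β ∈ A} ∩ {β | β < κ.ord ∧ f₀ β ∈ B} := by
      ext β
      constructor
      · rintro ⟨h1, h2, h3⟩
        exact ⟨⟨h1, h2⟩, ⟨h1, h3⟩⟩
      · rintro ⟨⟨h1, h2⟩, ⟨_, h3⟩⟩
        exact ⟨h1, h2, h3⟩
    rw [this]
    exact uf_inter hUf hA.2 hB.2
  · -- dichotomy
    intro A hA
    by_cases hmem : {β | β < κ.ord ∧ f₀ β ∈ A} ∈ U
    · exact Or.inl ⟨hA, hmem⟩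
    · refine Or.inr ⟨Set.diff_subset, ?_⟩
      refine uf_mono hUf (uf_compl hUf (hpre_sub A) hmem) ?_ (hpre_sub _)
      intro β hβ
      obtain ⟨h1, h2⟩ := hβ
      refine ⟨h1, hf₀lt β, ?_⟩
      intro hfA
      exact h2 ⟨h1, hfA⟩
  · -- κ-complete
    intro s hs hne hcard
    obtain ⟨A₀, hA₀⟩ := hne
    refine ⟨fun β hβ => (hs hA₀).1 (hβ A₀ hA₀), ?_⟩
    have heq2 : {β | β < κ.ord ∧ f₀ β ∈ ⋂₀ s} =
        Set.Iio κ.ord ∩ ⋂ (A : ↥s), {β | β < κ.ord ∧ f₀ β ∈ (A : Set Ordinal.{0})} := by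
      ext β
      simp only [Set.mem_setOf_eq, Set.mem_inter_iff, Set.mem_iInter, Set.mem_Iio,
        Set.mem_sInter]
      constructor
      · rintro ⟨h1, h2⟩
        exact ⟨h1, fun A => ⟨h1, h2 ↑A A.2⟩⟩
      · rintro ⟨h1, h2⟩
        exact ⟨h1, fun A hA => (h2 ⟨A, hA⟩).2⟩
    rw [heq2]
    exact uf_iInter hUf hUc haleph _ (fun A => (hs A.2).2) hcard hUf.2.1
  · -- nonprincipal
    intro γ hmem
    have hsub : {β | β < κ.ord ∧ f₀ β ∈ ({γ} : Set Ordinal.{0})} = {β | β < κ.ord ∧ f₀ β = γ} := by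
      ext β
      simp [Set.mem_singleton_iff]
    exact hf₀F.2 γ (hsub ▸ hmem.2)
  · -- normal
    intro A hA
    by_contra hcon
    have hΔsub : {β' | β' < κ.ord ∧ ∀ γ < β', β' ∈ A γ} ⊆ Set.Iio κ.ord := fun β hβ => hβ.1
    have hpreΔ : {β | β < κ.ord ∧ f₀ β ∈ {β' | β' < κ.ord ∧ ∀ γ < β', β' ∈ A γ}} ∉ U := by
      intro hmem
      exact hcon ⟨hΔsub, hmem⟩
    set Q : Set Ordinal.{0} := Set.Iio κ.ord \ {β | β < κ.ord ∧ f₀ β ∈ {β' | β' < κ.ord ∧ ∀ γ < β', β' ∈ A γ}} with hQ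
    have hQU : Q ∈ U := uf_compl hUf (hpre_sub _) hpreΔ
    have hQprop : ∀ β ∈ Q, ∃ γ < f₀ β, f₀ β ∉ A γ := by
      intro β hβ
      obtain ⟨h1, h2⟩ := hβ
      by_contra hc
      push_neg at hc
      exact h2 ⟨h1, hf₀lt β, hc⟩
    set h : Ordinal.{0} → Ordinal.{0} := fun β =>
      if H : ∃ γ < f₀ β, f₀ β ∉ A γ then sInf {γ | γ < f₀ β ∧ f₀ β ∉ A γ} else f₀ β with hh
    have hinf : ∀ β, (∃ γ < f₀ β, f₀ β ∉ A γ) →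
        h β < f₀ β ∧ f₀ β ∉ A (h β) := by
      intro β H
      obtain ⟨γ, hγ1, hγ2⟩ := H
      have hne : {γ | γ < f₀ β ∧ f₀ β ∉ A γ}.Nonempty := ⟨γ, hγ1, hγ2⟩
      have hmem := csInf_mem hne
      rw [hh]
      dsimp only
      rw [dif_pos ⟨γ, hγ1, hγ2⟩]
      exact hmem
    have hhle : ∀ β, h β ≤ f₀ β := by
      intro β
      by_cases H : ∃ γ < f₀ β, f₀ β ∉ A γ
      · exact (hinf β H).1.le
      · rw [hh]
        dsimp only
        rw [dif_neg H]
    have hhF : h ∈ F := by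
      constructor
      · exact fun β => lt_of_le_of_lt (hhle β) (hf₀lt β)
      · intro γ₀ hfib
        have hR : {β | β < κ.ord ∧ h β = γ₀} ∩ Q ∈ U := uf_inter hUf hfib hQU
        have hγ₀prop : ∀ β ∈ {β | β < κ.ord ∧ h β = γ₀} ∩ Q,
            γ₀ < f₀ β ∧ f₀ β ∉ A γ₀ := by
          intro β hβ
          have := hinf β (hQprop β hβ.2)
          rw [hβ.1.2] at this
          exact this
        obtain ⟨β₀, hβ₀⟩ := uf_nonempty hUf hR
        have hγ₀κ : γ₀ < κ.ord := lt_trans (hγ₀prop β₀ hβ₀).1 (hf₀lt β₀)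
        have hAγ₀ : A γ₀ ∈ D := hA γ₀ hγ₀κ
        have : ({β | β < κ.ord ∧ h β = γ₀} ∩ Q) ∩ {β | β < κ.ord ∧ f₀ β ∈ A γ₀} ∈ U :=
          uf_inter hUf hR hAγ₀.2
        obtain ⟨β₁, hβ₁⟩ := uf_nonempty hUf this
        exact (hγ₀prop β₁ hβ₁.1).2 hβ₁.2.2
    refine hf₀min h hhF ?_
    refine uf_mono hUf hQU ?_ (fun β hβ => hβ.1)
    intro β hβ
    exact ⟨hβ.1, (hinf β (hQprop β hβ)).1⟩

end Sec4
section Sec5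

variable {κ : Cardinal.{0}} {D : Set (Set Ordinal.{0})}

theorem fodor (haleph : ℵ₀ < κ) (hD : IsNormalUltrafilterOn D κ)
    {A : Set Ordinal.{0}} (hA : A ∈ D) (f : Ordinal.{0} → Ordinal.{0})
    (hf : ∀ β ∈ A, f β < β) : ∃ γ, {β ∈ A | f β = γ} ∈ D := by
  obtain ⟨hDf, hDc, hDn, hDnorm⟩ := hD
  by_contra hcon
  push_neg at hcon
  have hAsub : A ⊆ Set.Iio κ.ord := hDf.1 A hA
  have hBγ : ∀ γ, γ < κ.ord → Set.Iio κ.ord \ {β ∈ A | f β = γ} ∈ D := by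
    intro γ _
    exact uf_compl hDf (fun β hβ => hAsub hβ.1) (hcon γ)
  have hΔ := hDnorm (fun γ => Set.Iio κ.ord \ {β ∈ A | f β = γ}) hBγ
  have := uf_inter hDf hΔ hA
  obtain ⟨β, hβΔ, hβA⟩ := uf_nonempty hDf this
  have hfβ := hf β hβA
  have := hβΔ.2 (f β) hfβ
  exact this.2 ⟨hβA, rfl⟩

theorem pressNode (haleph : ℵ₀ < κ) (hD : IsNormalUltrafilterOn D κ)
    {A : Set Ordinal.{0}} (hA : A ∈ D) (p : Ordinal.{0} → SeqNode κ) (γ : Ordinal.{0})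
    (hlen : ∀ β ∈ A, (p β).len = γ) (hval : ∀ β ∈ A, ∀ δ, (p β).val δ < β) :
    ∃ q : SeqNode κ, {β ∈ A | p β = q} ∈ D := by
  obtain ⟨hDf, hDc, hDn, hDnorm⟩ := hD
  have hAsub : A ⊆ Set.Iio κ.ord := hDf.1 A hA
  obtain ⟨β₀', hβ₀'⟩ := uf_nonempty hDf hA
  have hγκ : γ < κ.ord := hlen β₀' hβ₀' ▸ (p β₀').len_lt
  have hchoice : ∀ δ : ↥(Set.Iio γ), ∃ cδ, {β ∈ A | (p β).val ↑δ = cδ} ∈ D := by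
    intro δ
    exact fodor haleph ⟨hDf, hDc, hDn, hDnorm⟩ hA (fun β => (p β).val ↑δ)
      (fun β hβ => hval β hβ ↑δ)
  choose cv hcv using hchoice
  have hcard : Cardinal.mk ↥(Set.Iio γ) < Cardinal.lift.{1} κ := by
    rw [Ordinal.mk_Iio_ordinal]
    exact Cardinal.lift_lt.2 (Cardinal.lt_ord.1 hγκ)
  have hW : A ∩ ⋂ δ : ↥(Set.Iio γ), {β ∈ A | (p β).val ↑δ = cv δ} ∈ D :=
    uf_iInter hDf hDc haleph _ hcv hcard hA
  obtain ⟨β₀, hβ₀⟩ := uf_nonempty hDf hW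
  refine ⟨p β₀, ?_⟩
  have hsub : A ∩ ⋂ δ : ↥(Set.Iio γ), {β ∈ A | (p β).val ↑δ = cv δ} ⊆ {β ∈ A | p β = p β₀} := by
    intro β hβ
    refine ⟨hβ.1, SeqNode.ext' ?_ ?_⟩
    · rw [hlen β hβ.1, hlen β₀ hβ₀.1]
    · intro δ
      by_cases hδ : δ < γ
      · have h1 := (Set.mem_iInter.1 hβ.2 ⟨δ, hδ⟩).2
        have h2 := (Set.mem_iInter.1 hβ₀.2 ⟨δ, hδ⟩).2
        rw [h1, h2]
      · rw [(p β).val_eq_zero δ (by rw [hlen β hβ.1]; exact not_lt.1 hδ),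
          (p β₀).val_eq_zero δ (by rw [hlen β₀ hβ₀.1]; exact not_lt.1 hδ)]
  exact uf_mono hDf hW hsub (fun β hβ => hAsub hβ.1)

theorem pressNodeVar (haleph : ℵ₀ < κ) (hD : IsNormalUltrafilterOn D κ)
    {A : Set Ordinal.{0}} (hA : A ∈ D) (p : Ordinal.{0} → SeqNode κ)
    (hlen : ∀ β ∈ A, (p β).len < β) (hval : ∀ β ∈ A, ∀ δ, (p β).val δ < β) :
    ∃ q : SeqNode κ, {β ∈ A | p β = q} ∈ D := by
  obtain ⟨γ, hγ⟩ := fodor haleph hD hA (fun β => (p β).len) hlen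
  obtain ⟨q, hq⟩ := pressNode haleph hD hγ p γ (fun β hβ => hβ.2)
    (fun β hβ => hval β hβ.1)
  refine ⟨q, uf_mono hD.1 hq (fun β hβ => ⟨hβ.1.1, hβ.2⟩) ?_⟩
  exact fun β hβ => hD.1.1 A hA hβ.1

theorem club_mem (haleph : ℵ₀ < κ) (hD : IsNormalUltrafilterOn D κ)
    {C : Set Ordinal.{0}} (hC : IsClubIn C κ.ord) : C ∈ D := by
  obtain ⟨hDf, hDc, hDn, hDnorm⟩ := hD
  have hlim : Order.IsSuccLimit κ.ord := Cardinal.isSuccLimit_ord haleph.le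
  by_contra hcon
  have hQ : Set.Iio κ.ord \ C ∈ D := uf_compl hDf hC.1 hcon
  obtain ⟨γ₀, hγ₀C, _⟩ := hC.2.1 0 hlim.pos
  have hγ₀κ : γ₀ < κ.ord := hC.1 hγ₀C
  have hcob : Set.Iio κ.ord \ Set.Iio (γ₀ + 1) ∈ D :=
    uf_cobounded hDf hDc haleph hDn (hlim.succ_lt hγ₀κ)
  set Q' : Set Ordinal.{0} := (Set.Iio κ.ord \ C) ∩ (Set.Iio κ.ord \ Set.Iio (γ₀ + 1)) with hQ'
  have hQ'D : Q' ∈ D := uf_inter hDf hQ hcob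
  have hγ₀lt : ∀ β ∈ Q', γ₀ < β := by
    intro β hβ
    have := hβ.2.2
    rw [Set.mem_Iio, not_lt] at this
    exact lt_of_lt_of_le (lt_add_one γ₀) this
  set f : Ordinal.{0} → Ordinal.{0} := fun β => sSup (C ∩ Set.Iio β) with hf
  have hfprop : ∀ β ∈ Q', f β ∈ C ∧ f β < β := by
    intro β hβ
    have hne : (C ∩ Set.Iio β).Nonempty := ⟨γ₀, hγ₀C, hγ₀lt β hβ⟩
    have hbdd : BddAbove (C ∩ Set.Iio β) := ⟨β, fun x hx => hx.2.le⟩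
    have hle : f β ≤ β := csSup_le hne (fun x hx => hx.2.le)
    have hmem : f β ∈ C := by
      refine hC.2.2 _ (fun x hx => hx.1) hne (lt_of_le_of_lt hle hβ.1.1)
    refine ⟨hmem, ?_⟩
    rcases lt_or_eq_of_le hle with h | h
    · exact h
    · exfalso
      exact hβ.1.2 (h ▸ hmem)
  obtain ⟨γ', hγ'⟩ := fodor haleph ⟨hDf, hDc, hDn, hDnorm⟩ hQ'D f
    (fun β hβ => (hfprop β hβ).2)
  obtain ⟨β₁, hβ₁⟩ := uf_nonempty hDf hγ'
  have hγ'C : γ' ∈ C := hβ₁.2 ▸ (hfprop β₁ hβ₁.1).1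
  have hγ'κ : γ' < κ.ord := hC.1 hγ'C
  obtain ⟨γ'', hγ''C, hγ''ge⟩ := hC.2.1 (γ' + 1) (hlim.succ_lt hγ'κ)
  have hγ''κ : γ'' < κ.ord := hC.1 hγ''C
  obtain ⟨β₂, hβ₂mem, hβ₂ge⟩ := uf_unbounded hDf hDc haleph hDn hγ' (hlim.succ_lt hγ''κ)
  -- β₂ ∈ Q' with f β₂ = γ', but γ'' ∈ C ∩ Iio β₂ and γ'' > γ'
  have hγ''lt : γ'' < β₂ := lt_of_lt_of_le (lt_add_one γ'') hβ₂ge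
  have hle : γ'' ≤ f β₂ := by
    have hbdd : BddAbove (C ∩ Set.Iio β₂) := ⟨β₂, fun x hx => hx.2.le⟩
    exact le_csSup hbdd ⟨hγ''C, hγ''lt⟩
  rw [hβ₂mem.2] at hle
  have : γ' < γ'' := lt_of_lt_of_le (lt_add_one γ') hγ''ge
  exact absurd hle (not_le.2 this)

end Sec5
section Sec6

open SeqNode

variable {κ : Cardinal.{0}}

/-- every branch extends to a maximal branch -/
theorem exists_maximal_branch {T b : Set (SeqNode κ)} (hb : IsBranch T b) :
    ∃ m, b ⊆ m ∧ IsMaximalBranch T m := by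
  obtain ⟨m, hbm, hmax⟩ := zorn_subset_nonempty {x | IsBranch T x ∧ b ⊆ x}
    (fun c hcS hchain hcne => by
      refine ⟨⋃₀ c ∪ b, ⟨⟨?_, ?_⟩, Set.subset_union_right⟩, ?_⟩
      · rintro s (⟨x, hx, hs⟩ | hs)
        · exact (hcS hx).1.1 hs
        · exact hb.1 hs
      · intro s hs t ht
        rcases hs with ⟨x, hx, hs⟩ | hs
        · rcases ht with ⟨y, hy, ht⟩ | ht
          · rcases hchain.total hx hy with hxy | hyx
            · exact (hcS hy).1.2 s (hxy hs) t ht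
            · exact (hcS hx).1.2 s hs t (hyx ht)
          · exact (hcS hx).1.2 s hs t ((hcS hx).2 ht)
        · rcases ht with ⟨y, hy, ht⟩ | ht
          · exact (hcS hy).1.2 s ((hcS hy).2 hs) t ht
          · exact hb.2 s hs t ht
      · intro s hs
        exact (Set.subset_sUnion_of_mem hs).trans Set.subset_union_left)
    b ⟨hb, subset_rfl⟩
  refine ⟨m, hmax.1.2, hmax.1.1, ?_⟩
  intro b' hb' hmb'
  exact subset_antisymm (hmax.2 ⟨hb', hmax.1.2.trans hmb'⟩ hmb') hmb'

/-- a chain in a regular tree bounded in length by `γ < η` has an extension at level `γ` -/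
theorem chain_extension {η : Ordinal.{0}} {T : Set (SeqNode κ)}
    (hreg : IsRegularTreeIn κ η T) {b : Set (SeqNode κ)} (hbT : b ⊆ T)
    (hchain : ∀ s ∈ b, ∀ t ∈ b, s.Init t ∨ t.Init s) (hne : b.Nonempty)
    {γ : Ordinal.{0}} (hγ : γ < η) (hlen : ∀ t ∈ b, t.len ≤ γ) :
    ∃ u ∈ T, u.len = γ ∧ ∀ t ∈ b, t.Init u := by
  obtain ⟨m, hbm, hmax⟩ := exists_maximal_branch (T := T) (b := b) ⟨hbT, hchain⟩
  obtain ⟨u, hum, hulen⟩ := hreg.2.2.2.2.1 m hmax γ hγ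
  refine ⟨u, hmax.1.1 hum, hulen, ?_⟩
  intro t ht
  rcases hmax.1.2 t (hbm ht) u hum with h | h
  · exact h
  · have : u = t := h.eq_of_len_le (hulen ▸ hlen t ht)
    rw [← this]
    exact Init.rfl' u

theorem node_extension {η : Ordinal.{0}} {T : Set (SeqNode κ)}
    (hreg : IsRegularTreeIn κ η T) {t : SeqNode κ} (ht : t ∈ T)
    {γ : Ordinal.{0}} (hγ : γ < η) (htγ : t.len ≤ γ) :
    ∃ u ∈ T, u.len = γ ∧ t.Init u := by
  obtain ⟨u, huT, hulen, hu⟩ := chain_extension hreg (b := {t})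
    (by rintro s rfl; exact ht)
    (by rintro s rfl t' rfl; exact Or.inl (Init.rfl' _))
    ⟨t, rfl⟩ hγ (by rintro s rfl; exact htγ)
  exact ⟨u, huT, hulen, hu t rfl⟩

end Sec6
section Sec7

open SeqNode

set_option maxHeartbeats 2000000 in
theorem sdhl_reflect (κ : Cardinal.{0}) (haleph : ℵ₀ < κ)
    {D : Set (Set Ordinal.{0})} (hD : IsNormalUltrafilterOn D κ)
    (d : ℕ) (hd : 1 ≤ d) (σ : Cardinal.{0}) (hσκ : σ < κ) (h : SDHL d σ κ)
    {A : Set Ordinal.{0}} (hA : A ∈ D)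
    (hAcard : ∀ β ∈ A, β.card.ord = β) (hAω : ∀ β ∈ A, (ℵ₀ : Cardinal.{0}).ord < β) :
    ∃ β ∈ A, SDHL d σ β.card := by
  obtain ⟨hDf, hDc, hDn, hDnorm⟩ := hD
  have hD' : IsNormalUltrafilterOn D κ := ⟨hDf, hDc, hDn, hDnorm⟩
  have hκlim : Order.IsSuccLimit κ.ord := Cardinal.isSuccLimit_ord haleph.le
  have hAsub : A ⊆ Set.Iio κ.ord := hDf.1 A hA
  have hω0 : (0 : Ordinal.{0}) < (ℵ₀ : Cardinal.{0}).ord := by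
    rw [Cardinal.lt_ord, Ordinal.card_zero]
    exact Cardinal.aleph0_pos
  have hA0 : ∀ β ∈ A, (0 : Ordinal.{0}) < β := fun β hβ => hω0.trans (hAω β hβ)
  have hup : ∀ β, β ∈ A → β.card.ord ≤ κ.ord := by
    intro β hβ
    rw [hAcard β hβ]
    exact (hAsub hβ).le
  by_contra hcon
  push_neg at hcon
  have hch : ∀ β, β ∈ A → ∃ (T : Fin d → Set (SeqNode β.card))
      (c : (Fin d → SeqNode β.card) → Ordinal.{0}),
      (∀ i, IsRegularTree β.card (T i)) ∧ (∀ x ∈ LevelProd T, c x < σ.ord) ∧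
      ∀ X : Fin d → Set (SeqNode β.card),
        ¬((∀ i, X i ⊆ T i) ∧ IsSDMatrix β.card T X ∧ MonoOn c X) := by
    intro β hβ
    have hno := hcon β hβ
    unfold SDHL at hno
    push_neg at hno
    obtain ⟨T, hT, c, hc, hX⟩ := hno
    refine ⟨T, c, hT, hc, ?_⟩
    intro X hX'
    obtain ⟨h1, h2, h3⟩ := hX'
    exact hX X h1 h2 h3
  choose Tc cc hreg hbound hnowin using hch
  -- the lifted counterexample trees
  set S : Ordinal.{0} → Fin d → Set (SeqNode κ) := fun β i =>
    ⋃ (hβ : β ∈ A), (SeqNode.up (hup β hβ)) '' (Tc β hβ i) with hS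
  have hSmem : ∀ β (hβ : β ∈ A) i (x : SeqNode κ),
      x ∈ S β i ↔ ∃ t' ∈ Tc β hβ i, SeqNode.up (hup β hβ) t' = x := by
    intro β hβ i x
    rw [hS]
    simp only [Set.mem_iUnion, Set.mem_image]
    constructor
    · rintro ⟨hβ', t', ht', rfl⟩
      exact ⟨t', ht', rfl⟩
    · rintro ⟨t', ht', rfl⟩
      exact ⟨hβ, t', ht', rfl⟩
  have hupmem : ∀ β (hβ : β ∈ A) i (t' : SeqNode β.card),
      SeqNode.up (hup β hβ) t' ∈ S β i ↔ t' ∈ Tc β hβ i := by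
    intro β hβ i t'
    rw [hSmem β hβ i]
    constructor
    · rintro ⟨s', hs', heq⟩
      rwa [← up_injective (hup β hβ) heq]
    · intro ht'
      exact ⟨t', ht', rfl⟩
  have hβ_pos : ∀ β, β ∈ A → (0:Ordinal.{0}) < β.card.ord := by
    intro β hβ
    rw [hAcard β hβ]
    exact hA0 β hβ
  have hSbound : ∀ β (hβ : β ∈ A) i x, x ∈ S β i →
      x.len < β ∧ ∀ δ, x.val δ < β := by
    intro β hβ i x hx
    obtain ⟨t', ht', rfl⟩ := (hSmem β hβ i x).1 hx
    have hlen : (SeqNode.up (hup β hβ) t').len < β :=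
      lt_of_lt_of_le t'.len_lt (hAcard β hβ).le
    refine ⟨hlen, ?_⟩
    intro δ
    by_cases hδ : δ < t'.len
    · exact lt_of_lt_of_le (t'.val_lt δ hδ) (hAcard β hβ).le
    · rw [up_val, t'.val_eq_zero δ (not_lt.1 hδ)]
      exact hA0 β hβ
  -- being in `S β i` is closed under initial segments
  have hStree : ∀ β (hβ : β ∈ A) i, ∀ x ∈ S β i, ∀ s : SeqNode κ, s.Init x → s ∈ S β i := by
    intro β hβ i x hx s hsx
    obtain ⟨t', ht', rfl⟩ := (hSmem β hβ i x).1 hx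
    have h1 : s.len < β.card.ord := lt_of_le_of_lt (hsx.1.trans_eq (up_len _ t')) t'.len_lt
    have h2 : ∀ δ, s.val δ < β.card.ord := by
      intro δ
      by_cases hδ : δ < s.len
      · rw [hsx.2 δ hδ, up_val]
        by_cases hδ2 : δ < t'.len
        · exact t'.val_lt δ hδ2
        · rw [t'.val_eq_zero δ (not_lt.1 hδ2)]
          exact hβ_pos β hβ
      · rw [s.val_eq_zero δ (not_lt.1 hδ)]
        exact hβ_pos β hβ
    have hdown : (SeqNode.down s h1 h2 : SeqNode β.card).Init t' :=
      ⟨hsx.1.trans_eq (up_len _ t'), fun δ hδ => hsx.2 δ hδ⟩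
    have hmem : SeqNode.down s h1 h2 ∈ Tc β hβ i :=
      (hreg β hβ i).1 t' ht' _ hdown
    have := (hupmem β hβ i _).2 hmem
    rwa [up_down] at this
  -- nonempty levels
  have hSlevel : ∀ β (hβ : β ∈ A) i γ, γ < β → ∃ x ∈ S β i, x.len = γ := by
    intro β hβ i γ hγ
    obtain ⟨t', ht'⟩ := (hreg β hβ i).2.2.1 γ (by rw [hAcard β hβ]; exact hγ)
    exact ⟨SeqNode.up (hup β hβ) t', (hupmem β hβ i t').2 ht'.1, ht'.2⟩
  -- extension property
  have hSext : ∀ β (hβ : β ∈ A) i, ∀ x ∈ S β i, ∀ γ, x.len ≤ γ → γ < β →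
      ∃ u ∈ S β i, u.len = γ ∧ x.Init u := by
    intro β hβ i x hx γ hxγ hγ
    obtain ⟨t', ht', rfl⟩ := (hSmem β hβ i x).1 hx
    obtain ⟨u', hu', hu'len, hu'init⟩ := node_extension (hreg β hβ i) ht'
      (γ := γ) (by rw [hAcard β hβ]; exact hγ) hxγ
    refine ⟨SeqNode.up (hup β hβ) u', (hupmem β hβ i u').2 hu', hu'len, ?_⟩
    exact (up_init_iff (hup β hβ)).2 hu'init
  -- chain extension property
  have hSchain : ∀ β (hβ : β ∈ A) i, ∀ b ⊆ S β i,
      (∀ s ∈ b, ∀ t ∈ b, SeqNode.Init s t ∨ SeqNode.Init t s) → b.Nonempty →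
      ∀ γ, γ < β → (∀ t ∈ b, t.len ≤ γ) →
      ∃ u ∈ S β i, u.len = γ ∧ ∀ t ∈ b, t.Init u := by
    intro β hβ i b hbS hbchain hbne γ hγ hblen
    set b' : Set (SeqNode β.card) := {t' | SeqNode.up (hup β hβ) t' ∈ b} with hb'
    have hb'T : b' ⊆ Tc β hβ i := by
      intro t' ht'
      exact (hupmem β hβ i t').1 (hbS ht')
    have hb'chain : ∀ s ∈ b', ∀ t ∈ b', SeqNode.Init s t ∨ SeqNode.Init t s := by
      intro s hs t ht
      exact hbchain _ hs _ ht
    have hb'ne : b'.Nonempty := by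
      obtain ⟨x, hx⟩ := hbne
      obtain ⟨t', ht', rfl⟩ := (hSmem β hβ i x).1 (hbS hx)
      exact ⟨t', hx⟩
    obtain ⟨u', hu', hu'len, hu'init⟩ := chain_extension (hreg β hβ i) hb'T hb'chain hb'ne
      (γ := γ) (by rw [hAcard β hβ]; exact hγ) (fun t' ht' => hblen _ ht')
    refine ⟨SeqNode.up (hup β hβ) u', (hupmem β hβ i u').2 hu', hu'len, ?_⟩
    intro t ht
    obtain ⟨t', ht', rfl⟩ := (hSmem β hβ i t).1 (hbS ht)
    exact (up_init_iff (hup β hβ)).2 (hu'init t' ht)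
  -- perfectness
  have hSperf : ∀ β (hβ : β ∈ A) i, ∀ x ∈ S β i, ∃ s ∈ S β i, ∃ u ∈ S β i,
      x.Init s ∧ x.Init u ∧ ¬s.Init u ∧ ¬u.Init s := by
    intro β hβ i x hx
    obtain ⟨t', ht', rfl⟩ := (hSmem β hβ i x).1 hx
    obtain ⟨s', hs', u', hu', h1, h2, h3, h4⟩ := (hreg β hβ i).2.2.2.2.2 t' ht'
    exact ⟨SeqNode.up (hup β hβ) s', (hupmem β hβ i s').2 hs',
      SeqNode.up (hup β hβ) u', (hupmem β hβ i u').2 hu',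
      (up_init_iff _).2 h1, (up_init_iff _).2 h2,
      fun hc => h3 ((up_init_iff _).1 hc), fun hc => h4 ((up_init_iff _).1 hc)⟩
  -- level sizes
  have hSsize : ∀ β (hβ : β ∈ A) i γ, γ < β →
      Cardinal.mk ↥(SeqLevel (S β i) γ) < Cardinal.lift.{1} β.card := by
    intro β hβ i γ hγ
    have him : SeqLevel (S β i) γ = (SeqNode.up (hup β hβ)) '' (SeqLevel (Tc β hβ i) γ) := by
      ext x
      constructor
      · rintro ⟨hx, hxlen⟩
        obtain ⟨t', ht', rfl⟩ := (hSmem β hβ i x).1 hx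
        exact ⟨t', ⟨ht', hxlen⟩, rfl⟩
      · rintro ⟨t', ⟨ht', hlen⟩, rfl⟩
        exact ⟨(hupmem β hβ i t').2 ht', hlen⟩
    rw [him, Cardinal.mk_image_eq (up_injective (hup β hβ))]
    have := (hreg β hβ i).2.2.2.1 γ (by rw [hAcard β hβ]; exact hγ)
    rwa [Cardinal.card_ord] at this
  -- the limit trees
  set Bt : Fin d → SeqNode κ → Set Ordinal.{0} := fun i t => {β ∈ A | t ∈ S β i} with hBt
  set Tl : Fin d → Set (SeqNode κ) := fun i => {t | Bt i t ∈ D} with hTldef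
  have hBtIio : ∀ i t, Bt i t ⊆ Set.Iio κ.ord := fun i t β hβ => hAsub hβ.1
  have hmemTl : ∀ i (t : SeqNode κ), t ∈ Tl i ↔ Bt i t ∈ D := fun i t => Iff.rfl
  have hBtmono : ∀ i (t : SeqNode κ) (W : Set Ordinal.{0}), W ∈ D → W ⊆ Bt i t → t ∈ Tl i := by
    intro i t W hW hsub
    exact (hmemTl i t).2 (uf_mono hDf hW hsub (hBtIio i t))
  have hκpos : (0 : Ordinal.{0}) < κ.ord := hκlim.pos
  have hTl_tree : ∀ i, IsSeqTree (Tl i) := by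
    intro i t ht s hst
    refine hBtmono i s (Bt i t) ((hmemTl i t).1 ht) ?_
    intro β hβ
    exact ⟨hβ.1, hStree β hβ.1 i t hβ.2 s hst⟩
  have hcob : ∀ γ, γ < κ.ord → Set.Iio κ.ord \ Set.Iio (γ + 1) ∈ D := by
    intro γ hγ
    exact uf_cobounded hDf hDc haleph hDn (hκlim.succ_lt hγ)
  have hgt : ∀ γ (β : Ordinal.{0}), β ∈ Set.Iio κ.ord \ Set.Iio (γ + 1) → γ < β := by
    intro γ β hβ
    have := hβ.2
    rw [Set.mem_Iio, not_lt] at this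
    exact lt_of_lt_of_le (lt_add_one γ) this
  -- (3) levels are nonempty
  have hTl_level : ∀ i γ, γ < κ.ord → ∃ q ∈ Tl i, q.len = γ := by
    intro i γ hγ
    set A' : Set Ordinal.{0} := A ∩ (Set.Iio κ.ord \ Set.Iio (γ + 1)) with hA'
    have hA'D : A' ∈ D := uf_inter hDf hA (hcob γ hγ)
    set p : Ordinal.{0} → SeqNode κ := fun β =>
      if hβ' : β ∈ A' then (hSlevel β hβ'.1 i γ (hgt γ β hβ'.2)).choose else nil κ hκpos with hp
    have hpspec : ∀ β (hβ' : β ∈ A'), p β ∈ S β i ∧ (p β).len = γ := by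
      intro β hβ'
      have := (hSlevel β hβ'.1 i γ (hgt γ β hβ'.2)).choose_spec
      rw [hp]
      dsimp only
      rw [dif_pos hβ']
      exact this
    obtain ⟨q, hq⟩ := pressNode haleph hD' hA'D p γ
      (fun β hβ' => (hpspec β hβ').2)
      (fun β hβ' => (hSbound β hβ'.1 i _ (hpspec β hβ').1).2)
    obtain ⟨β₀, hβ₀⟩ := uf_nonempty hDf hq
    refine ⟨q, hBtmono i q _ hq ?_, hβ₀.2 ▸ (hpspec β₀ hβ₀.1).2⟩
    intro β hβ
    exact ⟨hβ.1.1, hβ.2 ▸ (hpspec β hβ.1).1⟩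
  -- extension property upstairs
  have hTl_ext : ∀ i, ∀ t ∈ Tl i, ∀ γ, t.len ≤ γ → γ < κ.ord →
      ∃ s ∈ Tl i, s.len = γ ∧ t.Init s := by
    intro i t ht γ htγ hγ
    set A' : Set Ordinal.{0} := Bt i t ∩ (Set.Iio κ.ord \ Set.Iio (γ + 1)) with hA'
    have hA'D : A' ∈ D := uf_inter hDf ((hmemTl i t).1 ht) (hcob γ hγ)
    set p : Ordinal.{0} → SeqNode κ := fun β =>
      if hβ' : β ∈ A' then (hSext β hβ'.1.1 i t hβ'.1.2 γ htγ (hgt γ β hβ'.2)).choose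
      else nil κ hκpos with hp
    have hpspec : ∀ β (hβ' : β ∈ A'), p β ∈ S β i ∧ (p β).len = γ ∧ t.Init (p β) := by
      intro β hβ'
      have h1 := (hSext β hβ'.1.1 i t hβ'.1.2 γ htγ (hgt γ β hβ'.2)).choose_spec
      rw [hp]
      dsimp only
      rw [dif_pos hβ']
      exact h1
    have hA'A : ∀ β ∈ A', β ∈ A := fun β hβ' => hβ'.1.1
    obtain ⟨q, hq⟩ := pressNode haleph hD' hA'D p γ
      (fun β hβ' => (hpspec β hβ').2.1)
      (fun β hβ' => (hSbound β (hA'A β hβ') i _ (hpspec β hβ').1).2)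
    obtain ⟨β₀, hβ₀⟩ := uf_nonempty hDf hq
    refine ⟨q, hBtmono i q _ hq ?_, hβ₀.2 ▸ (hpspec β₀ hβ₀.1).2.1,
      hβ₀.2 ▸ (hpspec β₀ hβ₀.1).2.2⟩
    intro β hβ
    exact ⟨hA'A β hβ.1, hβ.2 ▸ (hpspec β hβ.1).1⟩
  -- (4) level sizes
  have hTl_size : ∀ i γ, γ < κ.ord →
      Cardinal.mk ↥(SeqLevel (Tl i) γ) < Cardinal.lift.{1} κ := by
    intro i γ hγ
    by_contra hge
    have hge' : Cardinal.lift.{1} κ ≤ Cardinal.mk ↥(SeqLevel (Tl i) γ) := not_lt.1 hge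
    have h1 : Cardinal.mk ↥(Set.Iio κ.ord) ≤ Cardinal.mk ↥(SeqLevel (Tl i) γ) := by
      rw [Ordinal.mk_Iio_ordinal, Cardinal.card_ord]
      exact hge'
    obtain ⟨g⟩ := Cardinal.le_def _ _ |>.1 h1
    set Aset : Ordinal.{0} → Set Ordinal.{0} := fun ξ =>
      if hξ : ξ < κ.ord then Bt i ↑(g ⟨ξ, hξ⟩) else Set.Iio κ.ord with hAset
    have hAsetD : ∀ ξ, ξ < κ.ord → Aset ξ ∈ D := by
      intro ξ hξ
      rw [hAset]
      dsimp only
      rw [dif_pos hξ]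
      exact (hmemTl i _).1 ((g ⟨ξ, hξ⟩).2.1)
    have hΔ := hDnorm Aset hAsetD
    have hW : ({β | β < κ.ord ∧ ∀ ξ < β, β ∈ Aset ξ} ∩
        (A ∩ (Set.Iio κ.ord \ Set.Iio (γ + 1)))) ∈ D :=
      uf_inter hDf hΔ (uf_inter hDf hA (hcob γ hγ))
    obtain ⟨β₂, hβ₂⟩ := uf_nonempty hDf hW
    have hβ₂A : β₂ ∈ A := hβ₂.2.1
    have hβ₂γ : γ < β₂ := hgt γ β₂ hβ₂.2.2
    have hβ₂κ : β₂ < κ.ord := hβ₂.1.1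
    -- map Iio β₂ into the level of the small tree
    have hmap : ∀ ξ : ↥(Set.Iio β₂), ∃ t' : SeqNode β₂.card,
        t' ∈ Tc β₂ hβ₂A i ∧ SeqNode.up (hup β₂ hβ₂A) t' = ↑(g ⟨↑ξ, lt_trans ξ.2 hβ₂κ⟩) := by
      intro ξ
      have hmem : β₂ ∈ Aset ↑ξ := hβ₂.1.2 ↑ξ ξ.2
      rw [hAset] at hmem
      dsimp only at hmem
      rw [dif_pos (lt_trans ξ.2 hβ₂κ)] at hmem
      have hxS : (↑(g ⟨↑ξ, lt_trans ξ.2 hβ₂κ⟩) : SeqNode κ) ∈ S β₂ i := hmem.2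
      obtain ⟨t', ht', heq⟩ := (hSmem β₂ hβ₂A i _).1 hxS
      exact ⟨t', ht', heq⟩
    choose m hmT hmeq using hmap
    have hmlevel : ∀ ξ, m ξ ∈ SeqLevel (Tc β₂ hβ₂A i) γ := by
      intro ξ
      refine ⟨hmT ξ, ?_⟩
      have := (g ⟨↑ξ, lt_trans ξ.2 hβ₂κ⟩).2.2
      have h2 : (SeqNode.up (hup β₂ hβ₂A) (m ξ)).len = γ := by rw [hmeq ξ]; exact this
      rwa [up_len] at h2
    set m' : ↥(Set.Iio β₂) → ↥(SeqLevel (Tc β₂ hβ₂A i) γ) := fun ξ => ⟨m ξ, hmlevel ξ⟩ with hm'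
    have hm'inj : Function.Injective m' := by
      intro ξ₁ ξ₂ heq
      have h3 : m ξ₁ = m ξ₂ := Subtype.ext_iff.1 heq
      have h4 : (g ⟨↑ξ₁, lt_trans ξ₁.2 hβ₂κ⟩ : ↥(SeqLevel (Tl i) γ)) =
          g ⟨↑ξ₂, lt_trans ξ₂.2 hβ₂κ⟩ := by
        refine Subtype.ext ?_
        rw [← hmeq ξ₁, ← hmeq ξ₂, h3]
      have h5 := g.injective h4
      have h6 : (↑ξ₁ : Ordinal.{0}) = ↑ξ₂ := by injection h5
      exact Subtype.ext h6
    have h6 : Cardinal.lift.{1} β₂.card ≤ Cardinal.mk ↥(SeqLevel (Tc β₂ hβ₂A i) γ) := by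
      have := Cardinal.mk_le_of_injective hm'inj
      rwa [Ordinal.mk_Iio_ordinal] at this
    have h7 := (hreg β₂ hβ₂A i).2.2.2.1 γ (by rw [hAcard β₂ hβ₂A]; exact hβ₂γ)
    rw [Cardinal.card_ord] at h7
    exact absurd h6 (not_le.2 h7)
  -- (6) perfectness
  have hTl_perf : ∀ i, IsPerfect (Tl i) := by
    intro i t ht
    have hA1 : Bt i t ∈ D := (hmemTl i t).1 ht
    set p1 : Ordinal.{0} → SeqNode κ := fun β =>
      if hβ' : β ∈ Bt i t then (hSperf β hβ'.1 i t hβ'.2).choose else nil κ hκpos with hp1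
    set p2 : Ordinal.{0} → SeqNode κ := fun β =>
      if hβ' : β ∈ Bt i t then (hSperf β hβ'.1 i t hβ'.2).choose_spec.2.choose
      else nil κ hκpos with hp2
    have hpspec : ∀ β (hβ' : β ∈ Bt i t), p1 β ∈ S β i ∧ p2 β ∈ S β i ∧
        t.Init (p1 β) ∧ t.Init (p2 β) ∧ ¬(p1 β).Init (p2 β) ∧ ¬(p2 β).Init (p1 β) := by
      intro β hβ'
      have h1 := (hSperf β hβ'.1 i t hβ'.2).choose_spec
      have h2 := h1.2.choose_spec
      rw [hp1, hp2]
      dsimp only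
      rw [dif_pos hβ', dif_pos hβ']
      exact ⟨h1.1, h2.1, h2.2.1, h2.2.2.1, h2.2.2.2.1, h2.2.2.2.2⟩
    obtain ⟨s₁, hs₁⟩ := pressNodeVar haleph hD' hA1 p1
      (fun β hβ' => (hSbound β hβ'.1 i _ (hpspec β hβ').1).1)
      (fun β hβ' => (hSbound β hβ'.1 i _ (hpspec β hβ').1).2)
    have hs₁sub : {β ∈ Bt i t | p1 β = s₁} ⊆ Set.Iio κ.ord := fun β hβ => hAsub hβ.1.1
    obtain ⟨s₂, hs₂⟩ := pressNodeVar haleph hD' hs₁ (fun β => p2 β)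
      (fun β hβ' => (hSbound β hβ'.1.1 i _ (hpspec β hβ'.1).2.1).1)
      (fun β hβ' => (hSbound β hβ'.1.1 i _ (hpspec β hβ'.1).2.1).2)
    obtain ⟨β₀, hβ₀⟩ := uf_nonempty hDf hs₂
    have hβ₀Bt : β₀ ∈ Bt i t := hβ₀.1.1
    have hspec₀ := hpspec β₀ hβ₀Bt
    have he1 : p1 β₀ = s₁ := hβ₀.1.2
    have he2 : p2 β₀ = s₂ := hβ₀.2
    refine ⟨s₁, ?_, s₂, ?_, he1 ▸ hspec₀.2.2.1, he2 ▸ hspec₀.2.2.2.1,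
      he1 ▸ he2 ▸ hspec₀.2.2.2.2.1, he1 ▸ he2 ▸ hspec₀.2.2.2.2.2⟩
    · refine hBtmono i s₁ _ hs₁ ?_
      intro β hβ
      exact ⟨hβ.1.1, hβ.2 ▸ (hpspec β hβ.1).1⟩
    · refine hBtmono i s₂ _ hs₂ ?_
      intro β hβ
      exact ⟨hβ.1.1.1, hβ.2 ▸ (hpspec β hβ.1.1).2.1⟩
  -- (5) maximal branches hit every level
  have hTl_branch : ∀ i b, IsMaximalBranch (Tl i) b → ∀ γ, γ < κ.ord →
      ∃ t ∈ b, t.len = γ := by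
    intro i b hmax γ hγ
    have hbne : b.Nonempty := by
      rcases Set.eq_empty_or_nonempty b with rfl | hne
      · obtain ⟨r, hr, _⟩ := hTl_level i 0 hκpos
        have h1 : IsBranch (Tl i) {r} := by
          constructor
          · intro s hs
            rw [Set.mem_singleton_iff.1 hs]
            exact hr
          · intro s hs t ht
            rw [Set.mem_singleton_iff.1 hs, Set.mem_singleton_iff.1 ht]
            exact Or.inl (Init.rfl' r)
        have h2 := hmax.2 {r} h1 (Set.empty_subset _)
        exact absurd h2 (by simp)
      · exact hne
    have hhit : ∀ γ', (∃ t ∈ b, γ' ≤ t.len) → ∃ t ∈ b, t.len = γ' := by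
      rintro γ' ⟨t, htb, hle⟩
      have hulen : (t.restrict γ').len = γ' := restrict_len_of_le hle
      have huinit : (t.restrict γ').Init t := restrict_init t γ'
      have huTl : t.restrict γ' ∈ Tl i := hTl_tree i t (hmax.1.1 htb) _ huinit
      have hbranch : IsBranch (Tl i) (insert (t.restrict γ') b) := by
        constructor
        · rintro s (rfl | hs)
          · exact huTl
          · exact hmax.1.1 hs
        · rintro s (rfl | hs) t'' (rfl | ht'')
          · exact Or.inl (Init.rfl' _)
          · rcases hmax.1.2 t'' ht'' t htb with h1 | h1
            · exact init_comparable huinit h1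
            · exact Or.inl (huinit.trans' h1)
          · rcases hmax.1.2 s hs t htb with h1 | h1
            · rcases init_comparable huinit h1 with h2 | h2
              · exact Or.inr h2
              · exact Or.inl h2
            · exact Or.inr (huinit.trans' h1)
          · exact hmax.1.2 s hs t'' ht''
      have heqb := hmax.2 _ hbranch (Set.subset_insert _ b)
      exact ⟨t.restrict γ', heqb ▸ Set.mem_insert _ b, hulen⟩
    refine hhit γ ?_
    by_contra hbd
    push_neg at hbd
    have hbd' : ∀ t ∈ b, t.len < γ := fun t ht => hbd t ht
    set lens : Set Ordinal.{0} := SeqNode.len '' b with hlens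
    have hlensne : lens.Nonempty := hbne.image _
    have hlensbd : ∀ x ∈ lens, x ≤ γ := by
      rintro x ⟨t, ht, rfl⟩
      exact (hbd' t ht).le
    set lam0 : Ordinal.{0} := sSup lens with hlam0
    have hlam0γ : lam0 ≤ γ := csSup_le hlensne hlensbd
    have hlam0κ : lam0 < κ.ord := lt_of_le_of_lt hlam0γ hγ
    have hlenle : ∀ t ∈ b, t.len ≤ lam0 := by
      intro t ht
      exact le_csSup ⟨γ, hlensbd⟩ ⟨t, ht, rfl⟩
    by_cases hattain : ∃ t ∈ b, ∀ s ∈ b, s.len ≤ t.len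
    · obtain ⟨t, htb, hmaxlen⟩ := hattain
      obtain ⟨s', hs'Tl, hs'len, hs'init⟩ := hTl_ext i t (hmax.1.1 htb) γ (hbd' t htb).le hγ
      have hbranch : IsBranch (Tl i) (insert s' b) := by
        constructor
        · rintro x (rfl | hx)
          · exact hs'Tl
          · exact hmax.1.1 hx
        · have hkey : ∀ x ∈ b, x.Init s' := by
            intro x hx
            rcases hmax.1.2 x hx t htb with h1 | h1
            · exact h1.trans' hs'init
            · rw [← h1.eq_of_len_le (hmaxlen x hx)]
              exact hs'init
          rintro x (rfl | hx) y (rfl | hy)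
          · exact Or.inl (Init.rfl' _)
          · exact Or.inr (hkey y hy)
          · exact Or.inl (hkey x hx)
          · exact hmax.1.2 x hx y hy
      have heqb := hmax.2 _ hbranch (Set.subset_insert _ b)
      have : s' ∈ b := heqb ▸ Set.mem_insert _ b
      exact absurd (hs'len ▸ hbd' s' this) (lt_irrefl γ)
    · push_neg at hattain
      have hstrict : ∀ t ∈ b, t.len < lam0 := by
        intro t ht
        obtain ⟨s, hs, hlt⟩ := hattain t ht
        exact lt_of_lt_of_le hlt (hlenle s hs)
      have hcof : ∀ δ, δ < lam0 → ∃ t ∈ b, δ < t.len := by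
        intro δ hδ
        obtain ⟨x, hx, hlt⟩ := exists_lt_of_lt_csSup hlensne hδ
        obtain ⟨t, ht, rfl⟩ := hx
        exact ⟨t, ht, hlt⟩
      set uval : Ordinal.{0} → Ordinal.{0} := fun δ =>
        if hex : ∃ t, t ∈ b ∧ δ < t.len then hex.choose.val δ else 0 with huval
      have hucoh : ∀ t ∈ b, ∀ δ, δ < t.len → uval δ = t.val δ := by
        intro t ht δ hδ
        have hex : ∃ t', t' ∈ b ∧ δ < t'.len := ⟨t, ht, hδ⟩
        rw [huval]
        dsimp only
        rw [dif_pos hex]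
        obtain ⟨hmem, hlt⟩ := hex.choose_spec
        rcases hmax.1.2 _ hmem _ ht with h1 | h1
        · exact h1.2 δ hlt
        · exact (h1.2 δ hδ).symm
      have huvlt : ∀ δ, δ < lam0 → uval δ < κ.ord := by
        intro δ hδ
        obtain ⟨t, ht, hlt⟩ := hcof δ hδ
        rw [hucoh t ht δ hlt]
        exact t.val_lt δ hlt
      have huvz : ∀ δ, lam0 ≤ δ → uval δ = 0 := by
        intro δ hδ
        rw [huval]
        dsimp only
        rw [dif_neg]
        rintro ⟨t, ht, hlt⟩
        exact absurd hlt (not_lt.2 ((hlenle t ht).trans hδ))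
      set u : SeqNode κ := ⟨lam0, hlam0κ, uval, fun δ hδ => huvlt δ hδ, fun δ hδ => huvz δ hδ⟩
        with hu
      have huinit : ∀ t ∈ b, t.Init u := by
        intro t ht
        exact ⟨hlenle t ht, fun δ hδ => (hucoh t ht δ hδ).symm⟩
      -- u belongs to the limit tree
      have hbemb : Cardinal.mk ↥b < Cardinal.lift.{1} κ := by
        have hinj : Function.Injective (fun t : ↥b => (⟨(↑t : SeqNode κ).len,
            hstrict ↑t t.prop⟩ : ↥(Set.Iio lam0))) := by
          intro t₁ t₂ heq
          have hlen : (↑t₁ : SeqNode κ).len = (↑t₂ : SeqNode κ).len := by injection heq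
          rcases hmax.1.2 ↑t₁ t₁.prop ↑t₂ t₂.prop with h1 | h1
          · exact Subtype.ext (h1.eq_of_len_le hlen.ge)
          · exact Subtype.ext (h1.eq_of_len_le hlen.le).symm
        have h2 := Cardinal.mk_le_of_injective hinj
        rw [Ordinal.mk_Iio_ordinal] at h2
        exact lt_of_le_of_lt h2 (Cardinal.lift_lt.2 (Cardinal.lt_ord.1 hlam0κ))
      have hWD : (A ∩ (Set.Iio κ.ord \ Set.Iio (lam0 + 1))) ∩ ⋂ (t : ↥b), Bt i ↑t ∈ D :=
        uf_iInter hDf hDc haleph _ (fun t : ↥b => (hmemTl i t.val).1 (hmax.1.1 t.property)) hbemb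
          (uf_inter hDf hA (hcob lam0 hlam0κ))
      have hsub : (A ∩ (Set.Iio κ.ord \ Set.Iio (lam0 + 1))) ∩ ⋂ (t : ↥b), Bt i ↑t ⊆
          Bt i u := by
        intro β hβ
        have hβA : β ∈ A := hβ.1.1
        have hβlam : lam0 < β := hgt lam0 β hβ.1.2
        have hall : ∀ t ∈ b, t ∈ S β i := by
          intro t ht
          exact (Set.mem_iInter.1 hβ.2 ⟨t, ht⟩).2
        obtain ⟨u', hu'S, hu'len, hu'init⟩ := hSchain β hβA i b hall
          (fun s hs t ht => hmax.1.2 s hs t ht) hbne lam0 hβlam hlenle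
        have hueq : u' = u := by
          refine ext' (by rw [hu'len]) ?_
          intro δ
          by_cases hδ : δ < lam0
          · obtain ⟨t, ht, hlt⟩ := hcof δ hδ
            have h3 := (hu'init t ht).2 δ hlt
            have h4 := hucoh t ht δ hlt
            exact h3.symm.trans h4.symm
          · rw [u'.val_eq_zero δ (hu'len ▸ not_lt.1 hδ), u.val_eq_zero δ (not_lt.1 hδ)]
        refine ⟨hβA, hueq ▸ hu'S⟩
      have huTl : u ∈ Tl i := hBtmono i u _ hWD hsub
      have hbranch : IsBranch (Tl i) (insert u b) := by
        constructor
        · rintro x (rfl | hx)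
          · exact huTl
          · exact hmax.1.1 hx
        · rintro x (rfl | hx) y (rfl | hy)
          · exact Or.inl (Init.rfl' _)
          · exact Or.inr (huinit y hy)
          · exact Or.inl (huinit x hx)
          · exact hmax.1.2 x hx y hy
      have heqb := hmax.2 _ hbranch (Set.subset_insert _ b)
      have humem : u ∈ b := heqb ▸ Set.mem_insert _ b
      exact absurd (hstrict u humem) (lt_irrefl _)
  -- the limit trees are regular κ-trees
  have hTl_reg : ∀ i, IsRegularTree κ (Tl i) := by
    intro i
    refine ⟨hTl_tree i, fun t _ => t.len_lt, ?_, ?_, ?_, hTl_perf i⟩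
    · intro γ hγ
      obtain ⟨q, hq, hlen⟩ := hTl_level i γ hγ
      exact ⟨q, hq, hlen⟩
    · intro γ hγ
      rw [Cardinal.card_ord]
      exact hTl_size i γ hγ
    · intro b hb γ hγ
      exact hTl_branch i b hb γ hγ
  have haleph' : ℵ₀ ≤ Cardinal.lift.{1} κ := by
    rw [← Cardinal.lift_aleph0.{1,0}]
    exact Cardinal.lift_le.2 haleph.le
  have hdcard : Cardinal.mk (ULift.{1} (Fin d)) < Cardinal.lift.{1} κ := by
    rw [Cardinal.mk_uLift, Cardinal.mk_fin]
    calc Cardinal.lift.{1} ((d : ℕ) : Cardinal.{0}) = ((d : ℕ) : Cardinal.{1}) :=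
          Cardinal.lift_natCast d
      _ < ℵ₀ := Cardinal.nat_lt_aleph0 d
      _ ≤ _ := haleph'
  have hpow : ∀ (n : ℕ) (c : Cardinal.{1}), c < Cardinal.lift.{1} κ →
      c ^ n < Cardinal.lift.{1} κ := by
    intro n c hc
    induction n with
    | zero =>
        rw [pow_zero]
        exact lt_of_lt_of_le Cardinal.one_lt_aleph0 haleph'
    | succ n ih =>
        rw [pow_succ]
        exact Cardinal.mul_lt_of_lt haleph' ih hc
  -- the transferred colouring
  set cS : Ordinal.{0} → (Fin d → SeqNode κ) → Ordinal.{0} := fun β x =>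
    if H : ∃ hβ : β ∈ A, ∀ i, (x i).len < β.card.ord ∧ ∀ δ, (x i).val δ < β.card.ord then
      cc β H.choose
        (fun i => SeqNode.down (x i) ((H.choose_spec) i).1 ((H.choose_spec) i).2)
    else 0 with hcS
  have hcS_up : ∀ β (hβ : β ∈ A) (y : Fin d → SeqNode β.card),
      cS β (fun i => SeqNode.up (hup β hβ) (y i)) = cc β hβ y := by
    intro β hβ y
    have H : ∃ hβ' : β ∈ A, ∀ i, (SeqNode.up (hup β hβ) (y i)).len < β.card.ord ∧
        ∀ δ, (SeqNode.up (hup β hβ) (y i)).val δ < β.card.ord := by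
      refine ⟨hβ, fun i => ⟨(y i).len_lt, ?_⟩⟩
      intro δ
      by_cases hδ : δ < (y i).len
      · exact (y i).val_lt δ hδ
      · rw [up_val, (y i).val_eq_zero δ (not_lt.1 hδ)]
        exact hβ_pos β hβ
    rw [hcS]
    dsimp only
    rw [dif_pos H]
    rfl
  set cl : (Fin d → SeqNode κ) → Ordinal.{0} := fun x =>
    if H : ∃ γ, γ < σ.ord ∧ {β | β < κ.ord ∧ cS β x = γ} ∈ D then H.choose else 0 with hcl
  clear_value cS cl
  have hσord : σ.ord.card < κ := by rw [Cardinal.card_ord]; exact hσκ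
  have hclspec : ∀ x ∈ LevelProd Tl, cl x < σ.ord ∧
      {β | β < κ.ord ∧ cS β x = cl x} ∈ D := by
    intro x hx
    obtain ⟨α, hα⟩ := hx
    have hPd : A ∩ ⋂ i : ULift.{1} (Fin d), Bt i.down (x i.down) ∈ D :=
      uf_iInter hDf hDc haleph (fun i : ULift.{1} (Fin d) => Bt i.down (x i.down))
        (fun i => (hmemTl i.down (x i.down)).1 (hα i.down).1) hdcard hA
    have hvb : ∀ β ∈ A ∩ ⋂ i : ULift.{1} (Fin d), Bt i.down (x i.down),
        cS β x < σ.ord := by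
      intro β hβ
      have hβA : β ∈ A := hβ.1
      have hxS : ∀ i, x i ∈ S β i := fun i => (Set.mem_iInter.1 hβ.2 ⟨i⟩).2
      have hbnd : ∀ i, (x i).len < β.card.ord ∧ ∀ δ, (x i).val δ < β.card.ord := by
        intro i
        have h1 := hSbound β hβA i (x i) (hxS i)
        exact ⟨lt_of_lt_of_le h1.1 (hAcard β hβA).ge,
          fun δ => lt_of_lt_of_le (h1.2 δ) (hAcard β hβA).ge⟩
      have H : ∃ hβ' : β ∈ A, ∀ i, (x i).len < β.card.ord ∧
          ∀ δ, (x i).val δ < β.card.ord := ⟨hβA, hbnd⟩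
      rw [hcS]
      dsimp only
      rw [dif_pos H]
      refine hbound β H.choose _ ⟨α, fun i => ⟨?_, ?_⟩⟩
      · show SeqNode.down (x i) ((H.choose_spec) i).1 ((H.choose_spec) i).2 ∈
          Tc β H.choose i
        obtain ⟨t', ht', heq⟩ := (hSmem β H.choose i (x i)).1 (hxS i)
        have h2 : SeqNode.up (hup β H.choose)
            (SeqNode.down (x i) ((H.choose_spec) i).1 ((H.choose_spec) i).2) = x i :=
          up_down _ _ _ _
        have h3 := up_injective (hup β H.choose) (h2.trans heq.symm)
        rw [h3]
        exact ht'
      · show (SeqNode.down (x i) ((H.choose_spec) i).1 ((H.choose_spec) i).2).len = α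
        exact (hα i).2
    obtain ⟨γ0, hγ0σ, hγ0D⟩ := uf_partition hDf hDc haleph hPd σ.ord hσord
      (fun β => cS β x) hvb
    have HX : ∃ γ', γ' < σ.ord ∧ {β | β < κ.ord ∧ cS β x = γ'} ∈ D :=
      ⟨γ0, hγ0σ, uf_mono hDf hγ0D (fun β hβ => ⟨hAsub hβ.1.1, hβ.2⟩) (fun β hβ => hβ.1)⟩
    rw [hcl]
    dsimp only
    rw [dif_pos HX]
    exact ⟨HX.choose_spec.1, HX.choose_spec.2⟩
  -- apply SDHL at κ
  obtain ⟨X, hXsub, hXmat, hXmono⟩ := h Tl hTl_reg cl (fun x hx => (hclspec x hx).1)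
  obtain ⟨γ, δ, hγδ, hδκ, t, htlev, hXi⟩ := hXmat
  have hγκ : γ < κ.ord := hγδ.trans hδκ
  have hXlev : ∀ i, X i ⊆ SeqLevel (Tl i) δ := fun i => (hXi i).1
  have hXcard : ∀ i : Fin d, Cardinal.mk ↥(X i) < Cardinal.lift.{1} κ :=
    fun i => lt_of_le_of_lt (Cardinal.mk_le_mk_of_subset (hXlev i)) (hTl_size i δ hδκ)
  set c0 : Cardinal.{1} := Finset.univ.sup (fun i : Fin d => Cardinal.mk ↥(X i)) with hc0
  have hc0le : ∀ i : Fin d, Cardinal.mk ↥(X i) ≤ c0 := by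
    intro i
    rw [hc0]
    exact Finset.le_sup (f := fun i : Fin d => Cardinal.mk ↥(X i)) (Finset.mem_univ i)
  have hc0κ : c0 < Cardinal.lift.{1} κ := by
    rw [hc0]
    refine Finset.sup_lt_iff ?_ |>.2 (fun i _ => hXcard i)
    exact lt_of_lt_of_le Cardinal.aleph0_pos haleph'
  -- G1 : base measure-one set
  set G1 : Set Ordinal.{0} :=
    ((A ∩ (Set.Iio κ.ord \ Set.Iio (δ + 1))) ∩ ⋂ i : ULift.{1} (Fin d), Bt i.down (t i.down))
      ∩ ⋂ z : (Σ i : ULift.{1} (Fin d), ↥(X i.down)), Bt z.1.down ↑z.2 with hG1def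
  have hG1D : G1 ∈ D := by
    have step1 : A ∩ (Set.Iio κ.ord \ Set.Iio (δ + 1)) ∈ D :=
      uf_inter hDf hA (hcob δ hδκ)
    have step2 : (A ∩ (Set.Iio κ.ord \ Set.Iio (δ + 1)))
        ∩ ⋂ i : ULift.{1} (Fin d), Bt i.down (t i.down) ∈ D :=
      uf_iInter hDf hDc haleph (fun i : ULift.{1} (Fin d) => Bt i.down (t i.down))
        (fun i => (hmemTl i.down (t i.down)).1 (htlev i.down).1) hdcard step1
    refine uf_iInter hDf hDc haleph
      (fun z : (Σ i : ULift.{1} (Fin d), ↥(X i.down)) => Bt z.1.down ↑z.2)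
      (fun z => (hmemTl z.1.down ↑z.2).1 (hXsub z.1.down z.2.prop)) ?_ step2
    rw [Cardinal.mk_sigma]
    calc Cardinal.sum (fun z : ULift.{1} (Fin d) => Cardinal.mk ↥(X z.down))
        ≤ Cardinal.sum (fun _ : ULift.{1} (Fin d) => c0) :=
          Cardinal.sum_le_sum _ _ (fun z => hc0le z.down)
      _ = Cardinal.mk (ULift.{1} (Fin d)) * c0 := Cardinal.sum_const' _ c0
      _ < Cardinal.lift.{1} κ := Cardinal.mul_lt_of_lt haleph' hdcard hc0κ
  have hG1sub : G1 ⊆ Set.Iio κ.ord := fun β hβ => hAsub hβ.1.1.1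
  -- stability sets for all tuples from the level product of X
  set St : (Fin d → SeqNode κ) → Set Ordinal.{0} := fun x =>
    {β | β < κ.ord ∧ cS β x = cl x} with hStdef
  have hLPX : ∀ x ∈ LevelProd X, x ∈ LevelProd Tl := by
    rintro x ⟨α, hα⟩
    exact ⟨α, fun i => ⟨hXsub i (hα i).1, (hα i).2⟩⟩
  have hLPcard : Cardinal.mk ↥(LevelProd X) < Cardinal.lift.{1} κ := by
    have hinj : Function.Injective (fun z : ↥(LevelProd X) =>
        (fun i => (⟨(z : Fin d → SeqNode κ) i, (z.prop.choose_spec i).1⟩ : ↥(X i)))) := by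
      intro z1 z2 heq
      refine Subtype.ext (funext fun i => ?_)
      have h1 := congrFun heq i
      exact congrArg Subtype.val h1
    have h1 := Cardinal.mk_le_of_injective hinj
    rw [Cardinal.mk_pi] at h1
    have h2 : Cardinal.prod (fun i : Fin d => Cardinal.mk ↥(X i)) ≤
        Cardinal.prod (fun _ : Fin d => c0) := Cardinal.prod_le_prod _ _ hc0le
    have h3 : Cardinal.prod (fun _ : Fin d => c0) = c0 ^ (d : ℕ) := by
      rw [Cardinal.prod_const, Cardinal.lift_uzero, Cardinal.mk_fin, Cardinal.lift_natCast,
        Cardinal.power_natCast]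
    exact lt_of_le_of_lt (h1.trans (h2.trans_eq h3)) (hpow d c0 hc0κ)
  set G2 : Set Ordinal.{0} := G1 ∩ ⋂ w : ↥(LevelProd X), St ↑w with hG2def
  have hG2D : G2 ∈ D :=
    uf_iInter hDf hDc haleph (fun w : ↥(LevelProd X) => St ↑w)
      (fun w => (hclspec ↑w (hLPX ↑w w.prop)).2) hLPcard hG1D
  -- reflected domination
  set DomOK : Fin d → Set Ordinal.{0} := fun i =>
    {β | β < κ.ord ∧ (β ∈ G1 → ∀ y : SeqNode κ, y ∈ S β i → y.len = γ + 1 →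
      (t i).Init y → ∃ x', x' ∈ X i ∧ x' ∈ S β i ∧ y.Init x')} with hDomOK
  have hXinS : ∀ i, ∀ x' ∈ X i, ∀ β ∈ G1, x' ∈ S β i := by
    intro i x' hx' β hβ
    exact (Set.mem_iInter.1 hβ.2 ⟨⟨i⟩, ⟨x', hx'⟩⟩).2
  have htinS : ∀ i, ∀ β ∈ G1, t i ∈ S β i := by
    intro i β hβ
    exact (Set.mem_iInter.1 hβ.1.2 ⟨i⟩).2
  have hdom : ∀ i, DomOK i ∈ D := by
    intro i
    by_contra hbad
    have hBadD : (Set.Iio κ.ord \ DomOK i) ∩ G1 ∈ D :=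
      uf_inter hDf (uf_compl hDf (fun β hβ => hβ.1) hbad) hG1D
    have hbady : ∀ β ∈ (Set.Iio κ.ord \ DomOK i) ∩ G1, ∃ y : SeqNode κ,
        y ∈ S β i ∧ y.len = γ + 1 ∧ (t i).Init y ∧
        ¬∃ x', x' ∈ X i ∧ x' ∈ S β i ∧ y.Init x' := by
      intro β hβ
      have h1 : ¬(β < κ.ord ∧ (β ∈ G1 → ∀ y : SeqNode κ, y ∈ S β i → y.len = γ + 1 →
          (t i).Init y → ∃ x', x' ∈ X i ∧ x' ∈ S β i ∧ y.Init x')) := hβ.1.2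
      push_neg at h1
      obtain ⟨-, y, hy1, hy2, hy3, hy4⟩ := h1 hβ.1.1
      exact ⟨y, hy1, hy2, hy3, fun ⟨x', hx1, hx2, hx3⟩ => hy4 x' hx1 hx2 hx3⟩
    set py : Ordinal.{0} → SeqNode κ := fun β =>
      if hβ : β ∈ (Set.Iio κ.ord \ DomOK i) ∩ G1 then (hbady β hβ).choose
      else nil κ hκpos with hpy
    have hpyspec : ∀ β (hβ : β ∈ (Set.Iio κ.ord \ DomOK i) ∩ G1),
        py β ∈ S β i ∧ (py β).len = γ + 1 ∧ (t i).Init (py β) ∧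
        ¬∃ x', x' ∈ X i ∧ x' ∈ S β i ∧ (py β).Init x' := by
      intro β hβ
      have h1 := (hbady β hβ).choose_spec
      rw [hpy]
      dsimp only
      rw [dif_pos hβ]
      exact h1
    obtain ⟨ys, hys⟩ := pressNode haleph hD' hBadD py (γ + 1)
      (fun β hβ => (hpyspec β hβ).2.1)
      (fun β hβ => (hSbound β hβ.2.1.1.1 i _ (hpyspec β hβ).1).2)
    obtain ⟨β₀, hβ₀⟩ := uf_nonempty hDf hys
    have hysTl : ys ∈ Tl i := by
      refine hBtmono i ys _ hys ?_
      intro β hβ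
      exact ⟨hβ.1.2.1.1.1, hβ.2 ▸ (hpyspec β hβ.1).1⟩
    have hysdom : ∃ x' ∈ X i, ys.Init x' := by
      refine (hXi i).2 ys ⟨⟨hysTl, ?_⟩, ?_⟩
      · exact hβ₀.2 ▸ (hpyspec β₀ hβ₀.1).2.1
      · exact hβ₀.2 ▸ (hpyspec β₀ hβ₀.1).2.2.1
    obtain ⟨x', hx'X, hx'init⟩ := hysdom
    have hx'S : x' ∈ S β₀ i := hXinS i x' hx'X β₀ hβ₀.1.2
    exact (hβ₀.2 ▸ (hpyspec β₀ hβ₀.1).2.2.2) ⟨x', hx'X, hx'S, hx'init⟩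
  set G : Set Ordinal.{0} := G2 ∩ ⋂ i : ULift.{1} (Fin d), DomOK i.down with hGdef
  have hGD : G ∈ D := uf_iInter hDf hDc haleph (fun i : ULift.{1} (Fin d) => DomOK i.down)
    (fun i => hdom i.down) hdcard hG2D
  obtain ⟨βs, hβs⟩ := uf_nonempty hDf hGD
  have hβsG1 : βs ∈ G1 := hβs.1.1
  have hβsA : βs ∈ A := hβsG1.1.1.1
  have hβsδ : δ < βs := hgt δ βs hβsG1.1.1.2
  -- the reflected matrix
  set Xd : Fin d → Set (SeqNode βs.card) := fun i =>
    {x' | SeqNode.up (hup βs hβsA) x' ∈ X i} with hXddef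
  have hXdsub : ∀ i, Xd i ⊆ Tc βs hβsA i := by
    intro i x' hx'
    exact (hupmem βs hβsA i x').1 (hXinS i _ hx' βs hβsG1)
  have htS : ∀ i, t i ∈ S βs i := fun i => htinS i βs hβsG1
  have htb1 : ∀ i, (t i).len < βs.card.ord :=
    fun i => lt_of_lt_of_le (hSbound βs hβsA i _ (htS i)).1 (hAcard βs hβsA).ge
  have htb2 : ∀ i, ∀ δ', (t i).val δ' < βs.card.ord :=
    fun i δ' => lt_of_lt_of_le ((hSbound βs hβsA i _ (htS i)).2 δ') (hAcard βs hβsA).ge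
  have hupt : ∀ i, SeqNode.up (hup βs hβsA) (SeqNode.down (t i) (htb1 i) (htb2 i)) = t i :=
    fun i => up_down _ _ _ _
  have hmatrix : IsSDMatrix βs.card (Tc βs hβsA) Xd := by
    refine ⟨γ, δ, hγδ, ?_, fun i => SeqNode.down (t i) (htb1 i) (htb2 i), ?_, ?_⟩
    · rw [hAcard βs hβsA]
      exact hβsδ
    · intro i
      constructor
      · have h1 : SeqNode.up (hup βs hβsA) (SeqNode.down (t i) (htb1 i) (htb2 i)) ∈
            S βs i := by rw [hupt i]; exact htS i
        exact (hupmem βs hβsA i _).1 h1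
      · exact (htlev i).2
    · intro i
      constructor
      · intro x' hx'
        refine ⟨hXdsub i hx', ?_⟩
        have h1 : (SeqNode.up (hup βs hβsA) x').len = δ := ((hXlev i) hx').2
        exact h1
      · intro y' hy'
        have hyS : SeqNode.up (hup βs hβsA) y' ∈ S βs i :=
          (hupmem βs hβsA i y').2 hy'.1.1
        have hylen : (SeqNode.up (hup βs hβsA) y').len = γ + 1 := hy'.1.2
        have hyinit : (t i).Init (SeqNode.up (hup βs hβsA) y') := by
          rw [← hupt i]
          exact (up_init_iff (hup βs hβsA)).2 hy'.2
        have hdomβ : βs ∈ DomOK i := (Set.mem_iInter.1 hβs.2 ⟨i⟩)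
        obtain ⟨x', hx'X, hx'S, hx'init⟩ :=
          hdomβ.2 hβsG1 _ hyS hylen hyinit
        obtain ⟨xd, hxd, hxdeq⟩ := (hSmem βs hβsA i x').1 hx'S
        refine ⟨xd, ?_, ?_⟩
        · rw [hXddef]
          dsimp only [Set.mem_setOf_eq]
          rw [Set.mem_setOf_eq, hxdeq]
          exact hx'X
        · have := hx'init
          rw [← hxdeq] at this
          exact (up_init_iff (hup βs hβsA)).1 this
  have hmono : MonoOn (cc βs hβsA) Xd := by
    have hliftLP : ∀ x ∈ LevelProd Xd,
        (fun i => SeqNode.up (hup βs hβsA) (x i)) ∈ LevelProd X := by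
      rintro x ⟨α', hα'⟩
      exact ⟨α', fun i => ⟨(hα' i).1, (hα' i).2⟩⟩
    have hval : ∀ x ∈ LevelProd Xd,
        cc βs hβsA x = cl (fun i => SeqNode.up (hup βs hβsA) (x i)) := by
      intro x hx
      have h1 := hcS_up βs hβsA x
      have h2 : βs ∈ St (fun i => SeqNode.up (hup βs hβsA) (x i)) :=
        Set.mem_iInter.1 hβs.1.2 ⟨_, hliftLP x hx⟩
      rw [← h1]
      exact h2.2
    intro x hx y hy
    rw [hval x hx, hval y hy]
    exact hXmono _ (hliftLP x hx) _ (hliftLP y hy)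
  exact hnowin βs hβsA Xd ⟨hXdsub, hmatrix, hmono⟩


end Sec7
section Sec8

/-- For measurable κ, if SDHL(d,σ,κ) holds then the set of infinite
cardinals α < κ with σ < α at which SDHL(d,σ,α) holds is stationary in κ. -/
theorem sdhl_set_stationary (κ : Cardinal.{0}) (hκ : IsMeasurableCard κ)
    (d : ℕ) (hd : 1 ≤ d) (σ : Cardinal.{0}) (hσ : 1 ≤ σ) (hσκ : σ < κ)
    (h : SDHL d σ κ) :
    IsStationaryIn (SDHLset d σ κ) κ.ord := by
  intro C hC
  obtain ⟨haleph, U, hUf, hUc, hUn⟩ := hκ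
  obtain ⟨D, hD⟩ := exists_normal_ultrafilter ⟨haleph, U, hUf, hUc, hUn⟩
  obtain ⟨hDf, hDc, hDn, hDnorm⟩ := hD
  have hD' : IsNormalUltrafilterOn D κ := ⟨hDf, hDc, hDn, hDnorm⟩
  have hκlim : Order.IsSuccLimit κ.ord := Cardinal.isSuccLimit_ord haleph.le
  have hsucc : ∀ μ : Cardinal.{0}, μ < κ → Order.succ μ < κ :=
    fun μ hμ => succ_lt_of_meas hUf hUc hUn haleph hμ
  have hCL : IsClubIn {β : Ordinal.{0} | β < κ.ord ∧ β.card.ord = β} κ.ord := by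
    refine ⟨fun β hβ => hβ.1, ?_, ?_⟩
    · intro β hβ
      refine ⟨(Order.succ β.card).ord, ⟨?_, ?_⟩, ?_⟩
      · exact Cardinal.ord_lt_ord.2 (hsucc β.card (Cardinal.lt_ord.1 hβ))
      · rw [Cardinal.card_ord]
      · exact (Cardinal.lt_ord.2 (Order.lt_succ β.card)).le
    · intro s hs hne hsup
      refine ⟨hsup, ?_⟩
      refine le_antisymm (Cardinal.ord_card_le _) ?_
      refine csSup_le hne ?_
      intro x hx
      have hbdd : BddAbove s := ⟨κ.ord, fun y hy => ((hs hy).1).le⟩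
      calc x = x.card.ord := (hs hx).2.symm
        _ ≤ (sSup s).card.ord :=
            Cardinal.ord_le_ord.2 (Ordinal.card_le_card (le_csSup hbdd hx))
  have hσord : σ.ord < κ.ord := Cardinal.ord_lt_ord.2 hσκ
  have hωord : (ℵ₀ : Cardinal.{0}).ord < κ.ord := Cardinal.ord_lt_ord.2 haleph
  set A : Set Ordinal.{0} := C ∩ ({β : Ordinal.{0} | β < κ.ord ∧ β.card.ord = β} ∩
    ((Set.Iio κ.ord \ Set.Iio (σ.ord + 1)) ∩
      (Set.Iio κ.ord \ Set.Iio ((ℵ₀ : Cardinal.{0}).ord + 1)))) with hAdef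
  have hAD : A ∈ D := by
    refine uf_inter hDf (club_mem haleph hD' hC) (uf_inter hDf (club_mem haleph hD' hCL)
      (uf_inter hDf ?_ ?_))
    · exact uf_cobounded hDf hDc haleph hDn (hκlim.succ_lt hσord)
    · exact uf_cobounded hDf hDc haleph hDn (hκlim.succ_lt hωord)
  have hgt' : ∀ γ (β : Ordinal.{0}), β ∈ Set.Iio κ.ord \ Set.Iio (γ + 1) → γ < β := by
    intro γ β hβ
    have h1 := hβ.2
    rw [Set.mem_Iio, not_lt] at h1
    exact lt_of_lt_of_le (lt_add_one γ) h1
  obtain ⟨β, hβA, hSD⟩ := sdhl_reflect κ haleph hD' d hd σ hσκ h hAD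
    (fun β hβ => hβ.2.1.2) (fun β hβ => hgt' _ β hβ.2.2.2)
  have hβcard : β.card.ord = β := hβA.2.1.2
  have hβκ : β < κ.ord := hβA.2.1.1
  have hβσ : σ < β.card := by
    have h1 : σ.ord < β.card.ord := by
      rw [hβcard]
      exact hgt' _ β hβA.2.2.1
    exact Cardinal.ord_lt_ord.1 h1
  have hβω : ℵ₀ ≤ β.card := by
    have h1 : (ℵ₀ : Cardinal.{0}).ord < β.card.ord := by
      rw [hβcard]
      exact hgt' _ β hβA.2.2.2
    exact (Cardinal.ord_lt_ord.1 h1).le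
  exact ⟨β, ⟨hβκ, hβω, hβcard, hβσ, hSD⟩, hβA.1⟩

end Sec8
end
end
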